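/- arXiv:1604.07986 — 3 statements merged into one kernel-verified Lean document; each statement's English description precedes it below -/
import Mathlib

section
/- Assume Setting (S). Then either Δ(B) = ∅ or min Δ(B) = 1. -/
namespace ArXivSeminormal

attribute [local instance] Classical.propDecidable

noncomputable section

/-! ### Generic factorization theory in commutative monoids -/

variable {M : Type*} [CommMonoid M]

/-- The set of factorizations of `a` (in the sense of `Z(a)`): multisets of irreducible
elements of the reduced monoid (modelled by `Associates M`) whose product is the class
of `a`. -/
def Factorizations (a : M) : Set (Multiset (Associates M)) :=
  {z | (∀ x ∈ z, Irreducible x) ∧ z.prod = Associates.mk a}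

/-- The set of lengths `L(a)` of an element `a`. -/
def lengthSet (a : M) : Set ℕ :=
  {k | ∃ z ∈ Factorizations a, Multiset.card z = k}

/-- The set of (successive) distances `Δ(L)` of a set `L ⊆ ℕ`. -/
def DeltaSet (L : Set ℕ) : Set ℕ :=
  {d | ∃ k l, k ∈ L ∧ l ∈ L ∧ k < l ∧ (∀ m, k < m → m < l → m ∉ L) ∧ d = l - k}

/-- The set of distances `Δ(H)` of a monoid `H`. -/
def DeltaMonoid (M : Type*) [CommMonoid M] : Set ℕ :=
  ⋃ a : M, DeltaSet (lengthSet a)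

/-- The distance between two factorizations:
`d(z,z') = max (card (z - gcd z z')) (card (z' - gcd z z'))`. -/
def factorDist (z z' : Multiset (Associates M)) : ℕ :=
  max (Multiset.card (z - z')) (Multiset.card (z' - z))

/-- The catenary degree `c(H)` of a monoid `H`: the smallest `N ∈ ℕ∞` such that any two
factorizations of any element are connected by a chain of factorizations with consecutive
distances at most `N`. -/
def catenaryDegree (M : Type*) [CommMonoid M] : ℕ∞ :=
  sInf {N : ℕ∞ | ∀ (a : M), ∀ z ∈ Factorizations a, ∀ z' ∈ Factorizations a,
    ∃ c : List (Multiset (Associates M)), c.head? = some z ∧ c.getLast? = some z' ∧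
      (∀ w ∈ c, w ∈ Factorizations a) ∧
      List.Chain' (fun u v => (factorDist u v : ℕ∞) ≤ N) c}

/-- A monoid is factorial if every element has a unique factorization. -/
def IsFactorialMonoid (M : Type*) [CommMonoid M] : Prop :=
  ∀ a : M, ∃! z : Multiset (Associates M), z ∈ Factorizations a

/-! ### Free commutative monoids, block monoids, Davenport constant -/

/-- The free abelian (multiplicatively written) monoid on a set `P`. -/
abbrev FreeCM (P : Type*) := Multiplicative (Multiset P)

/-- The sum homomorphism `σ : F(G) → G`. -/
def sigmaHom (G : Type*) [AddCommMonoid G] : FreeCM G →* Multiplicative G :=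
  AddMonoidHom.toMultiplicative
    { toFun := Multiset.sum
      map_zero' := Multiset.sum_zero
      map_add' := Multiset.sum_add }

/-- The monoid of zero-sum sequences over `G`. -/
def BlockMonoid (G : Type*) [AddCommMonoid G] : Submonoid (FreeCM G) :=
  MonoidHom.mker (sigmaHom G)

/-- The Davenport constant of `G`: the supremum of lengths of minimal zero-sum sequences. -/
def Davenport (G : Type*) [AddCommMonoid G] : ℕ :=
  sSup {k | ∃ u : BlockMonoid G, Irreducible u ∧
    Multiset.card (Multiplicative.toAdd (u : FreeCM G)) = k}

/-! ### Reduced seminormal finitely primary monoids -/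

/-- The `Fin s →₀ ℕ` function with all values `1`, i.e. the exponent vector of
`q_1 ⋯ q_s`. -/
def allOnes (s : ℕ) : Fin s →₀ ℕ := Finsupp.equivFunOnFinite.symm fun _ => 1

/-- The reduced seminormal finitely primary monoid of rank `s` with unit group `U` of the
complete integral closure:
`D = {ε q_1^{k_1} ⋯ q_s^{k_s} : ε ∈ U, all k_j ≥ 1} ∪ {1} ⊆ U × [q_1,…,q_s]`. -/
def seminormalD (U : Type*) [CommGroup U] (s : ℕ) :
    Submonoid (U × Multiplicative (Fin s →₀ ℕ)) where
  carrier := {x | x = 1 ∨ ∀ j, 1 ≤ Multiplicative.toAdd x.2 j}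
  one_mem' := Or.inl rfl
  mul_mem' := by
    rintro a b (rfl | ha) (rfl | hb)
    · exact Or.inl (mul_one 1)
    · rw [Set.mem_setOf_eq, one_mul]; exact Or.inr hb
    · rw [Set.mem_setOf_eq, mul_one]; exact Or.inr ha
    · refine Or.inr fun j => ?_
      have h1 := ha j
      have h2 := hb j
      have h3 : Multiplicative.toAdd ((a * b).2) j
          = Multiplicative.toAdd a.2 j + Multiplicative.toAdd b.2 j := rfl
      omega

/-! ### T-block monoids (Setting (S)) -/

/-- The monoid `T = D_1 × ⋯ × D_n`. -/
abbrev Tm {n : ℕ} (U : Fin n → Type*) [∀ i, CommGroup (U i)] (s : Fin n → ℕ) :=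
  ∀ i, ↥(seminormalD (U i) (s i))

/-- The monoid `D̂_1 × ⋯ × D̂_n`. -/
abbrev HatTm {n : ℕ} (U : Fin n → Type*) [∀ i, CommGroup (U i)] (s : Fin n → ℕ) :=
  ∀ i, U i × Multiplicative (Fin (s i) →₀ ℕ)

/-- The monoid `F = F(G) × T`. -/
abbrev Fm (G : Type*) {n : ℕ} (U : Fin n → Type*) [∀ i, CommGroup (U i)] (s : Fin n → ℕ) :=
  FreeCM G × Tm U s

/-- The homomorphism `F → G`, `S·t ↦ σ(S) + ι(t)`, whose kernel is the `T`-block monoid;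
it computes the class `[a] ∈ G ≅ q(F)/q(B)` of `a ∈ F`. -/
def TBlockPhi (G : Type*) [AddCommGroup G] {n : ℕ} (U : Fin n → Type*) [∀ i, CommGroup (U i)]
    (s : Fin n → ℕ) (iota : Tm U s →* Multiplicative G) : Fm G U s →* Multiplicative G :=
  ((sigmaHom G).comp (MonoidHom.fst _ _)) * (iota.comp (MonoidHom.snd _ _))

/-- The `T`-block monoid `B = B(G, T, ι) = {S·t ∈ F(G) × T : σ(S) + ι(t) = 0}`. -/
def TBlock (G : Type*) [AddCommGroup G] {n : ℕ} (U : Fin n → Type*) [∀ i, CommGroup (U i)]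
    (s : Fin n → ℕ) (iota : Tm U s →* Multiplicative G) : Submonoid (Fm G U s) :=
  MonoidHom.mker (TBlockPhi G U s iota)

/-- The inclusion `T = D_1 × ⋯ × D_n → D̂_1 × ⋯ × D̂_n`. -/
def embedT {n : ℕ} (U : Fin n → Type*) [∀ i, CommGroup (U i)] (s : Fin n → ℕ) :
    Tm U s →* HatTm U s :=
  Pi.monoidHom fun i => (seminormalD (U i) (s i)).subtype.comp
    (Pi.evalMonoidHom (fun j => ↥(seminormalD (U j) (s j))) i)

/-- The norm `‖A‖ = k + 2·Σ_i max L_{D_i}(a_i)` of `A = g_1⋯g_k a_1⋯a_n ∈ F`. -/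
def normF (G : Type*) {n : ℕ} (U : Fin n → Type*) [∀ i, CommGroup (U i)] (s : Fin n → ℕ)
    (A : Fm G U s) : ℕ :=
  Multiset.card (Multiplicative.toAdd A.1) + 2 * ∑ i, sSup (lengthSet (A.2 i))

/-- The class `[ε] ∈ G` of a unit `ε ∈ D̂_ν^×`. -/
def classOfUnit {G : Type*} [AddCommGroup G] {n : ℕ} (U : Fin n → Type*)
    [∀ i, CommGroup (U i)] (s : Fin n → ℕ) (iotahat : HatTm U s →* Multiplicative G)
    (ν : Fin n) (ε : U ν) : Multiplicative G :=
  iotahat (Pi.mulSingle ν (ε, 1))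

/-- The class `[q_{ν,j}] ∈ G` of the prime `q_{ν,j}` of `D̂_ν`. -/
def classOfPrime {G : Type*} [AddCommGroup G] {n : ℕ} (U : Fin n → Type*)
    [∀ i, CommGroup (U i)] (s : Fin n → ℕ) (iotahat : HatTm U s →* Multiplicative G)
    (ν : Fin n) (j : Fin (s ν)) : Multiplicative G :=
  iotahat (Pi.mulSingle ν (1, Multiplicative.ofAdd (Finsupp.single j 1)))

/-- The quantity `d_ν ∈ {-1, 0, 1, 2}` from Theorem 3.3 (for `G = {0, e}` of order two). -/
def dval {G : Type*} [AddCommGroup G] {n : ℕ} (U : Fin n → Type*) [∀ i, CommGroup (U i)]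
    (s : Fin n → ℕ) (iotahat : HatTm U s →* Multiplicative G) (e : G) (ν : Fin n) : ℤ :=
  if (∀ ε : U ν, classOfUnit U s iotahat ν ε = 1) ∧ s ν = 2 ∧
      (Finset.univ.filter fun j : Fin (s ν) =>
        classOfPrime U s iotahat ν j = Multiplicative.ofAdd e).card = 2 then 2
  else if (∀ ε : U ν, classOfUnit U s iotahat ν ε = 1) ∧ s ν = 1 then 0
  else if (∀ ε : U ν, classOfUnit U s iotahat ν ε = 1) ∧ 2 ≤ s ν ∧
      (Finset.univ.filter fun j : Fin (s ν) =>
        classOfPrime U s iotahat ν j = Multiplicative.ofAdd e).card = 0 then -1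
  else 1

section Infra

variable {G : Type*} [AddCommGroup G] [Fintype G] {n : ℕ} {U : Fin n → Type*}
  [∀ i, CommGroup (U i)] {s : Fin n → ℕ} {iota : Tm U s →* Multiplicative G}

lemma D_mul_eq_one (hs : ∀ i, 1 ≤ s i) {i : Fin n} {a b : ↥(seminormalD (U i) (s i))}
    (h : a * b = 1) : a = 1 := by
  rcases a.2 with h1 | h1
  · exact Subtype.ext h1
  · exfalso
    have hkey := congrArg (fun x : ↥(seminormalD (U i) (s i)) =>
      Multiplicative.toAdd x.val.2 ⟨0, hs i⟩) h
    simp only [Submonoid.coe_mul, Prod.snd_mul, toAdd_mul, Finsupp.add_apply] at hkey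
    have h2 := h1 ⟨0, hs i⟩
    simp only [Submonoid.coe_one, Prod.snd_one, toAdd_one, Finsupp.coe_zero,
      Pi.zero_apply] at hkey
    omega

lemma T_eq_one_of_mul (hs : ∀ i, 1 ≤ s i) {t u : Tm U s} (h : t * u = 1) : t = 1 :=
  funext fun i => D_mul_eq_one hs (congrFun h i)

lemma B_eq_one_of_mul (hs : ∀ i, 1 ≤ s i) {x y : ↥(TBlock G U s iota)}
    (h : x * y = 1) : x = 1 := by
  have h1 : x.val.1 * y.val.1 = 1 := congrArg (fun z : ↥(TBlock G U s iota) => z.val.1) h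
  have h2 : x.val.2 * y.val.2 = 1 := congrArg (fun z : ↥(TBlock G U s iota) => z.val.2) h
  have hx1 : x.val.1 = 1 := by
    have h3 : Multiplicative.toAdd x.val.1 + Multiplicative.toAdd y.val.1 = 0 :=
      congrArg Multiplicative.toAdd h1
    have h4 := Multiset.le_zero.1 (le_trans (Multiset.le_add_right _ _) h3.le)
    have : Multiplicative.toAdd x.val.1 = Multiplicative.toAdd (1 : FreeCM G) := h4
    exact Multiplicative.toAdd.injective this
  exact Subtype.ext (Prod.ext hx1 (T_eq_one_of_mul hs h2))

lemma B_isUnit_iff (hs : ∀ i, 1 ≤ s i) {x : ↥(TBlock G U s iota)} :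
    IsUnit x ↔ x = 1 := by
  constructor
  · intro h
    obtain ⟨y, hy⟩ := h.exists_right_inv
    exact B_eq_one_of_mul hs hy
  · rintro rfl; exact isUnit_one

lemma B_irreducible_mk (hs : ∀ i, 1 ≤ s i) {a : ↥(TBlock G U s iota)} (h1 : a ≠ 1)
    (h2 : ∀ x y : ↥(TBlock G U s iota), x * y = a → x = 1 ∨ y = 1) :
    Irreducible (Associates.mk a) := by
  constructor
  · intro h
    exact h1 ((B_isUnit_iff hs).1 (Associates.isUnit_mk.1 h))
  · intro u v huv
    obtain ⟨x, rfl⟩ := Associates.mk_surjective u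
    obtain ⟨y, rfl⟩ := Associates.mk_surjective v
    rw [Associates.mk_mul_mk] at huv
    obtain ⟨c, hc⟩ := Associates.mk_eq_mk_iff_associated.1 huv.symm
    have hc1 : (c : ↥(TBlock G U s iota)) = 1 := (B_isUnit_iff hs).1 c.isUnit
    rw [hc1, mul_one] at hc
    rcases h2 x y hc with rfl | rfl
    · exact Or.inl (by rw [Associates.mk_one]; exact isUnit_one)
    · exact Or.inr (by rw [Associates.mk_one]; exact isUnit_one)

lemma mem_factorizations_of (a : ↥(TBlock G U s iota))
    (l : Multiset ↥(TBlock G U s iota))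
    (hirr : ∀ b ∈ l, Irreducible (Associates.mk b)) (hprod : l.prod = a) :
    (l.map Associates.mk) ∈ Factorizations a := by
  constructor
  · intro x hx
    obtain ⟨b, hb, rfl⟩ := Multiset.mem_map.1 hx
    exact hirr b hb
  · have h := Multiset.prod_hom l
      (Associates.mkMonoidHom : ↥(TBlock G U s iota) →* Associates ↥(TBlock G U s iota))
    have h2 : Multiset.map (⇑Associates.mkMonoidHom) l = Multiset.map Associates.mk l := by
      apply Multiset.map_congr rfl
      intro b _
      rfl
    rw [h2] at h
    rw [h, hprod]
    rfl

lemma delta_min_one_of (a : ↥(TBlock G U s iota))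
    (z z' : Multiset (Associates ↥(TBlock G U s iota)))
    (hz : z ∈ Factorizations a) (hz' : z' ∈ Factorizations a)
    (hcard : Multiset.card z + 1 = Multiset.card z') :
    sInf (DeltaMonoid ↥(TBlock G U s iota)) = 1 := by
  have h1 : 1 ∈ DeltaMonoid ↥(TBlock G U s iota) := by
    refine Set.mem_iUnion.2 ⟨a, ?_⟩
    refine ⟨Multiset.card z, Multiset.card z + 1, ⟨z, hz, rfl⟩, ⟨z', hz', hcard.symm⟩,
      by omega, fun m hm1 hm2 => by omega, by omega⟩
  have h0 : (0 : ℕ) ∉ DeltaMonoid ↥(TBlock G U s iota) := by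
    intro h
    obtain ⟨b, hb⟩ := Set.mem_iUnion.1 h
    obtain ⟨k, l, _, _, hkl, _, hd⟩ := hb
    omega
  have hle := Nat.sInf_le h1
  rcases Nat.eq_zero_or_pos (sInf (DeltaMonoid ↥(TBlock G U s iota))) with h | h
  · rcases Nat.sInf_eq_zero.1 h with h' | h'
    · exact absurd h' h0
    · rw [h'] at h1; exact absurd h1 (Set.notMem_empty 1)
  · omega

end Infra
section Constructions

set_option linter.unusedSectionVars false

variable {G : Type*} [AddCommGroup G] [Fintype G] {n : ℕ} {U : Fin n → Type*}
  [∀ i, CommGroup (U i)] {s : Fin n → ℕ} {iota : Tm U s →* Multiplicative G}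

lemma sigma_apply (S : FreeCM G) :
    sigmaHom G S = Multiplicative.ofAdd (Multiplicative.toAdd S).sum := rfl

lemma phi_apply (x : Fm G U s) :
    TBlockPhi G U s iota x =
      Multiplicative.ofAdd (Multiplicative.toAdd x.1).sum * iota x.2 := rfl

/-- Constructor for elements of the T-block monoid. -/
def mkB (iota : Tm U s →* Multiplicative G) (m : Multiset G) (t : Tm U s)
    (h : Multiplicative.ofAdd m.sum * iota t = 1) : ↥(TBlock G U s iota) :=
  ⟨(Multiplicative.ofAdd m, t), MonoidHom.mem_mker.2 h⟩

lemma mkB_val (m : Multiset G) (t : Tm U s) (h) :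
    (mkB iota m t h).val = (Multiplicative.ofAdd m, t) := rfl

lemma B_fst_sum_eq_zero {x : ↥(TBlock G U s iota)} (hT : x.val.2 = 1) :
    (Multiplicative.toAdd x.val.1).sum = 0 := by
  have hx := MonoidHom.mem_mker.1 x.2
  rw [phi_apply, hT, map_one, mul_one] at hx
  simpa using congrArg Multiplicative.toAdd hx

lemma B_eq_one_of_parts {x : ↥(TBlock G U s iota)}
    (h1 : Multiplicative.toAdd x.val.1 = 0) (h2 : x.val.2 = 1) : x = 1 := by
  apply Subtype.ext
  apply Prod.ext
  · exact Multiplicative.toAdd.injective h1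
  · exact h2

/-- Irreducibility of pure-sequence atoms. -/
lemma seq_atom_irred (hs : ∀ i, 1 ≤ s i) {m : Multiset G} (hm : m ≠ 0) {h}
    (hns : ∀ X Y : Multiset G, X + Y = m → X.sum = 0 → X = 0 ∨ Y = 0) :
    Irreducible (Associates.mk (mkB iota m 1 h)) := by
  apply B_irreducible_mk hs
  · intro hcon
    apply hm
    have := congrArg (fun z : ↥(TBlock G U s iota) => Multiplicative.toAdd z.val.1) hcon
    exact this
  · intro x y hxy
    have hT : x.val.2 * y.val.2 = 1 :=
      congrArg (fun z : ↥(TBlock G U s iota) => z.val.2) hxy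
    have hTx : x.val.2 = 1 := T_eq_one_of_mul hs hT
    have hTy : y.val.2 = 1 := T_eq_one_of_mul hs (by rwa [mul_comm] at hT)
    have hS : Multiplicative.toAdd x.val.1 + Multiplicative.toAdd y.val.1 = m :=
      congrArg (fun z : ↥(TBlock G U s iota) => Multiplicative.toAdd z.val.1) hxy
    rcases hns _ _ hS (B_fst_sum_eq_zero hTx) with h0 | h0
    · exact Or.inl (B_eq_one_of_parts h0 hTx)
    · exact Or.inr (B_eq_one_of_parts h0 hTy)

/-- For a short zero-sum sequence with nonzero entries, the only zero-sum
subsequences are trivial. -/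
lemma short_nonsplit {m : Multiset G} (hcard : Multiset.card m ≤ 3)
    (h0 : ∀ x ∈ m, x ≠ 0) (hsum : m.sum = 0) :
    ∀ X Y : Multiset G, X + Y = m → X.sum = 0 → X = 0 ∨ Y = 0 := by
  intro X Y h hX
  by_cases hX0 : X = 0
  · exact Or.inl hX0
  by_cases hY0 : Y = 0
  · exact Or.inr hY0
  exfalso
  have hc : Multiset.card X + Multiset.card Y = Multiset.card m := by
    rw [← h]; simp
  have hcx : 1 ≤ Multiset.card X := by
    rcases Nat.eq_zero_or_pos (Multiset.card X) with h' | h'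
    · exact absurd (Multiset.card_eq_zero.1 h') hX0
    · omega
  have hcy : 1 ≤ Multiset.card Y := by
    rcases Nat.eq_zero_or_pos (Multiset.card Y) with h' | h'
    · exact absurd (Multiset.card_eq_zero.1 h') hY0
    · omega
  have hsums : X.sum + Y.sum = 0 := by
    rw [← Multiset.sum_add, h, hsum]
  by_cases h1 : Multiset.card X = 1
  · obtain ⟨w, rfl⟩ := Multiset.card_eq_one.1 h1
    have hwm : w ∈ m := by
      rw [← h]; exact Multiset.mem_add.2 (Or.inl (Multiset.mem_singleton_self w))
    exact h0 w hwm (by simpa using hX)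
  · have h2 : Multiset.card Y = 1 := by omega
    obtain ⟨w, rfl⟩ := Multiset.card_eq_one.1 h2
    have hwm : w ∈ m := by
      rw [← h]; exact Multiset.mem_add.2 (Or.inr (Multiset.mem_singleton_self w))
    apply h0 w hwm
    have : Multiset.sum {w} = 0 := by rw [hX, zero_add] at hsums; exact hsums
    simpa using this

/-- The case `|G| ≥ 3`. -/
lemma case_big (hG3 : 3 ≤ Fintype.card G) (hs : ∀ i, 1 ≤ s i) :
    sInf (DeltaMonoid ↥(TBlock G U s iota)) = 1 := by
  -- pick g ≠ 0 and h ∉ {0, -g}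
  obtain ⟨g, hg⟩ := Fintype.exists_ne_of_one_lt_card (by omega) (0 : G)
  have hh : ∃ h : G, h ≠ 0 ∧ h ≠ -g := by
    by_contra hcon
    push_neg at hcon
    have hsub : (Finset.univ : Finset G) ⊆ {0, -g} := by
      intro x _
      rcases eq_or_ne x 0 with rfl | hx
      · exact Finset.mem_insert_self _ _
      · exact Finset.mem_insert.2 (Or.inr (Finset.mem_singleton.2 (hcon x hx)))
    have hcards := Finset.card_le_card hsub
    have h2 : ({0, -g} : Finset G).card ≤ 2 := Finset.card_insert_le _ _ |>.trans (by simp)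
    rw [Finset.card_univ] at hcards
    omega
  obtain ⟨h, hh0, hhg⟩ := hh
  obtain ⟨k, hk⟩ : ∃ x : G, x = -(g + h) := ⟨_, rfl⟩
  have hk0 : k ≠ 0 := by
    intro hcon
    rw [hk, neg_eq_zero] at hcon
    exact hhg (eq_neg_of_add_eq_zero_right hcon)
  have hsum1 : Multiset.sum {g, h, k} = 0 := by simp [hk]
  have hsum2 : Multiset.sum {-g, -h, -k} = 0 := by simp [hk]
  have hmem1 : Multiplicative.ofAdd (Multiset.sum {g, h, k}) * iota 1 = 1 := by
    rw [hsum1, map_one, mul_one]; rfl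
  have hmem2 : Multiplicative.ofAdd (Multiset.sum {-g, -h, -k}) * iota 1 = 1 := by
    rw [hsum2, map_one, mul_one]; rfl
  have hpair : ∀ x : G, Multiplicative.ofAdd (Multiset.sum {x, -x}) * iota 1 = 1 := by
    intro x
    have hx0 : Multiset.sum {x, -x} = 0 := by simp
    rw [hx0, map_one, mul_one]; rfl
  obtain ⟨a1, ha1⟩ : ∃ x, x = mkB iota {g, h, k} 1 hmem1 := ⟨_, rfl⟩
  obtain ⟨a2, ha2⟩ : ∃ x, x = mkB iota {-g, -h, -k} 1 hmem2 := ⟨_, rfl⟩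
  obtain ⟨p1, hp1⟩ : ∃ x, x = mkB iota {g, -g} 1 (hpair g) := ⟨_, rfl⟩
  obtain ⟨p2, hp2⟩ : ∃ x, x = mkB iota {h, -h} 1 (hpair h) := ⟨_, rfl⟩
  obtain ⟨p3, hp3⟩ : ∃ x, x = mkB iota {k, -k} 1 (hpair k) := ⟨_, rfl⟩
  have hirr1 : Irreducible (Associates.mk a1) := by
    rw [ha1]
    apply seq_atom_irred hs (by simp)
    apply short_nonsplit (by simp) _ hsum1
    intro x hx
    simp only [Multiset.insert_eq_cons, Multiset.mem_cons, Multiset.mem_singleton] at hx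
    rcases hx with h' | h' | h' <;> rw [h'] <;> assumption
  have hirr2 : Irreducible (Associates.mk a2) := by
    rw [ha2]
    apply seq_atom_irred hs (by simp)
    apply short_nonsplit (by simp) _ hsum2
    intro x hx
    simp only [Multiset.insert_eq_cons, Multiset.mem_cons, Multiset.mem_singleton] at hx
    have hgneg : (-g : G) ≠ 0 := neg_ne_zero.2 hg
    have hhneg : (-h : G) ≠ 0 := neg_ne_zero.2 hh0
    have hkneg : (-k : G) ≠ 0 := neg_ne_zero.2 hk0
    rcases hx with h' | h' | h' <;> rw [h'] <;> assumption
  have hirrp : ∀ (x : G), x ≠ 0 →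
      Irreducible (Associates.mk (mkB iota {x, -x} 1 (hpair x))) := by
    intro x hx
    apply seq_atom_irred hs (by simp)
    apply short_nonsplit (by simp) _ (by simp)
    intro y hy
    simp only [Multiset.insert_eq_cons, Multiset.mem_cons, Multiset.mem_singleton] at hy
    have hxneg : (-x : G) ≠ 0 := neg_ne_zero.2 hx
    rcases hy with h' | h' <;> rw [h'] <;> assumption
  obtain ⟨A, hA⟩ : ∃ x, x = a1 * a2 := ⟨_, rfl⟩
  have hz2 : ({a1, a2} : Multiset ↥(TBlock G U s iota)).prod = A := by
    simp [hA]
  have hmid : ({g, -g} + ({h, -h} + {k, -k}) : Multiset G) = {g, h, k} + {-g, -h, -k} := by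
    classical
    refine Multiset.ext.2 fun a => ?_
    simp only [Multiset.count_add, Multiset.insert_eq_cons, Multiset.count_cons,
      Multiset.count_singleton]
    omega
  have hz3 : ({p1, p2, p3} : Multiset ↥(TBlock G U s iota)).prod = A := by
    rw [hA, ha1, ha2, hp1, hp2, hp3]
    simp only [Multiset.insert_eq_cons, Multiset.prod_cons, Multiset.prod_singleton]
    apply Subtype.ext
    apply Prod.ext
    · show Multiplicative.ofAdd ({g, -g} + ({h, -h} + {k, -k}) : Multiset G) =
        Multiplicative.ofAdd ({g, h, k} + {-g, -h, -k} : Multiset G)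
      rw [hmid]
    · simp only [Submonoid.coe_mul, Prod.snd_mul, mkB_val, mul_one]
  apply delta_min_one_of A (Multiset.map Associates.mk {a1, a2})
    (Multiset.map Associates.mk {p1, p2, p3})
  · apply mem_factorizations_of
    · intro b hb
      simp only [Multiset.insert_eq_cons, Multiset.mem_cons, Multiset.mem_singleton] at hb
      rcases hb with h' | h' <;> rw [h']
      · exact hirr1
      · exact hirr2
    · exact hz2
  · apply mem_factorizations_of
    · intro b hb
      simp only [Multiset.insert_eq_cons, Multiset.mem_cons, Multiset.mem_singleton] at hb
      rcases hb with h' | h' | h' <;> rw [h']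
      · rw [hp1]; exact hirrp g hg
      · rw [hp2]; exact hirrp h hh0
      · rw [hp3]; exact hirrp k hk0
    · exact hz3
  · simp

end Constructions
section Card2
set_option linter.unusedSectionVars false

variable {G : Type*} [AddCommGroup G] [Fintype G] {n : ℕ} {U : Fin n → Type*}
  [∀ i, CommGroup (U i)] {s : Fin n → ℕ} {iota : Tm U s →* Multiplicative G}

lemma card2_struct (hG2 : Fintype.card G = 2) :
    ∃ e : G, e ≠ 0 ∧ e + e = 0 ∧ ∀ x : G, x = 0 ∨ x = e := by
  obtain ⟨e, he⟩ := Fintype.exists_ne_of_one_lt_card (by omega) (0 : G)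
  have hall : ∀ x : G, x = 0 ∨ x = e := by
    intro x
    by_contra hcon
    push_neg at hcon
    have hcard : ({0, e, x} : Finset G).card = 3 := by
      rw [Finset.card_insert_of_notMem (by simp [Ne.symm he, Ne.symm hcon.1]),
        Finset.card_insert_of_notMem (by simp [Ne.symm hcon.2]), Finset.card_singleton]
    have := Finset.card_le_univ ({0, e, x} : Finset G)
    rw [hcard] at this
    omega
  refine ⟨e, he, ?_, hall⟩
  rcases hall (e + e) with h | h
  · exact h
  · exfalso
    have h2 : e + e = 0 + e := by rw [h, zero_add]
    exact he (add_right_cancel h2)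

lemma mult_two_cases {e : G} (hall : ∀ x : G, x = 0 ∨ x = e) (u : Multiplicative G) :
    u = 1 ∨ u = Multiplicative.ofAdd e := by
  rcases hall (Multiplicative.toAdd u) with h | h
  · exact Or.inl (Multiplicative.toAdd.injective h)
  · exact Or.inr (Multiplicative.toAdd.injective h)

lemma mult_sq {e : G} (he2 : e + e = 0) (hall : ∀ x : G, x = 0 ∨ x = e)
    (u : Multiplicative G) : u * u = 1 := by
  apply Multiplicative.toAdd.injective
  show Multiplicative.toAdd u + Multiplicative.toAdd u = 0
  rcases hall (Multiplicative.toAdd u) with h | h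
  · rw [h, zero_add]
  · rw [h]; exact he2

/-- Element of `D_ν` with unit `ζ` and exponent vector `v ≥ 1`. -/
def dE (ν : Fin n) (ζ : U ν) (v : Fin (s ν) → ℕ) (hv : ∀ j, 1 ≤ v j) :
    ↥(seminormalD (U ν) (s ν)) :=
  ⟨(ζ, Multiplicative.ofAdd (Finsupp.equivFunOnFinite.symm v)),
    Or.inr (fun j => by simpa using hv j)⟩

/-- The element of `T` supported at `ν` with value `dE ν ζ v hv`. -/
def tE (ν : Fin n) (ζ : U ν) (v : Fin (s ν) → ℕ) (hv : ∀ j, 1 ≤ v j) : Tm U s :=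
  Pi.mulSingle ν (dE ν ζ v hv)

lemma dE_mul (ν : Fin n) (ζ ζ' : U ν) (v v' : Fin (s ν) → ℕ) (hv : ∀ j, 1 ≤ v j)
    (hv' : ∀ j, 1 ≤ v' j) :
    dE ν ζ v hv * dE ν ζ' v' hv' =
      dE ν (ζ * ζ') (v + v') (fun j => le_trans (hv j) (Nat.le_add_right _ _)) := by
  apply Subtype.ext
  apply Prod.ext
  · rfl
  · show Multiplicative.ofAdd (Finsupp.equivFunOnFinite.symm v) *
        Multiplicative.ofAdd (Finsupp.equivFunOnFinite.symm v') =
        Multiplicative.ofAdd (Finsupp.equivFunOnFinite.symm (v + v'))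
    rw [← ofAdd_add]
    congr 1
    ext j
    simp

lemma tE_mul (ν : Fin n) (ζ ζ' : U ν) (v v' : Fin (s ν) → ℕ) (hv : ∀ j, 1 ≤ v j)
    (hv' : ∀ j, 1 ≤ v' j) :
    tE ν ζ v hv * tE ν ζ' v' hv' =
      tE ν (ζ * ζ') (v + v') (fun j => le_trans (hv j) (Nat.le_add_right _ _)) := by
  rw [tE, tE, tE, ← Pi.mulSingle_mul, dE_mul]

lemma tE_eq_tE {ν : Fin n} {ζ ζ' : U ν} {v v' : Fin (s ν) → ℕ} {hv : ∀ j, 1 ≤ v j}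
    {hv' : ∀ j, 1 ≤ v' j} (h1 : ζ = ζ') (h2 : v = v') :
    tE ν ζ v hv = tE ν ζ' v' hv' := by
  subst h1; subst h2; rfl

lemma tE_apply_ne {ν i : Fin n} (h : i ≠ ν) (ζ : U ν) (v : Fin (s ν) → ℕ)
    (hv : ∀ j, 1 ≤ v j) : tE ν ζ v hv i = 1 :=
  Pi.mulSingle_eq_of_ne h _

lemma tE_apply_same {ν : Fin n} (ζ : U ν) (v : Fin (s ν) → ℕ) (hv : ∀ j, 1 ≤ v j) :
    tE ν ζ v hv ν = dE ν ζ v hv :=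
  Pi.mulSingle_eq_same _ _

/-- Irreducibility of "mixed" atoms: a single `T`-atom in coordinate `ν` together with at
most one nonzero group element. -/
lemma mixed_atom_irred (hs : ∀ i, 1 ≤ s i) {ν : Fin n} {ζ : U ν} {v : Fin (s ν) → ℕ}
    {hv : ∀ j, 1 ≤ v j} (hat : ∃ j, v j = 1) {m : Multiset G}
    (hm : Multiset.card m ≤ 1) (h0 : ∀ x ∈ m, x ≠ 0) {hmem} :
    Irreducible (Associates.mk (mkB iota m (tE ν ζ v hv) hmem)) := by
  apply B_irreducible_mk hs
  · intro hcon
    have h1 : tE ν ζ v hv = 1 :=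
      congrArg (fun z : ↥(TBlock G U s iota) => z.val.2) hcon
    have h2 := congrFun h1 ν
    rw [tE_apply_same] at h2
    have h3 := congrArg (fun d : ↥(seminormalD (U ν) (s ν)) =>
      Multiplicative.toAdd d.val.2 ⟨0, hs ν⟩) h2
    have h4 : Multiplicative.toAdd ((dE ν ζ v hv).val.2) ⟨0, hs ν⟩ = v ⟨0, hs ν⟩ := by
      simp [dE]
    have h5 := hv ⟨0, hs ν⟩
    simp only [h4] at h3
    simp at h3
    omega
  · intro x y hxy
    have ht : x.val.2 * y.val.2 = tE ν ζ v hv :=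
      congrArg (fun z : ↥(TBlock G U s iota) => z.val.2) hxy
    have hother : ∀ i, i ≠ ν → x.val.2 i = 1 ∧ y.val.2 i = 1 := by
      intro i hi
      have h5 : x.val.2 i * y.val.2 i = 1 := by
        have := congrFun ht i
        rwa [tE_apply_ne hi] at this
      exact ⟨D_mul_eq_one hs h5, D_mul_eq_one hs (by rwa [mul_comm] at h5)⟩
    have hν : x.val.2 ν * y.val.2 ν = dE ν ζ v hv := by
      have := congrFun ht ν
      rwa [tE_apply_same] at this
    obtain ⟨j1, hj1⟩ := hat
    have hone : x.val.2 ν = 1 ∨ y.val.2 ν = 1 := by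
      by_contra hcon
      push_neg at hcon
      have hx1 : ∀ j, 1 ≤ Multiplicative.toAdd ((x.val.2 ν).val.2) j := by
        rcases (x.val.2 ν).2 with h' | h'
        · exact absurd (Subtype.ext h') hcon.1
        · exact h'
      have hy1 : ∀ j, 1 ≤ Multiplicative.toAdd ((y.val.2 ν).val.2) j := by
        rcases (y.val.2 ν).2 with h' | h'
        · exact absurd (Subtype.ext h') hcon.2
        · exact h'
      have hsum := congrArg (fun d : ↥(seminormalD (U ν) (s ν)) =>
        Multiplicative.toAdd d.val.2 j1) hν
      simp only [Submonoid.coe_mul, Prod.snd_mul, toAdd_mul, Finsupp.add_apply] at hsum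
      have hd : Multiplicative.toAdd ((dE ν ζ v hv).val.2) j1 = v j1 := by simp [dE]
      rw [hd, hj1] at hsum
      have := hx1 j1
      have := hy1 j1
      omega
    have hXY : Multiplicative.toAdd x.val.1 + Multiplicative.toAdd y.val.1 = m :=
      congrArg (fun z : ↥(TBlock G U s iota) => Multiplicative.toAdd z.val.1) hxy
    have key : ∀ w : ↥(TBlock G U s iota), w.val.2 = 1 →
        Multiplicative.toAdd w.val.1 ≤ m → w = 1 := by
      intro w hw hle
      have hsum0 := B_fst_sum_eq_zero hw
      rcases Nat.eq_zero_or_pos (Multiset.card (Multiplicative.toAdd w.val.1)) with hc | hc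
      · exact B_eq_one_of_parts (Multiset.card_eq_zero.1 hc) hw
      · exfalso
        have hc1 : Multiset.card (Multiplicative.toAdd w.val.1) = 1 := by
          have := Multiset.card_le_card hle
          omega
        obtain ⟨g, hg⟩ := Multiset.card_eq_one.1 hc1
        rw [hg] at hsum0 hle
        have : g ∈ m := Multiset.mem_of_le hle (Multiset.mem_singleton_self g)
        exact h0 g this (by simpa using hsum0)
    rcases hone with h' | h'
    · have hxT : x.val.2 = 1 := funext fun i => by
        by_cases hi : i = ν
        · rw [hi]; exact h'
        · exact (hother i hi).1
      refine Or.inl (key x hxT ?_)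
      rw [← hXY]; exact Multiset.le_add_right _ _
    · have hyT : y.val.2 = 1 := funext fun i => by
        by_cases hi : i = ν
        · rw [hi]; exact h'
        · exact (hother i hi).2
      refine Or.inr (key y hyT ?_)
      rw [← hXY]; exact Multiset.le_add_left _ _

end Card2
section Card2B
set_option linter.unusedSectionVars false

variable {G : Type*} [AddCommGroup G] [Fintype G] {n : ℕ} {U : Fin n → Type*}
  [∀ i, CommGroup (U i)] {s : Fin n → ℕ} {iota : Tm U s →* Multiplicative G}

lemma atomE2_mem {e : G} (he2 : e + e = 0) :
    Multiplicative.ofAdd (Multiset.sum {e, e}) * iota (1 : Tm U s) = 1 := by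
  have h : Multiset.sum ({e, e} : Multiset G) = 0 := by simp [he2]
  rw [h, map_one, mul_one]; rfl

lemma atomE2_irred (hs : ∀ i, 1 ≤ s i) {e : G} (he : e ≠ 0) (he2 : e + e = 0) :
    Irreducible (Associates.mk (mkB iota {e, e} 1 (atomE2_mem he2))) := by
  apply seq_atom_irred hs (by simp)
  apply short_nonsplit (by simp) _ (by simp [he2])
  intro x hx
  simp only [Multiset.insert_eq_cons, Multiset.mem_cons, Multiset.mem_singleton] at hx
  rcases hx with h' | h' <;> rw [h'] <;> exact he

/-- Two factorizations of lengths 2 and 3 coming from a pair of class-`e` atoms and a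
pair of class-`0` atoms in coordinate `ν`. -/
lemma two_factorizations (hs : ∀ i, 1 ≤ s i) {e : G} (he : e ≠ 0) (he2 : e + e = 0)
    (hall : ∀ x : G, x = 0 ∨ x = e) (ν : Fin n)
    (η1 η2 θ1 θ2 : U ν) (va vb vc vd : Fin (s ν) → ℕ)
    (hva : ∀ j, 1 ≤ va j) (hvb : ∀ j, 1 ≤ vb j) (hvc : ∀ j, 1 ≤ vc j) (hvd : ∀ j, 1 ≤ vd j)
    (hata : ∃ j, va j = 1) (hatb : ∃ j, vb j = 1) (hatc : ∃ j, vc j = 1)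
    (hatd : ∃ j, vd j = 1)
    (hu : θ1 * θ2 = η1 * η2) (hw : vc + vd = va + vb)
    (hca : iota (tE ν η1 va hva) = Multiplicative.ofAdd e)
    (hcb : iota (tE ν η2 vb hvb) = Multiplicative.ofAdd e)
    (hcc : iota (tE ν θ1 vc hvc) = 1)
    (hcd : iota (tE ν θ2 vd hvd) = 1) :
    sInf (DeltaMonoid ↥(TBlock G U s iota)) = 1 := by
  have hvab : ∀ j, 1 ≤ (va + vb) j := fun j => le_trans (hva j) (Nat.le_add_right _ _)
  have hAmem : Multiplicative.ofAdd (Multiset.sum {e, e}) *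
      iota (tE ν (η1 * η2) (va + vb) hvab) = 1 := by
    have h1 : Multiset.sum ({e, e} : Multiset G) = 0 := by simp [he2]
    have h2 : (tE ν (η1 * η2) (va + vb) hvab : Tm U s) = tE ν η1 va hva * tE ν η2 vb hvb := by
      rw [tE_mul]
    rw [h1, h2, map_mul, hca, hcb]
    show 1 * (Multiplicative.ofAdd e * Multiplicative.ofAdd e) = 1
    rw [one_mul, ← ofAdd_add, he2]
    rfl
  have hx1mem : Multiplicative.ofAdd (Multiset.sum {e}) * iota (tE ν η1 va hva) = 1 := by
    rw [Multiset.sum_singleton, hca, ← ofAdd_add, he2]; rfl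
  have hx2mem : Multiplicative.ofAdd (Multiset.sum {e}) * iota (tE ν η2 vb hvb) = 1 := by
    rw [Multiset.sum_singleton, hcb, ← ofAdd_add, he2]; rfl
  have hy1mem : Multiplicative.ofAdd (Multiset.sum (0 : Multiset G)) *
      iota (tE ν θ1 vc hvc) = 1 := by
    rw [Multiset.sum_zero, hcc, mul_one]; rfl
  have hy2mem : Multiplicative.ofAdd (Multiset.sum (0 : Multiset G)) *
      iota (tE ν θ2 vd hvd) = 1 := by
    rw [Multiset.sum_zero, hcd, mul_one]; rfl
  have hz2 : ({mkB iota {e} (tE ν η1 va hva) hx1mem,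
      mkB iota {e} (tE ν η2 vb hvb) hx2mem} : Multiset ↥(TBlock G U s iota)).prod =
      mkB iota {e, e} (tE ν (η1 * η2) (va + vb) hvab) hAmem := by
    simp only [Multiset.insert_eq_cons, Multiset.prod_cons, Multiset.prod_singleton]
    apply Subtype.ext
    apply Prod.ext
    · show Multiplicative.ofAdd (({e} : Multiset G) + {e}) =
        Multiplicative.ofAdd ({e, e} : Multiset G)
      rfl
    · simp only [Submonoid.coe_mul, Prod.snd_mul, mkB_val]
      rw [tE_mul]
  have hz3 : ({mkB iota {e, e} 1 (atomE2_mem he2),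
      mkB iota 0 (tE ν θ1 vc hvc) hy1mem,
      mkB iota 0 (tE ν θ2 vd hvd) hy2mem} : Multiset ↥(TBlock G U s iota)).prod =
      mkB iota {e, e} (tE ν (η1 * η2) (va + vb) hvab) hAmem := by
    simp only [Multiset.insert_eq_cons, Multiset.prod_cons, Multiset.prod_singleton]
    apply Subtype.ext
    apply Prod.ext
    · show Multiplicative.ofAdd (({e, e} : Multiset G) + (0 + 0)) =
        Multiplicative.ofAdd ({e, e} : Multiset G)
      rfl
    · simp only [Submonoid.coe_mul, Prod.snd_mul, mkB_val]
      rw [one_mul, tE_mul]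
      exact tE_eq_tE hu hw
  refine delta_min_one_of (mkB iota {e, e} (tE ν (η1 * η2) (va + vb) hvab) hAmem)
    (Multiset.map Associates.mk {mkB iota {e} (tE ν η1 va hva) hx1mem,
      mkB iota {e} (tE ν η2 vb hvb) hx2mem})
    (Multiset.map Associates.mk {mkB iota {e, e} 1 (atomE2_mem he2),
      mkB iota 0 (tE ν θ1 vc hvc) hy1mem,
      mkB iota 0 (tE ν θ2 vd hvd) hy2mem}) ?_ ?_ ?_
  · apply mem_factorizations_of
    · intro b hb
      simp only [Multiset.insert_eq_cons, Multiset.mem_cons, Multiset.mem_singleton] at hb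
      rcases hb with h' | h' <;> rw [h']
      · exact mixed_atom_irred hs hata (by simp) (by intro x hx; rw [Multiset.mem_singleton.1 hx]; exact he)
      · exact mixed_atom_irred hs hatb (by simp) (by intro x hx; rw [Multiset.mem_singleton.1 hx]; exact he)
    · exact hz2
  · apply mem_factorizations_of
    · intro b hb
      simp only [Multiset.insert_eq_cons, Multiset.mem_cons, Multiset.mem_singleton] at hb
      rcases hb with h' | h' | h' <;> rw [h']
      · exact atomE2_irred hs he he2
      · exact mixed_atom_irred hs hatc (by simp) (by intro x hx; simp at hx)
      · exact mixed_atom_irred hs hatd (by simp) (by intro x hx; simp at hx)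
    · exact hz3
  · simp

/-- Two factorizations of lengths 2 and 3 by class-`0` atoms only. -/
lemma three_factorizations (hs : ∀ i, 1 ≤ s i) {e : G} (he : e ≠ 0) (he2 : e + e = 0)
    (ν : Fin n) (v1 v2 v3 w1 w2 : Fin (s ν) → ℕ)
    (hv1 : ∀ j, 1 ≤ v1 j) (hv2 : ∀ j, 1 ≤ v2 j) (hv3 : ∀ j, 1 ≤ v3 j)
    (hw1 : ∀ j, 1 ≤ w1 j) (hw2 : ∀ j, 1 ≤ w2 j)
    (hat1 : ∃ j, v1 j = 1) (hat2 : ∃ j, v2 j = 1) (hat3 : ∃ j, v3 j = 1)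
    (hatw1 : ∃ j, w1 j = 1) (hatw2 : ∃ j, w2 j = 1)
    (hsum : w1 + w2 = v1 + (v2 + v3))
    (hc1 : iota (tE ν 1 v1 hv1) = 1) (hc2 : iota (tE ν 1 v2 hv2) = 1)
    (hc3 : iota (tE ν 1 v3 hv3) = 1)
    (hcw1 : iota (tE ν 1 w1 hw1) = 1) (hcw2 : iota (tE ν 1 w2 hw2) = 1) :
    sInf (DeltaMonoid ↥(TBlock G U s iota)) = 1 := by
  have hvs : ∀ j, 1 ≤ (v1 + (v2 + v3)) j := fun j => le_trans (hv1 j) (Nat.le_add_right _ _)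
  have hAmem : Multiplicative.ofAdd (Multiset.sum (0 : Multiset G)) *
      iota (tE ν 1 (v1 + (v2 + v3)) hvs) = 1 := by
    have h2 : (tE ν 1 (v1 + (v2 + v3)) hvs : Tm U s) =
        tE ν 1 v1 hv1 * (tE ν 1 v2 hv2 * tE ν 1 v3 hv3) := by
      rw [tE_mul, tE_mul]
      exact tE_eq_tE (by simp) rfl
    rw [Multiset.sum_zero, h2, map_mul, map_mul, hc1, hc2, hc3]
    simp
  have hymem : ∀ (v : Fin (s ν) → ℕ) (hv : ∀ j, 1 ≤ v j),
      iota (tE ν 1 v hv) = 1 →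
      Multiplicative.ofAdd (Multiset.sum (0 : Multiset G)) * iota (tE ν 1 v hv) = 1 := by
    intro v hv hc
    rw [Multiset.sum_zero, hc, mul_one]; rfl
  have hz3 : ({mkB iota 0 (tE ν 1 v1 hv1) (hymem v1 hv1 hc1),
      mkB iota 0 (tE ν 1 v2 hv2) (hymem v2 hv2 hc2),
      mkB iota 0 (tE ν 1 v3 hv3) (hymem v3 hv3 hc3)} : Multiset ↥(TBlock G U s iota)).prod =
      mkB iota 0 (tE ν 1 (v1 + (v2 + v3)) hvs) hAmem := by
    simp only [Multiset.insert_eq_cons, Multiset.prod_cons, Multiset.prod_singleton]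
    apply Subtype.ext
    apply Prod.ext
    · show Multiplicative.ofAdd ((0 : Multiset G) + (0 + 0)) =
        Multiplicative.ofAdd (0 : Multiset G)
      rfl
    · simp only [Submonoid.coe_mul, Prod.snd_mul, mkB_val]
      rw [tE_mul, tE_mul]
      exact tE_eq_tE (by simp) rfl
  have hz2 : ({mkB iota 0 (tE ν 1 w1 hw1) (hymem w1 hw1 hcw1),
      mkB iota 0 (tE ν 1 w2 hw2) (hymem w2 hw2 hcw2)} : Multiset ↥(TBlock G U s iota)).prod =
      mkB iota 0 (tE ν 1 (v1 + (v2 + v3)) hvs) hAmem := by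
    simp only [Multiset.insert_eq_cons, Multiset.prod_cons, Multiset.prod_singleton]
    apply Subtype.ext
    apply Prod.ext
    · show Multiplicative.ofAdd ((0 : Multiset G) + 0) =
        Multiplicative.ofAdd (0 : Multiset G)
      rfl
    · simp only [Submonoid.coe_mul, Prod.snd_mul, mkB_val]
      rw [tE_mul]
      exact tE_eq_tE (by simp) hsum
  refine delta_min_one_of (mkB iota 0 (tE ν 1 (v1 + (v2 + v3)) hvs) hAmem)
    (Multiset.map Associates.mk {mkB iota 0 (tE ν 1 w1 hw1) (hymem w1 hw1 hcw1),
      mkB iota 0 (tE ν 1 w2 hw2) (hymem w2 hw2 hcw2)})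
    (Multiset.map Associates.mk {mkB iota 0 (tE ν 1 v1 hv1) (hymem v1 hv1 hc1),
      mkB iota 0 (tE ν 1 v2 hv2) (hymem v2 hv2 hc2),
      mkB iota 0 (tE ν 1 v3 hv3) (hymem v3 hv3 hc3)}) ?_ ?_ ?_
  · apply mem_factorizations_of
    · intro b hb
      simp only [Multiset.insert_eq_cons, Multiset.mem_cons, Multiset.mem_singleton] at hb
      rcases hb with h' | h' <;> rw [h']
      · exact mixed_atom_irred hs hatw1 (by simp) (by intro x hx; simp at hx)
      · exact mixed_atom_irred hs hatw2 (by simp) (by intro x hx; simp at hx)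
    · exact hz2
  · apply mem_factorizations_of
    · intro b hb
      simp only [Multiset.insert_eq_cons, Multiset.mem_cons, Multiset.mem_singleton] at hb
      rcases hb with h' | h' | h' <;> rw [h']
      · exact mixed_atom_irred hs hat1 (by simp) (by intro x hx; simp at hx)
      · exact mixed_atom_irred hs hat2 (by simp) (by intro x hx; simp at hx)
      · exact mixed_atom_irred hs hat3 (by simp) (by intro x hx; simp at hx)
    · exact hz3
  · simp

end Card2B
section Card2C
set_option linter.unusedSectionVars false

variable {G : Type*} [AddCommGroup G] [Fintype G] {n : ℕ} {U : Fin n → Type*}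
  [∀ i, CommGroup (U i)] {s : Fin n → ℕ} {iota : Tm U s →* Multiplicative G}

lemma ofAdd_e_ne_one {e : G} (he : e ≠ 0) : Multiplicative.ofAdd e ≠ 1 := fun hcon =>
  he (by simpa using congrArg Multiplicative.toAdd hcon)

/-- The case of a unit whose class differs from the trivial unit's class. -/
lemma case_unit (hs : ∀ i, 1 ≤ s i) {e : G} (he : e ≠ 0) (he2 : e + e = 0)
    (hall : ∀ x : G, x = 0 ∨ x = e) (ν : Fin n) (ε : U ν)
    (hne : iota (tE ν ε (fun _ => 1) (fun _ => le_refl 1)) ≠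
           iota (tE ν 1 (fun _ => 1) (fun _ => le_refl 1))) :
    sInf (DeltaMonoid ↥(TBlock G U s iota)) = 1 := by
  have hone : ∀ j : Fin (s ν), 1 ≤ (fun _ : Fin (s ν) => 1) j := fun _ => le_refl 1
  have hrel : iota (tE ν ε⁻¹ (fun _ => 1) hone) * iota (tE ν ε (fun _ => 1) hone) =
      iota (tE ν 1 (fun _ => 1) hone) * iota (tE ν 1 (fun _ => 1) hone) := by
    rw [← map_mul, ← map_mul, tE_mul, tE_mul]
    exact congrArg iota (tE_eq_tE (by simp) rfl)
  rcases mult_two_cases hall (iota (tE ν 1 (fun _ => 1) hone)) with hc0 | hc0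
  · -- trivial-unit class is 1, so ε-class is e
    have hc1 : iota (tE ν ε (fun _ => 1) hone) = Multiplicative.ofAdd e :=
      (mult_two_cases hall _).resolve_left (by rw [hc0] at hne; exact hne)
    have hc1' : iota (tE ν ε⁻¹ (fun _ => 1) hone) = Multiplicative.ofAdd e := by
      rcases mult_two_cases hall (iota (tE ν ε⁻¹ (fun _ => 1) hone)) with h' | h'
      · exfalso
        rw [h', one_mul, hc0, one_mul, hc1] at hrel
        exact ofAdd_e_ne_one he hrel
      · exact h'
    exact two_factorizations hs he he2 hall ν ε ε⁻¹ 1 1 (fun _ => 1) (fun _ => 1)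
      (fun _ => 1) (fun _ => 1) hone hone hone hone
      ⟨⟨0, hs ν⟩, rfl⟩ ⟨⟨0, hs ν⟩, rfl⟩ ⟨⟨0, hs ν⟩, rfl⟩ ⟨⟨0, hs ν⟩, rfl⟩
      (by simp) rfl hc1 hc1' hc0 hc0
  · -- trivial-unit class is e, so ε-class is 1
    have hc1 : iota (tE ν ε (fun _ => 1) hone) = 1 :=
      (mult_two_cases hall _).resolve_right (by rw [hc0] at hne; exact hne)
    have hc1' : iota (tE ν ε⁻¹ (fun _ => 1) hone) = 1 := by
      rw [hc1, mul_one, hc0] at hrel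
      rw [hrel]
      exact mult_sq he2 hall _
    exact two_factorizations hs he he2 hall ν 1 1 ε ε⁻¹ (fun _ => 1) (fun _ => 1)
      (fun _ => 1) (fun _ => 1) hone hone hone hone
      ⟨⟨0, hs ν⟩, rfl⟩ ⟨⟨0, hs ν⟩, rfl⟩ ⟨⟨0, hs ν⟩, rfl⟩ ⟨⟨0, hs ν⟩, rfl⟩
      (by simp) rfl hc0 hc0 hc1 hc1'

/-- If adding one to any single exponent does not change the class, then all classes
with exponents `≥ 1` agree with the class of the all-ones vector. -/
lemma cl_const (hs : ∀ i, 1 ≤ s i) (ν : Fin n)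
    (hJ : ∀ j : Fin (s ν),
      iota (tE ν 1 (fun j' => if j' = j then 2 else 1)
        (fun j' => by split <;> omega)) =
      iota (tE ν 1 (fun _ => 1) (fun _ => le_refl 1))) :
    ∀ r : Fin (s ν) → ℕ,
      iota (tE ν 1 (fun j => 1 + r j) (fun j => Nat.le_add_right 1 (r j))) =
      iota (tE ν 1 (fun _ => 1) (fun _ => le_refl 1)) := by
  have step : ∀ (v : Fin (s ν) → ℕ) (hv : ∀ j, 1 ≤ v j) (j : Fin (s ν)),
      iota (tE ν 1 (fun j' => v j' + if j' = j then 1 else 0)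
        (fun j' => le_trans (hv j') (Nat.le_add_right _ _))) = iota (tE ν 1 v hv) := by
    intro v hv j
    have key : iota (tE ν 1 (fun j' => v j' + if j' = j then 1 else 0)
        (fun j' => le_trans (hv j') (Nat.le_add_right _ _))) *
        iota (tE ν 1 (fun _ => 1) (fun _ => le_refl 1)) =
        iota (tE ν 1 v hv) *
        iota (tE ν 1 (fun j' => if j' = j then 2 else 1)
          (fun j' => by split <;> omega)) := by
      rw [← map_mul, ← map_mul, tE_mul, tE_mul]
      refine congrArg iota (tE_eq_tE rfl ?_)
      funext j'
      show (v j' + if j' = j then 1 else 0) + 1 = v j' + if j' = j then 2 else 1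
      split <;> omega
    rw [hJ j] at key
    exact mul_right_cancel key
  have main : ∀ (N : ℕ) (r : Fin (s ν) → ℕ), (∑ j, r j) = N →
      iota (tE ν 1 (fun j => 1 + r j) (fun j => Nat.le_add_right 1 (r j))) =
      iota (tE ν 1 (fun _ => 1) (fun _ => le_refl 1)) := by
    intro N
    induction N with
    | zero =>
      intro r hN
      have hr0 : ∀ j, r j = 0 := fun j =>
        Finset.sum_eq_zero_iff.mp hN j (Finset.mem_univ j)
      refine congrArg iota (tE_eq_tE rfl ?_)
      funext j
      rw [hr0 j]
    | succ N ih =>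
      intro r hN
      have hex : ∃ j, 1 ≤ r j := by
        by_contra hcon
        push_neg at hcon
        have : ∑ j, r j = 0 := Finset.sum_eq_zero (fun j _ => by have := hcon j; omega)
        omega
      obtain ⟨jx, hjx⟩ := hex
      have hsum' : ∑ j, (r j - if j = jx then 1 else 0) = N := by
        have h1 : ∑ j, ((r j - if j = jx then 1 else 0) +
            if j = jx then 1 else 0) = ∑ j, r j := by
          apply Finset.sum_congr rfl
          intro j _
          split <;> rename_i hj
          · subst hj; omega
          · omega
        rw [Finset.sum_add_distrib] at h1
        have h2 : (∑ j : Fin (s ν), if j = jx then 1 else 0) = 1 := by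
          rw [Finset.sum_ite_eq' Finset.univ jx (fun _ => 1)]
          simp
        omega
      have hstep := step (fun j' => 1 + (r j' - if j' = jx then 1 else 0))
        (fun j' => Nat.le_add_right 1 _) jx
      have hcast : iota (tE ν 1 (fun j => 1 + r j) (fun j => Nat.le_add_right 1 (r j))) =
          iota (tE ν 1 (fun j' => (1 + (r j' - if j' = jx then 1 else 0)) +
            if j' = jx then 1 else 0)
            (fun j' => le_trans (Nat.le_add_right 1 _) (Nat.le_add_right _ _))) := by
        refine congrArg iota (tE_eq_tE rfl ?_)
        funext j'
        by_cases hj : j' = jx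
        · subst hj
          split
          · omega
          · next h => exact absurd rfl h
        · simp only [if_neg hj]; omega
      rw [hcast, hstep]
      exact ih _ hsum'
  exact fun r => main (∑ j, r j) r rfl

/-- The case of a coordinate of rank at least 2. -/
lemma case_s2 (hs : ∀ i, 1 ≤ s i) {e : G} (he : e ≠ 0) (he2 : e + e = 0)
    (hall : ∀ x : G, x = 0 ∨ x = e) (ν : Fin n) (hs2 : 2 ≤ s ν) :
    sInf (DeltaMonoid ↥(TBlock G U s iota)) = 1 := by
  by_cases hJ : ∀ j : Fin (s ν),
      iota (tE ν 1 (fun j' => if j' = j then 2 else 1)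
        (fun j' => by split <;> omega)) =
      iota (tE ν 1 (fun _ => 1) (fun _ => le_refl 1))
  · -- all prime classes trivial: class of everything ≥ 1 is `cl one`, which is 1
    have hcl := cl_const hs ν hJ
    have honecl : iota (tE ν 1 (fun _ : Fin (s ν) => 1) (fun _ => le_refl 1)) = 1 := by
      have h1 : iota (tE ν 1 (fun _ : Fin (s ν) => 1) (fun _ => le_refl 1)) *
          iota (tE ν 1 (fun _ : Fin (s ν) => 1) (fun _ => le_refl 1)) =
          iota (tE ν 1 (fun j : Fin (s ν) => 1 + 1) (fun j => Nat.le_add_right 1 1)) := by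
        rw [← map_mul, tE_mul]
        exact congrArg iota (tE_eq_tE (by simp) rfl)
      rw [hcl (fun _ => 1)] at h1
      have h2 : iota (tE ν 1 (fun _ : Fin (s ν) => 1) (fun _ => le_refl 1)) *
          iota (tE ν 1 (fun _ : Fin (s ν) => 1) (fun _ => le_refl 1)) =
          1 * iota (tE ν 1 (fun _ : Fin (s ν) => 1) (fun _ => le_refl 1)) := by
        rw [h1, one_mul]
      exact mul_right_cancel h2
    -- classes of arbitrary `≥ 1` vectors are 1
    have hclv : ∀ (v : Fin (s ν) → ℕ) (hv : ∀ j, 1 ≤ v j),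
        iota (tE ν 1 v hv) = 1 := by
      intro v hv
      have h1 : iota (tE ν 1 v hv) =
          iota (tE ν 1 (fun j => 1 + (v j - 1)) (fun j => Nat.le_add_right 1 _)) := by
        refine congrArg iota (tE_eq_tE rfl ?_)
        funext j
        have := hv j
        omega
      rw [h1, hcl, honecl]
    -- apply three_factorizations with p, q
    have hj0 : (0 : ℕ) < s ν := by omega
    refine three_factorizations hs he he2 ν (fun _ => 1) (fun _ => 1) (fun _ => 1)
      (fun j => if j = ⟨0, hj0⟩ then 1 else 2) (fun j => if j = ⟨0, hj0⟩ then 2 else 1)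
      (fun _ => le_refl 1) (fun _ => le_refl 1) (fun _ => le_refl 1)
      (fun j => by split <;> omega) (fun j => by split <;> omega)
      ⟨⟨0, hj0⟩, rfl⟩ ⟨⟨0, hj0⟩, rfl⟩ ⟨⟨0, hj0⟩, rfl⟩
      ⟨⟨0, hj0⟩, by simp⟩ ⟨⟨1, hs2⟩, by simp [Fin.ext_iff]⟩
      ?_ (hclv _ _) (hclv _ _) (hclv _ _) (hclv _ _) (hclv _ _)
    · funext j
      show (if j = ⟨0, hj0⟩ then 1 else 2) + (if j = ⟨0, hj0⟩ then 2 else 1) = 1 + (1 + 1)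
      split <;> omega
  · -- some prime class is nontrivial
    push_neg at hJ
    obtain ⟨j0, hj0⟩ := hJ
    have hb1 : ∀ j' : Fin (s ν), 1 ≤ (fun j'' => if j'' = j0 then 3 else 1) j' := by
      intro j'; dsimp only; split <;> omega
    have hc1 : ∀ j' : Fin (s ν), 1 ≤ (fun j'' => if j'' = j0 then 2 else 1) j' := by
      intro j'; dsimp only; split <;> omega
    have hone : ∀ j : Fin (s ν), 1 ≤ (fun _ : Fin (s ν) => 1) j := fun _ => le_refl 1
    have hclrel : iota (tE ν 1 (fun _ => 1) hone) *
        iota (tE ν 1 (fun j'' => if j'' = j0 then 3 else 1) hb1) =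
        iota (tE ν 1 (fun j'' => if j'' = j0 then 2 else 1) hc1) *
        iota (tE ν 1 (fun j'' => if j'' = j0 then 2 else 1) hc1) := by
      rw [← map_mul, ← map_mul, tE_mul, tE_mul]
      refine congrArg iota (tE_eq_tE (by simp) ?_)
      funext j'
      show 1 + (if j' = j0 then 3 else 1) = (if j' = j0 then 2 else 1) + (if j' = j0 then 2 else 1)
      split <;> omega
    have hccsq : iota (tE ν 1 (fun j'' => if j'' = j0 then 2 else 1) hc1) *
        iota (tE ν 1 (fun j'' => if j'' = j0 then 2 else 1) hc1) = 1 := mult_sq he2 hall _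
    have habone : iota (tE ν 1 (fun _ => 1) hone) *
        iota (tE ν 1 (fun j'' => if j'' = j0 then 3 else 1) hb1) = 1 := by
      rw [hclrel]; exact hccsq
    -- j1 distinct from j0
    have hj1ex : ∃ j1 : Fin (s ν), j1 ≠ j0 := by
      rcases Nat.eq_zero_or_pos j0.val with h' | h'
      · exact ⟨⟨1, hs2⟩, by intro hcon; have := congrArg Fin.val hcon; simp at this; omega⟩
      · exact ⟨⟨0, by omega⟩, by intro hcon; have := congrArg Fin.val hcon; simp at this; omega⟩
    obtain ⟨j1, hj1ne⟩ := hj1ex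
    have hatb : ∃ j', (fun j'' => if j'' = j0 then (3:ℕ) else 1) j' = 1 :=
      ⟨j1, by simp [hj1ne]⟩
    have hatc : ∃ j', (fun j'' => if j'' = j0 then (2:ℕ) else 1) j' = 1 :=
      ⟨j1, by simp [hj1ne]⟩
    have hata : ∃ j', (fun _ : Fin (s ν) => (1:ℕ)) j' = 1 := ⟨j0, rfl⟩
    rcases mult_two_cases hall (iota (tE ν 1 (fun _ => 1) hone)) with ha | ha
    · -- class of the all-ones atom is 1
      have hb : iota (tE ν 1 (fun j'' => if j'' = j0 then 3 else 1) hb1) = 1 := by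
        rw [ha, one_mul] at habone
        exact habone
      have hcc : iota (tE ν 1 (fun j'' => if j'' = j0 then 2 else 1) hc1) =
          Multiplicative.ofAdd e :=
        (mult_two_cases hall _).resolve_left (fun hcon => hj0 (hcon.trans ha.symm))
      refine two_factorizations hs he he2 hall ν 1 1 1 1
        (fun j'' => if j'' = j0 then 2 else 1) (fun j'' => if j'' = j0 then 2 else 1)
        (fun _ => 1) (fun j'' => if j'' = j0 then 3 else 1)
        hc1 hc1 hone hb1 hatc hatc hata hatb rfl ?_ hcc hcc ha hb
      funext j'
      show (1 : ℕ) + (if j' = j0 then 3 else 1) =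
        (if j' = j0 then 2 else 1) + (if j' = j0 then 2 else 1)
      split <;> omega
    · -- class of the all-ones atom is e
      have hbinv : iota (tE ν 1 (fun j'' => if j'' = j0 then 3 else 1) hb1) =
          (iota (tE ν 1 (fun _ => 1) hone))⁻¹ :=
        eq_inv_of_mul_eq_one_right habone
      have hb : iota (tE ν 1 (fun j'' => if j'' = j0 then 3 else 1) hb1) =
          Multiplicative.ofAdd e := by
        rw [hbinv, ha]
        exact inv_eq_of_mul_eq_one_right (mult_sq he2 hall _)
      have hcc : iota (tE ν 1 (fun j'' => if j'' = j0 then 2 else 1) hc1) = 1 :=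
        (mult_two_cases hall _).resolve_right (fun hcon => hj0 (hcon.trans ha.symm))
      refine two_factorizations hs he he2 hall ν 1 1 1 1
        (fun _ => 1) (fun j'' => if j'' = j0 then 3 else 1)
        (fun j'' => if j'' = j0 then 2 else 1) (fun j'' => if j'' = j0 then 2 else 1)
        hone hb1 hc1 hc1 hata hatb hatc hatc rfl ?_ ha hb hcc hcc
      funext j'
      show (if j' = j0 then 2 else 1) + (if j' = j0 then 2 else 1) =
        (1 : ℕ) + (if j' = j0 then 3 else 1)
      split <;> omega

end Card2C
section Card2D
set_option linter.unusedSectionVars false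

variable {G : Type*} [AddCommGroup G] [Fintype G] {n : ℕ} {U : Fin n → Type*}
  [∀ i, CommGroup (U i)] {s : Fin n → ℕ} {iota : Tm U s →* Multiplicative G}

/-- Total exponent of an element of `D_i`. -/
def Kv {n : ℕ} {U : Fin n → Type*} [∀ i, CommGroup (U i)] {s : Fin n → ℕ} {i : Fin n}
    (d : ↥(seminormalD (U i) (s i))) : ℕ :=
  ∑ j, Multiplicative.toAdd d.val.2 j

/-- The weight of coordinate `i`: 2 if the class of `q_i` is trivial, 1 otherwise. -/
def wtF (iota : Tm U s →* Multiplicative G) (i : Fin n) : ℕ :=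
  if iota (tE i 1 (fun _ => 1) (fun _ => le_refl 1)) = 1 then 2 else 1

lemma wtF_pos (i : Fin n) : 1 ≤ wtF iota i := by
  rw [wtF]; split <;> omega

/-- The weight of an element of `F`. -/
def Wv (iota : Tm U s →* Multiplicative G) (x : Fm G U s) : ℕ :=
  Multiset.card (Multiplicative.toAdd x.1) + Multiset.count 0 (Multiplicative.toAdd x.1) +
    ∑ i, wtF iota i * Kv (x.2 i)

lemma Kv_mul {i : Fin n} (d d' : ↥(seminormalD (U i) (s i))) :
    Kv (d * d') = Kv d + Kv d' := by
  rw [Kv, Kv, Kv, ← Finset.sum_add_distrib]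
  apply Finset.sum_congr rfl
  intro j _
  simp [Finsupp.add_apply]

lemma Kv_one {i : Fin n} : Kv (1 : ↥(seminormalD (U i) (s i))) = 0 := by
  rw [Kv]
  apply Finset.sum_eq_zero
  intro j _
  rfl

lemma Wv_mul (x y : Fm G U s) : Wv iota (x * y) = Wv iota x + Wv iota y := by
  classical
  rw [Wv, Wv, Wv]
  have h1 : Multiplicative.toAdd (x * y).1 =
      Multiplicative.toAdd x.1 + Multiplicative.toAdd y.1 := rfl
  rw [h1, Multiset.card_add, Multiset.count_add]
  have h2 : ∑ i, wtF iota i * Kv ((x * y).2 i) =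
      ∑ i, wtF iota i * Kv (x.2 i) + ∑ i, wtF iota i * Kv (y.2 i) := by
    rw [← Finset.sum_add_distrib]
    apply Finset.sum_congr rfl
    intro i _
    have : (x * y).2 i = x.2 i * y.2 i := rfl
    rw [this, Kv_mul]
    ring
  rw [h2]
  ring

lemma Wv_one : Wv iota (1 : Fm G U s) = 0 := by
  rw [Wv]
  have h1 : Multiplicative.toAdd (1 : Fm G U s).1 = 0 := rfl
  rw [h1]
  simp [Kv_one]

lemma D_eq_one_of_Kv (hs : ∀ i, 1 ≤ s i) {i : Fin n} {d : ↥(seminormalD (U i) (s i))}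
    (hK : Kv d = 0) : d = 1 := by
  rcases d.2 with h1 | h1
  · exact Subtype.ext h1
  · exfalso
    have h2 := Finset.sum_eq_zero_iff.mp hK ⟨0, hs i⟩ (Finset.mem_univ _)
    have := h1 ⟨0, hs i⟩
    omega

lemma eq_one_of_Wv_eq_zero (hs : ∀ i, 1 ≤ s i) {x : ↥(TBlock G U s iota)}
    (hW : Wv iota x.val = 0) : x = 1 := by
  rw [Wv] at hW
  have h1 : Multiset.card (Multiplicative.toAdd x.val.1) = 0 ∧
      ∑ i, wtF iota i * Kv (x.val.2 i) = 0 := by omega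
  have h2 : ∀ i, Kv (x.val.2 i) = 0 := by
    intro i
    have h3 := Finset.sum_eq_zero_iff.mp h1.2 i (Finset.mem_univ i)
    have h4 := wtF_pos (iota := iota) i
    rcases Nat.mul_eq_zero.1 h3 with h | h
    · omega
    · exact h
  apply Subtype.ext
  apply Prod.ext
  · exact Multiplicative.toAdd.injective (Multiset.card_eq_zero.1 h1.1)
  · exact funext fun i => D_eq_one_of_Kv hs (h2 i)

lemma Kv_mulSingle_self {i : Fin n} (c : ↥(seminormalD (U i) (s i))) :
    Kv ((Pi.mulSingle i c : Tm U s) i) = Kv c := by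
  rw [Pi.mulSingle_eq_same]

lemma Wv_fst (m : Multiset G) :
    Wv iota ((Multiplicative.ofAdd m, 1) : Fm G U s) =
      Multiset.card m + Multiset.count 0 m := by
  rw [Wv]
  simp [Kv_one]

lemma Wv_single (i : Fin n) (c : ↥(seminormalD (U i) (s i))) :
    Wv iota ((1, Pi.mulSingle i c) : Fm G U s) = wtF iota i * Kv c := by
  rw [Wv]
  have h1 : Multiplicative.toAdd ((1, Pi.mulSingle i c) : Fm G U s).1 = 0 := rfl
  rw [h1]
  simp only [Multiset.card_zero, Multiset.count_zero, zero_add]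
  rw [Finset.sum_eq_single i]
  · rw [Pi.mulSingle_eq_same]
  · intro i' _ hi'
    rw [Pi.mulSingle_eq_of_ne hi', Kv_one, mul_zero]
  · intro h
    exact absurd (Finset.mem_univ i) h

end Card2D
section Card2E
set_option linter.unusedSectionVars false

variable {G : Type*} [AddCommGroup G] [Fintype G] {n : ℕ} {U : Fin n → Type*}
  [∀ i, CommGroup (U i)] {s : Fin n → ℕ} {iota : Tm U s →* Multiplicative G}

lemma iota_single (hs : ∀ i, 1 ≤ s i) (hs1 : ∀ i, s i = 1)
    (hu : ∀ (i : Fin n) (ε : U i), iota (tE i ε (fun _ => 1) (fun _ => le_refl 1)) =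
      iota (tE i 1 (fun _ => 1) (fun _ => le_refl 1)))
    (i : Fin n) (d : ↥(seminormalD (U i) (s i))) :
    iota (Pi.mulSingle i d) =
      (iota (tE i 1 (fun _ => 1) (fun _ => le_refl 1))) ^ (Kv d) := by
  rcases d.2 with h1 | h1
  · have hd : d = 1 := Subtype.ext h1
    rw [hd]
    have h2 : (Pi.mulSingle i (1 : ↥(seminormalD (U i) (s i))) : Tm U s) = 1 :=
      Pi.mulSingle_one i
    rw [h2, map_one, Kv_one, pow_zero]
  · have claim : ∀ (k : ℕ) (ε : U i),
        iota (tE i ε (fun _ => k + 1) (fun _ => Nat.le_add_left 1 k)) =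
        (iota (tE i 1 (fun _ => 1) (fun _ => le_refl 1))) ^ (k + 1) := by
      intro k
      induction k with
      | zero => intro ε; rw [pow_one]; exact hu i ε
      | succ k ih =>
        intro ε
        have h2 : (tE i ε (fun _ => k + 1 + 1) (fun _ => Nat.le_add_left 1 (k + 1)) : Tm U s) =
            tE i ε (fun _ => k + 1) (fun _ => Nat.le_add_left 1 k) *
            tE i 1 (fun _ => 1) (fun _ => le_refl 1) := by
          rw [tE_mul]
          exact tE_eq_tE (by simp) rfl
        rw [h2, map_mul, ih, ← pow_succ]
    have hpos : 0 < s i := hs i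
    have hjall : ∀ j : Fin (s i), j = ⟨0, hpos⟩ := by
      intro j
      have h3 := hs1 i
      have h4 := j.2
      exact Fin.ext (by omega)
    have hk1 : 1 ≤ Multiplicative.toAdd d.val.2 ⟨0, hpos⟩ := h1 ⟨0, hpos⟩
    have hKd : Kv d = Multiplicative.toAdd d.val.2 ⟨0, hpos⟩ := by
      rw [Kv]
      rw [show (Finset.univ : Finset (Fin (s i))) = {⟨0, hpos⟩} by
        ext j
        simp only [Finset.mem_univ, Finset.mem_singleton, true_iff]
        exact hjall j]
      simp
    have hd : Pi.mulSingle i d =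
        tE i d.val.1 (fun _ => Multiplicative.toAdd d.val.2 ⟨0, hpos⟩) (fun _ => hk1) := by
      rw [tE]
      apply congrArg (Pi.mulSingle i)
      apply Subtype.ext
      apply Prod.ext
      · rfl
      · show d.val.2 = Multiplicative.ofAdd (Finsupp.equivFunOnFinite.symm
          (fun _ => Multiplicative.toAdd d.val.2 ⟨0, hpos⟩))
        apply Multiplicative.toAdd.injective
        ext j
        rw [hjall j]
        simp
    have hconv : (tE i d.val.1 (fun _ => Multiplicative.toAdd d.val.2 ⟨0, hpos⟩)
        (fun _ => hk1) : Tm U s) =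
        tE i d.val.1 (fun _ => (Multiplicative.toAdd d.val.2 ⟨0, hpos⟩ - 1) + 1)
        (fun _ => Nat.le_add_left 1 _) := by
      exact tE_eq_tE rfl (funext fun _ => by omega)
    rw [hd, hconv, claim, hKd]
    rw [show Multiplicative.toAdd d.val.2 ⟨0, hpos⟩ - 1 + 1 =
      Multiplicative.toAdd d.val.2 ⟨0, hpos⟩ from by omega]

lemma iota_t (hs : ∀ i, 1 ≤ s i) (hs1 : ∀ i, s i = 1)
    (hu : ∀ (i : Fin n) (ε : U i), iota (tE i ε (fun _ => 1) (fun _ => le_refl 1)) =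
      iota (tE i 1 (fun _ => 1) (fun _ => le_refl 1)))
    (t : Tm U s) :
    iota t = ∏ i, (iota (tE i 1 (fun _ => 1) (fun _ => le_refl 1))) ^ (Kv (t i)) := by
  conv_lhs => rw [← Finset.univ_prod_mulSingle t]
  rw [map_prod]
  exact Finset.prod_congr rfl fun i _ => iota_single hs hs1 hu i (t i)

lemma msum_card {e : G} (he : e ≠ 0) (hall : ∀ x : G, x = 0 ∨ x = e) (m : Multiset G) :
    m.sum = (Multiset.count e m) • e ∧
      Multiset.card m = Multiset.count 0 m + Multiset.count e m := by
  classical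
  induction m using Multiset.induction with
  | empty => simp
  | cons a m ih =>
    rcases hall a with rfl | rfl
    · constructor
      · rw [Multiset.sum_cons, zero_add, ih.1, Multiset.count_cons_of_ne he]
      · rw [Multiset.card_cons, Multiset.count_cons_self,
          Multiset.count_cons_of_ne he, ih.2]
        omega
    · constructor
      · rw [Multiset.sum_cons, ih.1, Multiset.count_cons_self, succ_nsmul]
        abel
      · rw [Multiset.card_cons, Multiset.count_cons_self,
          Multiset.count_cons_of_ne (Ne.symm he), ih.2]
        omega

lemma pow_ofAdd_e_even {e : G} (he : e ≠ 0) (he2 : e + e = 0) {N : ℕ}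
    (hN : (Multiplicative.ofAdd e) ^ N = 1) : N % 2 = 0 := by
  rcases Nat.even_or_odd N with h | h
  · exact Nat.even_iff.1 h
  · exfalso
    obtain ⟨k, hk⟩ := h
    have h2 : (Multiplicative.ofAdd e) ^ (2 : ℕ) = 1 := by
      rw [pow_two, ← ofAdd_add, he2]
      rfl
    rw [hk, pow_add, pow_mul, h2, one_pow, one_mul, pow_one] at hN
    exact ofAdd_e_ne_one he hN

lemma W_even (hs : ∀ i, 1 ≤ s i) (hs1 : ∀ i, s i = 1)
    (hu : ∀ (i : Fin n) (ε : U i), iota (tE i ε (fun _ => 1) (fun _ => le_refl 1)) =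
      iota (tE i 1 (fun _ => 1) (fun _ => le_refl 1)))
    {e : G} (he : e ≠ 0) (he2 : e + e = 0) (hall : ∀ x : G, x = 0 ∨ x = e)
    (x : ↥(TBlock G U s iota)) : Wv iota x.val % 2 = 0 := by
  classical
  have hmem := MonoidHom.mem_mker.1 x.2
  rw [phi_apply] at hmem
  have hsum := (msum_card he hall (Multiplicative.toAdd x.val.1)).1
  have hcard := (msum_card he hall (Multiplicative.toAdd x.val.1)).2
  rw [iota_t hs hs1 hu] at hmem
  have hfac : ∀ i : Fin n,
      (iota (tE i 1 (fun _ => 1) (fun _ => le_refl 1))) ^ (Kv (x.val.2 i)) =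
      (Multiplicative.ofAdd e) ^ ((if wtF iota i = 1 then 1 else 0) * Kv (x.val.2 i)) := by
    intro i
    rcases mult_two_cases hall (iota (tE i 1 (fun _ => 1) (fun _ => le_refl 1))) with h | h
    · have hw : wtF iota i = 2 := by rw [wtF, if_pos h]
      rw [h, one_pow, hw]
      norm_num
    · have hw : wtF iota i = 1 := by
        rw [wtF, if_neg (by rw [h]; exact ofAdd_e_ne_one he)]
      rw [h, hw, if_pos rfl, one_mul]
  rw [Finset.prod_congr rfl (fun i _ => hfac i)] at hmem
  rw [Finset.prod_pow_eq_pow_sum] at hmem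
  have hof : Multiplicative.ofAdd (Multiset.sum (Multiplicative.toAdd x.val.1)) =
      (Multiplicative.ofAdd e) ^ (Multiset.count e (Multiplicative.toAdd x.val.1)) := by
    rw [hsum]
    exact ofAdd_nsmul _ _
  rw [hof, ← pow_add] at hmem
  have hN := pow_ofAdd_e_even he he2 hmem
  have hsplit : ∀ i : Fin n, wtF iota i * Kv (x.val.2 i) +
      (if wtF iota i = 1 then 1 else 0) * Kv (x.val.2 i) = 2 * Kv (x.val.2 i) := by
    intro i
    have hw12 : wtF iota i = 1 ∨ wtF iota i = 2 := by
      rw [wtF]; split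
      · right; rfl
      · left; rfl
    rcases hw12 with h | h
    · rw [h, if_pos rfl]; omega
    · rw [h, if_neg (by omega)]; omega
  have hsum2 : ∑ i, wtF iota i * Kv (x.val.2 i) +
      ∑ i, (if wtF iota i = 1 then 1 else 0) * Kv (x.val.2 i) =
      2 * ∑ i, Kv (x.val.2 i) := by
    rw [← Finset.sum_add_distrib, Finset.mul_sum]
    exact Finset.sum_congr rfl fun i _ => hsplit i
  rw [Wv]
  omega

end Card2E
section Card2F
set_option linter.unusedSectionVars false

variable {G : Type*} [AddCommGroup G] [Fintype G] {n : ℕ} {U : Fin n → Type*}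
  [∀ i, CommGroup (U i)] {s : Fin n → ℕ} {iota : Tm U s →* Multiplicative G}

lemma b_split (x : ↥(TBlock G U s iota)) (yv zv : Fm G U s) (hmul : yv * zv = x.val)
    (hy : TBlockPhi G U s iota yv = 1) :
    ∃ y z : ↥(TBlock G U s iota), y * z = x ∧ y.val = yv ∧ z.val = zv := by
  have hx := MonoidHom.mem_mker.1 x.2
  have hz : TBlockPhi G U s iota zv = 1 := by
    have h1 : TBlockPhi G U s iota (yv * zv) = 1 := by rw [hmul]; exact hx
    rw [map_mul, hy, one_mul] at h1
    exact h1
  exact ⟨⟨yv, MonoidHom.mem_mker.2 hy⟩, ⟨zv, MonoidHom.mem_mker.2 hz⟩,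
    Subtype.ext hmul, rfl, rfl⟩

lemma Kv_eq_at0 (hs : ∀ i, 1 ≤ s i) (hs1 : ∀ i, s i = 1) {i : Fin n}
    (d : ↥(seminormalD (U i) (s i))) :
    Kv d = Multiplicative.toAdd d.val.2 ⟨0, hs i⟩ := by
  have hjall : ∀ j : Fin (s i), j = ⟨0, hs i⟩ := by
    intro j
    have h3 := hs1 i
    have h4 := j.2
    exact Fin.ext (by omega)
  rw [Kv]
  rw [show (Finset.univ : Finset (Fin (s i))) = {⟨0, hs i⟩} by
    ext j
    simp only [Finset.mem_univ, Finset.mem_singleton, true_iff]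
    exact hjall j]
  simp

lemma Wv_pair (m : Multiset G) (i : Fin n) (c : ↥(seminormalD (U i) (s i))) :
    Wv iota ((Multiplicative.ofAdd m, Pi.mulSingle i c) : Fm G U s) =
      Multiset.card m + Multiset.count 0 m + wtF iota i * Kv c := by
  rw [Wv]
  have h1 : Multiplicative.toAdd ((Multiplicative.ofAdd m, Pi.mulSingle i c) : Fm G U s).1
      = m := rfl
  rw [h1]
  congr 1
  show (∑ i', wtF iota i' * Kv ((Pi.mulSingle i c : Tm U s) i')) = wtF iota i * Kv c
  rw [Finset.sum_eq_single i]
  · rw [Pi.mulSingle_eq_same]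
  · intro i' _ hi'
    rw [Pi.mulSingle_eq_of_ne hi', Kv_one, mul_zero]
  · intro h
    exact absurd (Finset.mem_univ i) h

lemma takeCoord (hs : ∀ i, 1 ≤ s i) (hs1 : ∀ i, s i = 1) (i : Fin n) (d : ℕ) (hd : 1 ≤ d)
    (t : Tm U s) (hK : d ≤ Kv (t i)) :
    ∃ (c : ↥(seminormalD (U i) (s i))) (t' : Tm U s),
      Pi.mulSingle i c * t' = t ∧ Kv c = d ∧
      ∀ i', Kv (t' i') = Kv (t i') - (if i' = i then d else 0) := by
  rcases eq_or_lt_of_le hK with heq | hlt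
  · -- take the whole coordinate
    refine ⟨t i, Function.update t i 1, ?_, heq.symm, ?_⟩
    · funext i'
      rw [Pi.mul_apply]
      by_cases h : i' = i
      · subst h
        rw [Pi.mulSingle_eq_same, Function.update_self, mul_one]
      · rw [Pi.mulSingle_eq_of_ne h, Function.update_of_ne h, one_mul]
    · intro i'
      by_cases h : i' = i
      · subst h
        rw [Function.update_self, Kv_one, if_pos rfl]
        omega
      · rw [Function.update_of_ne h, if_neg h]
        omega
  · -- take a part, leaving exponent Kv (t i) - d ≥ 1
    have hk0 := Kv_eq_at0 hs hs1 (t i)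
    have hrem : 1 ≤ Kv (t i) - d := by omega
    refine ⟨dE i 1 (fun _ => d) (fun _ => hd),
      Function.update t i (⟨((t i).val.1, Multiplicative.ofAdd
        (Finsupp.equivFunOnFinite.symm (fun _ => Kv (t i) - d))),
        Or.inr (fun j => by simpa using hrem)⟩ : ↥(seminormalD (U i) (s i))), ?_, ?_, ?_⟩
    · funext i'
      rw [Pi.mul_apply]
      by_cases h : i' = i
      · subst h
        rw [Pi.mulSingle_eq_same, Function.update_self]
        apply Subtype.ext
        apply Prod.ext
        · show (1 : U i') * (t i').val.1 = (t i').val.1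
          rw [one_mul]
        · show Multiplicative.ofAdd (Finsupp.equivFunOnFinite.symm (fun _ => d)) *
            Multiplicative.ofAdd (Finsupp.equivFunOnFinite.symm (fun _ => Kv (t i') - d)) =
            (t i').val.2
          rw [← ofAdd_add]
          apply Multiplicative.toAdd.injective
          ext j
          have hjall : ∀ j' : Fin (s i'), j' = ⟨0, hs i'⟩ := by
            intro j'
            have h3 := hs1 i'
            have h4 := j'.2
            exact Fin.ext (by omega)
          rw [hjall j]
          simp only [toAdd_ofAdd, Finsupp.add_apply]
          simp only [Finsupp.coe_equivFunOnFinite_symm]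
          rw [hk0] at hlt ⊢
          omega
      · rw [Pi.mulSingle_eq_of_ne h, Function.update_of_ne h, one_mul]
    · rw [Kv_eq_at0 hs hs1]
      show Multiplicative.toAdd (Multiplicative.ofAdd
        (Finsupp.equivFunOnFinite.symm (fun _ => d))) ((⟨0, hs i⟩ : Fin (s i))) = d
      simp
    · intro i'
      by_cases h : i' = i
      · subst h
        rw [if_pos rfl, Kv_eq_at0 hs hs1, Function.update_self]
        show Multiplicative.toAdd (Multiplicative.ofAdd
          (Finsupp.equivFunOnFinite.symm (fun _ => Kv (t i') - d)))
          ((⟨0, hs i'⟩ : Fin (s i'))) = Kv (t i') - d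
        simp
      · rw [Function.update_of_ne h, if_neg h]
        omega

end Card2F
section Card2G
set_option linter.unusedSectionVars false

variable {G : Type*} [AddCommGroup G] [Fintype G] {n : ℕ} {U : Fin n → Type*}
  [∀ i, CommGroup (U i)] {s : Fin n → ℕ} {iota : Tm U s →* Multiplicative G}

lemma exists_split (hs : ∀ i, 1 ≤ s i) (hs1 : ∀ i, s i = 1)
    (hu : ∀ (i : Fin n) (ε : U i), iota (tE i ε (fun _ => 1) (fun _ => le_refl 1)) =
      iota (tE i 1 (fun _ => 1) (fun _ => le_refl 1)))
    {e : G} (he : e ≠ 0) (he2 : e + e = 0) (hall : ∀ x : G, x = 0 ∨ x = e)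
    (x : ↥(TBlock G U s iota)) (hW : 4 ≤ Wv iota x.val) :
    ∃ y z : ↥(TBlock G U s iota), y * z = x ∧ y ≠ 1 ∧ z ≠ 1 := by
  classical
  have conclude : ∀ yv zv : Fm G U s, yv * zv = x.val →
      TBlockPhi G U s iota yv = 1 → Wv iota yv = 2 →
      ∃ y z : ↥(TBlock G U s iota), y * z = x ∧ y ≠ 1 ∧ z ≠ 1 := by
    intro yv zv hmul hy hW2
    obtain ⟨y, z, hyz, hyv, hzv⟩ := b_split x yv zv hmul hy
    have hWsum : Wv iota yv + Wv iota zv = Wv iota x.val := by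
      rw [← Wv_mul, hmul]
    refine ⟨y, z, hyz, ?_, ?_⟩
    · intro hcon
      rw [hcon] at hyv
      have h0 : Wv iota yv = 0 := by rw [← hyv]; exact Wv_one
      omega
    · intro hcon
      rw [hcon] at hzv
      have h0 : Wv iota zv = 0 := by rw [← hzv]; exact Wv_one
      omega
  by_cases h1 : 1 ≤ Multiset.count (0 : G) (Multiplicative.toAdd x.val.1)
  · have hle : ({(0 : G)} : Multiset G) ≤ Multiplicative.toAdd x.val.1 :=
      Multiset.singleton_le.2 (Multiset.count_pos.1 (by omega))
    apply conclude (Multiplicative.ofAdd {(0 : G)}, 1)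
      (Multiplicative.ofAdd (Multiplicative.toAdd x.val.1 - {(0 : G)}), x.val.2)
    · apply Prod.ext
      · show Multiplicative.ofAdd
          (({(0 : G)}) + (Multiplicative.toAdd x.val.1 - {(0 : G)})) =
          Multiplicative.ofAdd (Multiplicative.toAdd x.val.1)
        exact congrArg _ (add_tsub_cancel_of_le hle)
      · show (1 : Tm U s) * x.val.2 = x.val.2
        rw [one_mul]
    · rw [phi_apply]
      show Multiplicative.ofAdd (Multiset.sum {(0 : G)}) * iota 1 = 1
      rw [Multiset.sum_singleton, map_one, mul_one]
      rfl
    · rw [Wv_fst]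
      simp
  by_cases h2 : 2 ≤ Multiset.count e (Multiplicative.toAdd x.val.1)
  · have hc0 : Multiset.count (0 : G) ({e, e} : Multiset G) = 0 := by
      rw [Multiset.count_eq_zero]
      intro hm
      simp only [Multiset.insert_eq_cons, Multiset.mem_cons, Multiset.mem_singleton] at hm
      rcases hm with hm | hm <;> exact he hm.symm
    have hce : Multiset.count e ({e, e} : Multiset G) = 2 := by
      rw [show ({e, e} : Multiset G) = e ::ₘ {e} from rfl, Multiset.count_cons_self,
        Multiset.count_singleton, if_pos rfl]
    have hle : ({e, e} : Multiset G) ≤ Multiplicative.toAdd x.val.1 := by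
      rw [Multiset.le_iff_count]
      intro a
      rcases hall a with rfl | rfl
      · rw [hc0]; omega
      · rw [hce]; exact h2
    apply conclude (Multiplicative.ofAdd {e, e}, 1)
      (Multiplicative.ofAdd (Multiplicative.toAdd x.val.1 - {e, e}), x.val.2)
    · apply Prod.ext
      · show Multiplicative.ofAdd
          (({e, e} : Multiset G) + (Multiplicative.toAdd x.val.1 - {e, e})) =
          Multiplicative.ofAdd (Multiplicative.toAdd x.val.1)
        exact congrArg _ (add_tsub_cancel_of_le hle)
      · show (1 : Tm U s) * x.val.2 = x.val.2
        rw [one_mul]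
    · rw [phi_apply]
      show Multiplicative.ofAdd (Multiset.sum {e, e}) * iota 1 = 1
      rw [show Multiset.sum ({e, e} : Multiset G) = 0 from by simp [he2], map_one, mul_one]
      rfl
    · rw [Wv_fst, hc0]
      rfl
  by_cases h3 : ∃ i, wtF iota i = 2 ∧ 1 ≤ Kv (x.val.2 i)
  · obtain ⟨i, hw, hK⟩ := h3
    obtain ⟨c, t', hmt, hKc, hKt'⟩ := takeCoord hs hs1 i 1 (le_refl 1) x.val.2 hK
    have hg : iota (tE i 1 (fun _ => 1) (fun _ => le_refl 1)) = 1 := by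
      by_contra hcon
      rw [wtF, if_neg hcon] at hw
      omega
    apply conclude (Multiplicative.ofAdd 0, Pi.mulSingle i c) (x.val.1, t')
    · apply Prod.ext
      · show Multiplicative.ofAdd ((0 : Multiset G) + Multiplicative.toAdd x.val.1) =
          Multiplicative.ofAdd (Multiplicative.toAdd x.val.1)
        exact congrArg _ (zero_add _)
      · exact hmt
    · rw [phi_apply]
      show Multiplicative.ofAdd (Multiset.sum (0 : Multiset G)) *
        iota (Pi.mulSingle i c) = 1
      rw [Multiset.sum_zero, iota_single hs hs1 hu i c, hKc, pow_one, hg]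
      rw [ofAdd_zero, one_mul]
    · rw [Wv_pair, hKc, hw]
      rfl
  by_cases h4 : 1 ≤ Multiset.count e (Multiplicative.toAdd x.val.1) ∧
      ∃ i, wtF iota i = 1 ∧ 1 ≤ Kv (x.val.2 i)
  · obtain ⟨hce, i, hw, hK⟩ := h4
    obtain ⟨c, t', hmt, hKc, hKt'⟩ := takeCoord hs hs1 i 1 (le_refl 1) x.val.2 hK
    have hgne : iota (tE i 1 (fun _ => 1) (fun _ => le_refl 1)) ≠ 1 := by
      intro hcon
      rw [wtF, if_pos hcon] at hw
      omega
    have hg := (mult_two_cases hall _).resolve_left hgne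
    have hle : ({e} : Multiset G) ≤ Multiplicative.toAdd x.val.1 :=
      Multiset.singleton_le.2 (Multiset.count_pos.1 (by omega))
    apply conclude (Multiplicative.ofAdd {e}, Pi.mulSingle i c)
      (Multiplicative.ofAdd (Multiplicative.toAdd x.val.1 - {e}), t')
    · apply Prod.ext
      · show Multiplicative.ofAdd
          (({e} : Multiset G) + (Multiplicative.toAdd x.val.1 - {e})) =
          Multiplicative.ofAdd (Multiplicative.toAdd x.val.1)
        exact congrArg _ (add_tsub_cancel_of_le hle)
      · exact hmt
    · rw [phi_apply]
      show Multiplicative.ofAdd (Multiset.sum {e}) * iota (Pi.mulSingle i c) = 1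
      rw [Multiset.sum_singleton, iota_single hs hs1 hu i c, hKc, pow_one, hg,
        ← ofAdd_add, he2]
      rfl
    · rw [Wv_pair, hKc, hw]
      have hc0 : Multiset.count (0 : G) ({e} : Multiset G) = 0 := by
        rw [Multiset.count_eq_zero]
        intro hm
        rw [Multiset.mem_singleton] at hm
        exact he hm.symm
      rw [hc0]
      rfl
  by_cases h5 : ∃ i, wtF iota i = 1 ∧ 2 ≤ Kv (x.val.2 i)
  · obtain ⟨i, hw, hK⟩ := h5
    obtain ⟨c, t', hmt, hKc, hKt'⟩ := takeCoord hs hs1 i 2 (by omega) x.val.2 hK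
    have hgne : iota (tE i 1 (fun _ => 1) (fun _ => le_refl 1)) ≠ 1 := by
      intro hcon
      rw [wtF, if_pos hcon] at hw
      omega
    have hg := (mult_two_cases hall _).resolve_left hgne
    apply conclude (Multiplicative.ofAdd 0, Pi.mulSingle i c) (x.val.1, t')
    · apply Prod.ext
      · show Multiplicative.ofAdd ((0 : Multiset G) + Multiplicative.toAdd x.val.1) =
          Multiplicative.ofAdd (Multiplicative.toAdd x.val.1)
        exact congrArg _ (zero_add _)
      · exact hmt
    · rw [phi_apply]
      show Multiplicative.ofAdd (Multiset.sum (0 : Multiset G)) *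
        iota (Pi.mulSingle i c) = 1
      rw [Multiset.sum_zero, iota_single hs hs1 hu i c, hKc, hg, pow_two,
        ← ofAdd_add, he2, ← ofAdd_add, zero_add, ofAdd_zero]
    · rw [Wv_pair, hKc, hw]
      rfl
  by_cases h6 : ∃ i i', i ≠ i' ∧ (wtF iota i = 1 ∧ 1 ≤ Kv (x.val.2 i)) ∧
      (wtF iota i' = 1 ∧ 1 ≤ Kv (x.val.2 i'))
  · obtain ⟨i, i', hne, ⟨hw, hK⟩, ⟨hw', hK'⟩⟩ := h6
    obtain ⟨c, t1, hm1, hKc, hKt1⟩ := takeCoord hs hs1 i 1 (le_refl 1) x.val.2 hK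
    have hK1' : 1 ≤ Kv (t1 i') := by
      have := hKt1 i'
      rw [if_neg (Ne.symm hne)] at this
      omega
    obtain ⟨c', t2, hm2, hKc', hKt2⟩ := takeCoord hs hs1 i' 1 (le_refl 1) t1 hK1'
    have hgne : iota (tE i 1 (fun _ => 1) (fun _ => le_refl 1)) ≠ 1 := by
      intro hcon
      rw [wtF, if_pos hcon] at hw
      omega
    have hg := (mult_two_cases hall _).resolve_left hgne
    have hgne' : iota (tE i' 1 (fun _ => 1) (fun _ => le_refl 1)) ≠ 1 := by
      intro hcon
      rw [wtF, if_pos hcon] at hw'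
      omega
    have hg' := (mult_two_cases hall _).resolve_left hgne'
    apply conclude (Multiplicative.ofAdd 0, Pi.mulSingle i c * Pi.mulSingle i' c')
      (x.val.1, t2)
    · apply Prod.ext
      · show Multiplicative.ofAdd ((0 : Multiset G) + Multiplicative.toAdd x.val.1) =
          Multiplicative.ofAdd (Multiplicative.toAdd x.val.1)
        exact congrArg _ (zero_add _)
      · show (Pi.mulSingle i c * Pi.mulSingle i' c') * t2 = x.val.2
        rw [mul_assoc, hm2, hm1]
    · rw [phi_apply]
      show Multiplicative.ofAdd (Multiset.sum (0 : Multiset G)) *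
        iota (Pi.mulSingle i c * Pi.mulSingle i' c') = 1
      rw [Multiset.sum_zero, map_mul, iota_single hs hs1 hu i c,
        iota_single hs hs1 hu i' c', hKc, hKc', pow_one, pow_one, hg, hg',
        ← ofAdd_add, he2, ← ofAdd_add, zero_add, ofAdd_zero]
    · have hsplit : ((Multiplicative.ofAdd 0,
          Pi.mulSingle i c * Pi.mulSingle i' c') : Fm G U s) =
          (Multiplicative.ofAdd 0, Pi.mulSingle i c) *
          (Multiplicative.ofAdd 0, Pi.mulSingle i' c') := rfl
      rw [hsplit, Wv_mul, Wv_pair, Wv_pair, hKc, hKc', hw, hw']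
      rfl
  -- exhaustiveness: derive a contradiction
  exfalso
  push_neg at h1 h2 h3 h4 h5 h6
  have hc00 : Multiset.count (0 : G) (Multiplicative.toAdd x.val.1) = 0 := by omega
  have hcard := (msum_card he hall (Multiplicative.toAdd x.val.1)).2
  have hterm : ∀ i, wtF iota i * Kv (x.val.2 i) =
      (if wtF iota i = 1 then Kv (x.val.2 i) else 0) := by
    intro i
    by_cases h : wtF iota i = 1
    · rw [h, one_mul, if_pos rfl]
    · have hw2 : wtF iota i = 2 := by
        have : wtF iota i = 1 ∨ wtF iota i = 2 := by
          rw [wtF]; split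
          · right; rfl
          · left; rfl
        tauto
      have hK0 : Kv (x.val.2 i) = 0 := by
        have := h3 i hw2
        omega
      rw [hK0, if_neg h, mul_zero]
  have hWsum : Wv iota x.val = Multiset.card (Multiplicative.toAdd x.val.1) +
      Multiset.count 0 (Multiplicative.toAdd x.val.1) +
      ∑ i, (if wtF iota i = 1 then Kv (x.val.2 i) else 0) := by
    rw [Wv]
    congr 1
    exact Finset.sum_congr rfl fun i _ => hterm i
  have hM : 3 ≤ ∑ i, (if wtF iota i = 1 then Kv (x.val.2 i) else 0) := by omega
  have hex1 : ∃ i, 1 ≤ (if wtF iota i = 1 then Kv (x.val.2 i) else 0) := by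
    by_contra hcon
    push_neg at hcon
    have : ∑ i, (if wtF iota i = 1 then Kv (x.val.2 i) else 0) = 0 :=
      Finset.sum_eq_zero fun i _ => by have := hcon i; omega
    omega
  obtain ⟨i, hi⟩ := hex1
  have hwi : wtF iota i = 1 ∧ 1 ≤ Kv (x.val.2 i) := by
    by_cases h : wtF iota i = 1
    · rw [if_pos h] at hi; exact ⟨h, hi⟩
    · rw [if_neg h] at hi; omega
  have hce0 : Multiset.count e (Multiplicative.toAdd x.val.1) = 0 := by
    by_contra hcon
    have := h4 (by omega) i hwi.1
    omega
  have hM4 : 4 ≤ ∑ i, (if wtF iota i = 1 then Kv (x.val.2 i) else 0) := by omega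
  have hterm1 : ∀ i', (if wtF iota i' = 1 then Kv (x.val.2 i') else 0) ≤ 1 := by
    intro i'
    by_cases h : wtF iota i' = 1
    · rw [if_pos h]
      have := h5 i' h
      omega
    · rw [if_neg h]; omega
  have herase : 1 ≤ ∑ i' ∈ Finset.univ.erase i,
      (if wtF iota i' = 1 then Kv (x.val.2 i') else 0) := by
    have h7 := Finset.add_sum_erase Finset.univ
      (fun i' => if wtF iota i' = 1 then Kv (x.val.2 i') else 0) (Finset.mem_univ i)
    have h8 := hterm1 i
    omega
  have hex2 : ∃ i' ∈ Finset.univ.erase i,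
      1 ≤ (if wtF iota i' = 1 then Kv (x.val.2 i') else 0) := by
    by_contra hcon
    push_neg at hcon
    have : ∑ i' ∈ Finset.univ.erase i,
        (if wtF iota i' = 1 then Kv (x.val.2 i') else 0) = 0 :=
      Finset.sum_eq_zero fun i' hi' => by have := hcon i' hi'; omega
    omega
  obtain ⟨i', hi'mem, hi'⟩ := hex2
  have hi'ne : i' ≠ i := (Finset.mem_erase.1 hi'mem).1
  have hwi' : wtF iota i' = 1 ∧ 1 ≤ Kv (x.val.2 i') := by
    by_cases h : wtF iota i' = 1
    · rw [if_pos h] at hi'; exact ⟨h, hi'⟩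
    · rw [if_neg h] at hi'; omega
  have := h6 i i' (Ne.symm hi'ne) hwi hwi'.1
  omega

lemma W_irred (hs : ∀ i, 1 ≤ s i) (hs1 : ∀ i, s i = 1)
    (hu : ∀ (i : Fin n) (ε : U i), iota (tE i ε (fun _ => 1) (fun _ => le_refl 1)) =
      iota (tE i 1 (fun _ => 1) (fun _ => le_refl 1)))
    {e : G} (he : e ≠ 0) (he2 : e + e = 0) (hall : ∀ x : G, x = 0 ∨ x = e)
    (x : ↥(TBlock G U s iota)) (hirr : Irreducible (Associates.mk x)) :
    Wv iota x.val = 2 := by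
  have hx1 : x ≠ 1 := by
    intro hcon
    apply hirr.not_isUnit
    rw [hcon, Associates.mk_one]
    exact isUnit_one
  have hW0 : Wv iota x.val ≠ 0 := fun h => hx1 (eq_one_of_Wv_eq_zero hs h)
  have hWe := W_even hs hs1 hu he he2 hall x
  by_contra hW2
  have hW4 : 4 ≤ Wv iota x.val := by omega
  obtain ⟨y, z, hyz, hy1, hz1⟩ := exists_split hs hs1 hu he he2 hall x hW4
  have hun := hirr.isUnit_or_isUnit (a := Associates.mk y) (b := Associates.mk z)
    (by rw [Associates.mk_mul_mk, hyz])
  rcases hun with h | h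
  · exact hy1 ((B_isUnit_iff hs).1 (Associates.isUnit_mk.1 h))
  · exact hz1 ((B_isUnit_iff hs).1 (Associates.isUnit_mk.1 h))

lemma branchC (hs : ∀ i, 1 ≤ s i) (hs1 : ∀ i, s i = 1)
    (hu : ∀ (i : Fin n) (ε : U i), iota (tE i ε (fun _ => 1) (fun _ => le_refl 1)) =
      iota (tE i 1 (fun _ => 1) (fun _ => le_refl 1)))
    {e : G} (he : e ≠ 0) (he2 : e + e = 0) (hall : ∀ x : G, x = 0 ∨ x = e) :
    DeltaMonoid ↥(TBlock G U s iota) = ∅ := by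
  have hlen : ∀ (z : Multiset (Associates ↥(TBlock G U s iota)))
      (a : ↥(TBlock G U s iota)), (∀ u ∈ z, Irreducible u) → z.prod = Associates.mk a →
      2 * Multiset.card z = Wv iota a.val := by
    intro z
    induction z using Multiset.induction with
    | empty =>
      intro a _ hprod
      have h1 : Associates.mk a = 1 := by rw [← hprod]; rfl
      have ha : a = 1 := (B_isUnit_iff hs).1 (Associates.mk_eq_one.1 h1)
      rw [ha]
      simp only [Multiset.card_zero, mul_zero]
      exact (Wv_one).symm
    | cons u z ih =>
      intro a hirr hprod
      obtain ⟨b, rfl⟩ := Associates.mk_surjective u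
      obtain ⟨c, hc⟩ := Associates.mk_surjective z.prod
      have hprod2 : Associates.mk (b * c) = Associates.mk a := by
        rw [← Associates.mk_mul_mk, hc]
        rw [Multiset.prod_cons] at hprod
        exact hprod
      have hbc : b * c = a := by
        obtain ⟨uu, huu⟩ := Associates.mk_eq_mk_iff_associated.1 hprod2
        have huu1 : (uu : ↥(TBlock G U s iota)) = 1 := (B_isUnit_iff hs).1 uu.isUnit
        rw [huu1, mul_one] at huu
        exact huu
      have hWb := W_irred hs hs1 hu he he2 hall b (hirr _ (Multiset.mem_cons_self _ _))
      have hWc := ih c (fun u hu' => hirr u (Multiset.mem_cons_of_mem hu')) hc.symm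
      have hWa : Wv iota a.val = Wv iota b.val + Wv iota c.val := by
        rw [← hbc]
        exact Wv_mul _ _
      rw [Multiset.card_cons]
      omega
  apply Set.eq_empty_iff_forall_notMem.2
  intro d hd
  obtain ⟨a, ha⟩ := Set.mem_iUnion.1 hd
  obtain ⟨k, l, hk, hl, hkl, _, _⟩ := ha
  obtain ⟨z, hz, hzc⟩ := hk
  obtain ⟨z', hz', hzc'⟩ := hl
  have e1 := hlen z a hz.1 hz.2
  have e2 := hlen z' a hz'.1 hz'.2
  omega

end Card2G
/-- Theorem 1.1 (for T-block monoids, Setting (S)): either `Δ(B) = ∅` or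
`min Δ(B) = 1`. -/
theorem tblock_delta_empty_or_min_one
    {G : Type*} [AddCommGroup G] [Fintype G] (hG : 1 < Fintype.card G)
    {n : ℕ} (hn : 0 < n) (U : Fin n → Type*) [∀ i, CommGroup (U i)]
    (s : Fin n → ℕ) (hs : ∀ i, 1 ≤ s i)
    (iota : Tm U s →* Multiplicative G) :
    DeltaMonoid ↥(TBlock G U s iota) = ∅ ∨
      sInf (DeltaMonoid ↥(TBlock G U s iota)) = 1 := by
  rcases Nat.lt_or_ge (Fintype.card G) 3 with hlt | hge
  · -- |G| = 2
    have hG2 : Fintype.card G = 2 := by omega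
    obtain ⟨e, he, he2, hall⟩ := card2_struct hG2
    by_cases hs2 : ∃ ν, 2 ≤ s ν
    · obtain ⟨ν, hν⟩ := hs2
      exact Or.inr (case_s2 hs he he2 hall ν hν)
    · push_neg at hs2
      have hs1 : ∀ i, s i = 1 := fun i => by
        have h1 := hs i
        have h2 := hs2 i
        omega
      by_cases hun : ∃ (ν : Fin n) (ε : U ν),
          iota (tE ν ε (fun _ => 1) (fun _ => le_refl 1)) ≠
          iota (tE ν 1 (fun _ => 1) (fun _ => le_refl 1))
      · obtain ⟨ν, ε, hne⟩ := hun
        exact Or.inr (case_unit hs he he2 hall ν ε hne)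
      · push_neg at hun
        exact Or.inl (branchC hs hs1 hun he he2 hall)
  · -- |G| ≥ 3
    exact Or.inr (case_big hge hs)
end
end ArXivSeminormal
end

section
/- Assume Setting (S) with |G| = 2, say G = {0, e}, and suppose no D_ν is factorial. Let j ∈ [1,n]. (1) If s_j = 1 and a, b ∈ D_j ∩ A(B), then b = ε a for some ε ∈ D̂_j^×. (2) If s_j ≥ 2 and a ∈ D_j ∩ B with a ≠ 1, then min L_B(a) ≤ 3 in case d_j = 2, and min L_B(a) ≤ 2 otherwise. -/
namespace ArXivSeminormal

attribute [local instance] Classical.propDecidable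

noncomputable section

/-! ### Generic factorization theory in commutative monoids -/

variable {M : Type*} [CommMonoid M]

section Generic
variable {M : Type*} [CommMonoid M]

lemma irr_assoc_mk {u : M} (hu : Irreducible u) : Irreducible (Associates.mk u) := by
  constructor
  · rw [Associates.isUnit_mk]; exact hu.not_isUnit
  · rintro x y hxy
    obtain ⟨b, rfl⟩ := Associates.mk_surjective x
    obtain ⟨c, rfl⟩ := Associates.mk_surjective y
    rw [Associates.mk_mul_mk, Associates.mk_eq_mk_iff_associated] at hxy
    obtain ⟨w, hw⟩ := hxy.symm
    have hu' : u = b * (c * (w : Mˣ)) := by rw [← hw, mul_assoc]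
    rcases hu.isUnit_or_isUnit hu' with h | h
    · left; rwa [Associates.isUnit_mk]
    · right; rw [Associates.isUnit_mk]
      have h2 : IsUnit ((c * (w : Mˣ)) * ((w⁻¹ : Mˣ) : M)) := h.mul (Units.isUnit w⁻¹)
      simpa [mul_assoc] using h2

lemma one_mem_lengthSet {a : M} (ha : Irreducible a) : 1 ∈ lengthSet a := by
  refine ⟨{Associates.mk a}, ⟨?_, ?_⟩, ?_⟩ <;>
    simp [irr_assoc_mk ha]

lemma two_mem_lengthSet {a u v : M} (hu : Irreducible u) (hv : Irreducible v)
    (h : a = u * v) : 2 ∈ lengthSet a := by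
  refine ⟨{Associates.mk u, Associates.mk v}, ⟨?_, ?_⟩, ?_⟩
  · intro x hx
    rcases Multiset.mem_cons.mp hx with rfl | hx
    · exact irr_assoc_mk hu
    · rw [Multiset.mem_singleton.mp hx]; exact irr_assoc_mk hv
  · simp [h, Associates.mk_mul_mk]
  · rfl

lemma three_mem_lengthSet {a u v w : M} (hu : Irreducible u) (hv : Irreducible v)
    (hw : Irreducible w) (h : a = u * v * w) : 3 ∈ lengthSet a := by
  refine ⟨{Associates.mk u, Associates.mk v, Associates.mk w}, ⟨?_, ?_⟩, ?_⟩
  · intro x hx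
    rcases Multiset.mem_cons.mp hx with rfl | hx
    · exact irr_assoc_mk hu
    rcases Multiset.mem_cons.mp hx with rfl | hx
    · exact irr_assoc_mk hv
    · rw [Multiset.mem_singleton.mp hx]; exact irr_assoc_mk hw
  · simp [h, Associates.mk_mul_mk, mul_assoc]
  · rfl

end Generic

section GroupTwo
open Multiplicative
variable {G : Type*} [AddCommGroup G] [Fintype G]

lemma g_two (hcard : Fintype.card G = 2) {e : G} (he : e ≠ 0) (g : G) : g = 0 ∨ g = e := by
  by_contra hc
  push_neg at hc
  have hle : ({0, e, g} : Finset G).card ≤ 2 := hcard ▸ Finset.card_le_univ _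
  rw [Finset.card_insert_of_notMem (by
      intro hmem
      rcases Finset.mem_insert.mp hmem with h | h
      · exact he h.symm
      · exact hc.1 (Finset.mem_singleton.mp h).symm),
    Finset.card_insert_of_notMem (by
      intro hmem
      exact hc.2 (Finset.mem_singleton.mp hmem).symm),
    Finset.card_singleton] at hle
  omega

omit [Fintype G] in
lemma ep_ne_one {e : G} (he : e ≠ 0) : (ofAdd e : Multiplicative G) ≠ 1 := by
  simpa using he

lemma e_add_e (hcard : Fintype.card G = 2) {e : G} (he : e ≠ 0) : e + e = 0 := by
  rcases g_two hcard he (e + e) with h | h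
  · exact h
  · exfalso
    apply he
    nth_rewrite 3 [← add_zero e] at h
    exact add_left_cancel h

lemma ep_two (hcard : Fintype.card G = 2) {e : G} (he : e ≠ 0) :
    (ofAdd e : Multiplicative G) * ofAdd e = 1 := by
  rw [← ofAdd_add, e_add_e hcard he, ofAdd_zero]

lemma ep_pow_even (hcard : Fintype.card G = 2) {e : G} (he : e ≠ 0) {t : ℕ} (ht : Even t) :
    (ofAdd e : Multiplicative G) ^ t = 1 := by
  obtain ⟨c, rfl⟩ := ht
  have : c + c = 2 * c := by omega
  rw [this, pow_mul, pow_two, ep_two hcard he, one_pow]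

lemma ep_pow_odd (hcard : Fintype.card G = 2) {e : G} (he : e ≠ 0) {t : ℕ} (ht : ¬ Even t) :
    (ofAdd e : Multiplicative G) ^ t = ofAdd e := by
  obtain ⟨c, rfl⟩ := Nat.not_even_iff_odd.mp ht
  rw [pow_succ, ep_pow_even hcard he (even_two_mul c), one_mul]

lemma ep_pow_eq_one_iff (hcard : Fintype.card G = 2) {e : G} (he : e ≠ 0) {t : ℕ} :
    (ofAdd e : Multiplicative G) ^ t = 1 ↔ Even t := by
  constructor
  · intro h
    by_contra hodd
    rw [ep_pow_odd hcard he hodd] at h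
    exact ep_ne_one he h
  · exact ep_pow_even hcard he

end GroupTwo

section Setting
open Multiplicative
variable {G : Type*} [AddCommGroup G] [Fintype G]
  {n : ℕ} {U : Fin n → Type*} [∀ i, CommGroup (U i)]
  {s : Fin n → ℕ}
  (iotahat : HatTm U s →* Multiplicative G) (j : Fin n)

/-- the embedding of `D_j` into `F`. -/
def embD (d : ↥(seminormalD (U j) (s j))) : Fm G U s :=
  ((1 : FreeCM G), Pi.mulSingle j d)

lemma embD_one : embD (U := U) (s := s) (G := G) j 1 = 1 := by
  simp [embD, Prod.ext_iff]

lemma embD_mul (d₁ d₂ : ↥(seminormalD (U j) (s j))) :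
    embD (G := G) j (d₁ * d₂) = embD (G := G) j d₁ * embD (G := G) j d₂ := by
  simp [embD, Prod.ext_iff, Pi.mulSingle_mul]

lemma embedT_mulSingle (d : ↥(seminormalD (U j) (s j))) :
    embedT U s (Pi.mulSingle j d) =
      Pi.mulSingle j (d : U j × Multiplicative (Fin (s j) →₀ ℕ)) := by
  funext i
  simp only [embedT, Pi.monoidHom_apply, MonoidHom.comp_apply, Pi.evalMonoidHom_apply,
    Submonoid.coe_subtype]
  show ((Pi.mulSingle (M := fun i => ↥(seminormalD (U i) (s i))) j d i : ↥(seminormalD (U i) (s i)))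
      : U i × Multiplicative (Fin (s i) →₀ ℕ))
    = Pi.mulSingle (M := fun i => U i × Multiplicative (Fin (s i) →₀ ℕ)) j
      (d : U j × Multiplicative (Fin (s j) →₀ ℕ)) i
  by_cases h : i = j
  · subst h; simp
  · rw [Pi.mulSingle_eq_of_ne h, Pi.mulSingle_eq_of_ne h, OneMemClass.coe_one]

lemma embD_mem_iff (d : ↥(seminormalD (U j) (s j))) :
    embD (G := G) j d ∈ TBlock G U s (iotahat.comp (embedT U s)) ↔
      iotahat (Pi.mulSingle j (d : U j × Multiplicative (Fin (s j) →₀ ℕ))) = 1 := by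
  rw [TBlock, MonoidHom.mem_mker]
  show sigmaHom G (1 : FreeCM G) * iotahat (embedT U s (Pi.mulSingle j d)) = 1 ↔ _
  rw [map_one, one_mul, embedT_mulSingle]

def EF (e : G) : Finset (Fin (s j)) :=
  Finset.univ.filter fun i => classOfPrime U s iotahat j i = Multiplicative.ofAdd e

def Spar (e : G) (k : Fin (s j) → ℕ) : ℕ := ∑ i ∈ EF iotahat j e, k i

def psiHom : Multiplicative (Fin (s j) →₀ ℕ) →* Multiplicative G :=
  iotahat.comp ((MonoidHom.mulSingle (fun i => U i × Multiplicative (Fin (s i) →₀ ℕ)) j).comp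
    (MonoidHom.prod 1 (MonoidHom.id _)))

lemma psiHom_apply (x : Multiplicative (Fin (s j) →₀ ℕ)) :
    psiHom iotahat j x = iotahat (Pi.mulSingle j ((1 : U j), x)) := rfl

lemma psi_single_pow (i : Fin (s j)) (b : ℕ) :
    psiHom iotahat j (ofAdd (Finsupp.single i b)) = classOfPrime U s iotahat j i ^ b := by
  have h1 : Finsupp.single i b = b • Finsupp.single i 1 := by
    rw [Finsupp.smul_single, smul_eq_mul, mul_one]
  have h2 : (ofAdd (b • Finsupp.single i 1) : Multiplicative (Fin (s j) →₀ ℕ))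
      = (ofAdd (Finsupp.single i 1)) ^ b := rfl
  rw [h1, h2, map_pow]
  rfl

lemma psi_eq_prod (x : Fin (s j) →₀ ℕ) :
    psiHom iotahat j (ofAdd x) = ∏ i, classOfPrime U s iotahat j i ^ x i := by
  conv_lhs => rw [← Finsupp.univ_sum_single x, ofAdd_sum, map_prod]
  exact Finset.prod_congr rfl fun i _ => psi_single_pow iotahat j i (x i)

lemma prod_cp (hcard : Fintype.card G = 2) {e : G} (he : e ≠ 0) (k : Fin (s j) → ℕ) :
    ∏ i, classOfPrime U s iotahat j i ^ k i = (ofAdd e) ^ (Spar iotahat j e k) := by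
  rw [Spar, ← Finset.prod_filter_mul_prod_filter_not Finset.univ
    (fun i => classOfPrime U s iotahat j i = ofAdd e)
    (fun i => classOfPrime U s iotahat j i ^ k i)]
  have h2 : ∏ i ∈ Finset.univ.filter
      (fun i => ¬ classOfPrime U s iotahat j i = ofAdd e),
      classOfPrime U s iotahat j i ^ k i = 1 := by
    apply Finset.prod_eq_one
    intro i hi
    rcases g_two hcard he (toAdd (classOfPrime U s iotahat j i)) with h | h
    · have h1 : classOfPrime U s iotahat j i = 1 := by
        rw [← ofAdd_toAdd (classOfPrime U s iotahat j i), h, ofAdd_zero]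
      rw [h1, one_pow]
    · exact absurd (by rw [← ofAdd_toAdd (classOfPrime U s iotahat j i), h])
        (Finset.mem_filter.mp hi).2
  have h1 : ∏ i ∈ EF iotahat j e, classOfPrime U s iotahat j i ^ k i
      = ∏ i ∈ EF iotahat j e, (ofAdd e : Multiplicative G) ^ k i :=
    Finset.prod_congr rfl fun i hi => by
      rw [(Finset.mem_filter.mp hi).2]
  rw [show Finset.univ.filter (fun i => classOfPrime U s iotahat j i = ofAdd e)
      = EF iotahat j e from rfl, h1, h2, mul_one, Finset.prod_pow_eq_pow_sum]

lemma cu_mul (α β : U j) : classOfUnit U s iotahat j (α * β) =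
    classOfUnit U s iotahat j α * classOfUnit U s iotahat j β := by
  simp only [classOfUnit]
  rw [← map_mul, ← Pi.mulSingle_mul, Prod.mk_mul_mk, mul_one]

lemma cu_one : classOfUnit U s iotahat j (1 : U j) = 1 := by
  rw [classOfUnit, show ((1 : U j), (1 : Multiplicative (Fin (s j) →₀ ℕ))) = 1 from rfl,
    Pi.mulSingle_one, map_one]

lemma cu_inv (α : U j) : classOfUnit U s iotahat j α⁻¹ = (classOfUnit U s iotahat j α)⁻¹ :=
  eq_inv_of_mul_eq_one_left (by rw [← cu_mul, inv_mul_cancel, cu_one])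

lemma mem_class_iff (hcard : Fintype.card G = 2) {e : G} (he : e ≠ 0)
    (d : ↥(seminormalD (U j) (s j))) :
    embD (G := G) j d ∈ TBlock G U s (iotahat.comp (embedT U s)) ↔
      classOfUnit U s iotahat j (d : U j × Multiplicative (Fin (s j) →₀ ℕ)).1 *
        (ofAdd e) ^ (Spar iotahat j e
          ((toAdd (d : U j × Multiplicative (Fin (s j) →₀ ℕ)).2 : Fin (s j) →₀ ℕ)
            : Fin (s j) → ℕ)) = 1 := by
  rw [embD_mem_iff]
  have key : iotahat (Pi.mulSingle j (d : U j × Multiplicative (Fin (s j) →₀ ℕ))) =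
      classOfUnit U s iotahat j (d : U j × Multiplicative (Fin (s j) →₀ ℕ)).1 *
        (ofAdd e) ^ (Spar iotahat j e
          ((toAdd (d : U j × Multiplicative (Fin (s j) →₀ ℕ)).2 : Fin (s j) →₀ ℕ)
            : Fin (s j) → ℕ)) := by
    have hd : (d : U j × Multiplicative (Fin (s j) →₀ ℕ))
        = ((d : U j × Multiplicative (Fin (s j) →₀ ℕ)).1, (1 : Multiplicative (Fin (s j) →₀ ℕ)))
          * ((1 : U j), (d : U j × Multiplicative (Fin (s j) →₀ ℕ)).2) := by
      rw [Prod.mk_mul_mk, mul_one, one_mul]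
    conv_lhs => rw [hd]
    rw [Pi.mulSingle_mul, map_mul]
    rw [show iotahat (Pi.mulSingle j ((d : U j × Multiplicative (Fin (s j) →₀ ℕ)).1,
        (1 : Multiplicative (Fin (s j) →₀ ℕ)))) =
      classOfUnit U s iotahat j (d : U j × Multiplicative (Fin (s j) →₀ ℕ)).1 from rfl]
    rw [← psiHom_apply, ← ofAdd_toAdd (d : U j × Multiplicative (Fin (s j) →₀ ℕ)).2,
      psi_eq_prod, prod_cp iotahat j hcard he, toAdd_ofAdd]
  rw [key]

lemma semi_eq_one {ν : Fin n} (hsν : 1 ≤ s ν) {x y : U ν × Multiplicative (Fin (s ν) →₀ ℕ)}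
    (hx : x ∈ seminormalD (U ν) (s ν)) (hxy : x * y = 1) : x = 1 := by
  rcases hx with h1 | hx
  · exact h1
  · exfalso
    have h2 := congrArg (fun z : U ν × Multiplicative (Fin (s ν) →₀ ℕ) =>
      toAdd z.2 ⟨0, hsν⟩) hxy
    have h3 : toAdd x.2 ⟨0, hsν⟩ + toAdd y.2 ⟨0, hsν⟩ = 0 := h2
    have h4 := hx ⟨0, hsν⟩
    omega

lemma semi_eq_one' {ν : Fin n} (hsν : 1 ≤ s ν) {x y : U ν × Multiplicative (Fin (s ν) →₀ ℕ)}
    (hx : x ∈ seminormalD (U ν) (s ν)) (hxy : x * y = 1) : y = 1 := by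
  have h1 := semi_eq_one hsν hx hxy
  rw [h1, one_mul] at hxy
  exact hxy

lemma isUnit_B_iff (hs : ∀ i, 1 ≤ s i)
    (u : ↥(TBlock G U s (iotahat.comp (embedT U s)))) : IsUnit u ↔ u = 1 := by
  constructor
  · intro h
    obtain ⟨v, hv⟩ := h.exists_right_inv
    have h1 : (u : Fm G U s) * (v : Fm G U s) = 1 := by
      exact_mod_cast congrArg Subtype.val hv
    apply Subtype.ext
    apply Prod.ext
    · have h2 : toAdd (u : Fm G U s).1 + toAdd (v : Fm G U s).1 = (0 : Multiset G) :=
        congrArg (fun z : Fm G U s => toAdd z.1) h1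
      have h3 := congrArg Multiset.card h2
      rw [Multiset.card_add] at h3
      simp only [Multiset.card_zero] at h3
      have c1 : toAdd (u : Fm G U s).1 = 0 := Multiset.card_eq_zero.mp (by omega)
      show (u : Fm G U s).1 = 1
      rw [← ofAdd_toAdd (u : Fm G U s).1, c1, ofAdd_zero]
    · show (u : Fm G U s).2 = 1
      funext ν
      have hcomp : (u : Fm G U s).2 ν * (v : Fm G U s).2 ν = 1 :=
        congrArg (fun z : Fm G U s => z.2 ν) h1
      have hx : ((u : Fm G U s).2 ν : U ν × Multiplicative (Fin (s ν) →₀ ℕ))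
          * ((v : Fm G U s).2 ν : U ν × Multiplicative (Fin (s ν) →₀ ℕ)) = 1 := by
        exact_mod_cast congrArg Subtype.val hcomp
      exact Subtype.ext (semi_eq_one (hs ν) ((u : Fm G U s).2 ν).2 hx)
  · rintro rfl; exact isUnit_one

lemma factor_decomp (hs : ∀ i, 1 ≤ s i) {d : ↥(seminormalD (U j) (s j))}
    {hB : embD (G := G) j d ∈ TBlock G U s (iotahat.comp (embedT U s))}
    {w w' : ↥(TBlock G U s (iotahat.comp (embedT U s)))}
    (h : (⟨embD (G := G) j d, hB⟩ : ↥(TBlock G U s (iotahat.comp (embedT U s)))) = w * w') :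
    ∃ (d₁ d₂ : ↥(seminormalD (U j) (s j)))
      (h₁ : embD (G := G) j d₁ ∈ TBlock G U s (iotahat.comp (embedT U s)))
      (h₂ : embD (G := G) j d₂ ∈ TBlock G U s (iotahat.comp (embedT U s))),
      w = ⟨embD (G := G) j d₁, h₁⟩ ∧ w' = ⟨embD (G := G) j d₂, h₂⟩ ∧ d₁ * d₂ = d := by
  have h1 : (w : Fm G U s) * (w' : Fm G U s) = embD (G := G) j d := by
    rw [← Submonoid.coe_mul]
    exact (congrArg Subtype.val h).symm
  have h2 : toAdd (w : Fm G U s).1 + toAdd (w' : Fm G U s).1 = (0 : Multiset G) :=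
    congrArg (fun z : Fm G U s => toAdd z.1) h1
  have h3 := congrArg Multiset.card h2
  rw [Multiset.card_add] at h3
  simp only [Multiset.card_zero] at h3
  have c1 : (w : Fm G U s).1 = 1 := by
    rw [← ofAdd_toAdd (w : Fm G U s).1, Multiset.card_eq_zero.mp (show Multiset.card
      (toAdd (w : Fm G U s).1) = 0 by omega), ofAdd_zero]
  have c2 : (w' : Fm G U s).1 = 1 := by
    rw [← ofAdd_toAdd (w' : Fm G U s).1, Multiset.card_eq_zero.mp (show Multiset.card
      (toAdd (w' : Fm G U s).1) = 0 by omega), ofAdd_zero]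
  have hww : ∀ ν, (w : Fm G U s).2 ν * (w' : Fm G U s).2 ν
      = Pi.mulSingle (M := fun i => ↥(seminormalD (U i) (s i))) j d ν := by
    intro ν
    have h4 := congrArg (fun z : Fm G U s => z.2 ν) h1
    simpa [Prod.snd_mul, Pi.mul_apply, embD] using h4
  have hoff : ∀ ν, ν ≠ j → (w : Fm G U s).2 ν = 1 ∧ (w' : Fm G U s).2 ν = 1 := by
    intro ν hν
    have h4 := hww ν
    rw [Pi.mulSingle_eq_of_ne hν] at h4
    have hx : ((w : Fm G U s).2 ν : U ν × Multiplicative (Fin (s ν) →₀ ℕ))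
        * ((w' : Fm G U s).2 ν : U ν × Multiplicative (Fin (s ν) →₀ ℕ)) = 1 := by
      exact_mod_cast congrArg Subtype.val h4
    exact ⟨Subtype.ext (semi_eq_one (hs ν) ((w : Fm G U s).2 ν).2 hx),
      Subtype.ext (semi_eq_one' (hs ν) ((w : Fm G U s).2 ν).2 hx)⟩
  have hwe : (w : Fm G U s) = embD (G := G) j ((w : Fm G U s).2 j) := by
    apply Prod.ext
    · exact c1
    · show (w : Fm G U s).2 = Pi.mulSingle j ((w : Fm G U s).2 j)
      funext ν
      by_cases hν : ν = j
      · subst hν; rw [Pi.mulSingle_eq_same]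
      · rw [Pi.mulSingle_eq_of_ne hν]; exact (hoff ν hν).1
  have hwe' : (w' : Fm G U s) = embD (G := G) j ((w' : Fm G U s).2 j) := by
    apply Prod.ext
    · exact c2
    · show (w' : Fm G U s).2 = Pi.mulSingle j ((w' : Fm G U s).2 j)
      funext ν
      by_cases hν : ν = j
      · subst hν; rw [Pi.mulSingle_eq_same]
      · rw [Pi.mulSingle_eq_of_ne hν]; exact (hoff ν hν).2
  refine ⟨(w : Fm G U s).2 j, (w' : Fm G U s).2 j, hwe ▸ w.2, hwe' ▸ w'.2,
    Subtype.ext hwe, Subtype.ext hwe', ?_⟩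
  have h5 := hww j
  rw [Pi.mulSingle_eq_same] at h5
  exact h5

def mkel (α : U j) (m : Fin (s j) → ℕ) : U j × Multiplicative (Fin (s j) →₀ ℕ) :=
  (α, ofAdd (Finsupp.equivFunOnFinite.symm m))

lemma mkel_snd_apply (α : U j) (m : Fin (s j) → ℕ) (i : Fin (s j)) :
    toAdd (mkel (U := U) (s := s) j α m).2 i = m i := by
  simp [mkel]

lemma mkel_memD (α : U j) (m : Fin (s j) → ℕ) (hm : ∀ i, 1 ≤ m i) :
    mkel (U := U) (s := s) j α m ∈ seminormalD (U j) (s j) := by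
  show mkel (U := U) (s := s) j α m = 1 ∨ ∀ i, 1 ≤ toAdd (mkel (U := U) (s := s) j α m).2 i
  refine Or.inr fun i => ?_
  rw [mkel_snd_apply]
  exact hm i

lemma mkel_mul (α β : U j) (m k : Fin (s j) → ℕ) :
    mkel (U := U) (s := s) j α m * mkel (U := U) (s := s) j β k
      = mkel (U := U) (s := s) j (α * β) (fun i => m i + k i) := by
  have hadd : Finsupp.equivFunOnFinite.symm m + Finsupp.equivFunOnFinite.symm k
      = Finsupp.equivFunOnFinite.symm (fun i => m i + k i) := by
    ext i; simp
  show (α * β, ofAdd (Finsupp.equivFunOnFinite.symm m) * ofAdd (Finsupp.equivFunOnFinite.symm k)) = _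
  rw [← ofAdd_add, hadd]
  rfl

lemma mkel_eta (d : U j × Multiplicative (Fin (s j) →₀ ℕ)) :
    mkel (U := U) (s := s) j d.1 (fun i => toAdd d.2 i) = d := by
  apply Prod.ext
  · rfl
  · show ofAdd (Finsupp.equivFunOnFinite.symm fun i => toAdd d.2 i) = d.2
    rw [show (fun i => toAdd d.2 i) = ⇑(toAdd d.2) from rfl,
      Finsupp.equivFunOnFinite_symm_coe, ofAdd_toAdd]

def GoodShape (e : G) (m : Fin (s j) → ℕ) : Prop :=
  (∃ i, m i = 1) ∨ ((∀ η : U j, classOfUnit U s iotahat j η = 1) ∧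
    ¬ Even (EF iotahat j e).card ∧ ∀ i ∈ EF iotahat j e, m i = 2)

lemma irred_elem (hcard : Fintype.card G = 2) {e : G} (he : e ≠ 0) (hs : ∀ i, 1 ≤ s i)
    {d : ↥(seminormalD (U j) (s j))}
    (hexp : ∀ i, 1 ≤ toAdd (d : U j × Multiplicative (Fin (s j) →₀ ℕ)).2 i)
    (hB : embD (G := G) j d ∈ TBlock G U s (iotahat.comp (embedT U s)))
    (hsh : GoodShape iotahat j e (fun i => toAdd (d : U j × Multiplicative (Fin (s j) →₀ ℕ)).2 i)) :
    Irreducible (⟨embD (G := G) j d, hB⟩ : ↥(TBlock G U s (iotahat.comp (embedT U s)))) := by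
  constructor
  · rw [isUnit_B_iff iotahat hs]
    intro h1
    have hval : embD (G := G) j d = (1 : Fm G U s) := congrArg Subtype.val h1
    have h2 : Pi.mulSingle (M := fun i => ↥(seminormalD (U i) (s i))) j d j
        = (1 : Fm G U s).2 j := congrArg (fun z : Fm G U s => z.2 j) hval
    rw [Pi.mulSingle_eq_same] at h2
    have h3 : toAdd (d : U j × Multiplicative (Fin (s j) →₀ ℕ)).2 ⟨0, hs j⟩ = 0 := by
      have h4 := congrArg (fun z : ↥(seminormalD (U j) (s j)) =>
        toAdd (z : U j × Multiplicative (Fin (s j) →₀ ℕ)).2 ⟨0, hs j⟩) h2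
      exact h4
    have := hexp ⟨0, hs j⟩
    omega
  · intro w w' h
    obtain ⟨d₁, d₂, h₁, h₂, rfl, rfl, hprod⟩ := factor_decomp iotahat j hs h
    rcases d₁.2 with hd1 | hexp1
    · left
      rw [isUnit_B_iff iotahat hs]
      apply Subtype.ext
      show embD (G := G) j d₁ = 1
      rw [show d₁ = 1 from Subtype.ext hd1, embD_one]
    rcases d₂.2 with hd2 | hexp2
    · right
      rw [isUnit_B_iff iotahat hs]
      apply Subtype.ext
      show embD (G := G) j d₂ = 1
      rw [show d₂ = 1 from Subtype.ext hd2, embD_one]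
    exfalso
    have hsum : ∀ i, toAdd (d₁ : U j × Multiplicative (Fin (s j) →₀ ℕ)).2 i
        + toAdd (d₂ : U j × Multiplicative (Fin (s j) →₀ ℕ)).2 i
        = toAdd (d : U j × Multiplicative (Fin (s j) →₀ ℕ)).2 i := by
      intro i
      have h5 := congrArg (fun z : ↥(seminormalD (U j) (s j)) =>
        toAdd (z : U j × Multiplicative (Fin (s j) →₀ ℕ)).2 i) hprod
      exact h5
    have hcls1 := (mem_class_iff iotahat j hcard he d₁).mp h₁
    rcases hsh with ⟨i, hi⟩ | ⟨huc, hodd, h2E⟩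
    · have e1 := hexp1 i; have e2 := hexp2 i; have e3 := hsum i
      simp only at hi
      omega
    · have hone : ∀ i ∈ EF iotahat j e,
          toAdd (d₁ : U j × Multiplicative (Fin (s j) →₀ ℕ)).2 i = 1 := by
        intro i hiE
        have e0 := h2E i hiE
        have e1 := hexp1 i; have e2 := hexp2 i; have e3 := hsum i
        simp only at e0
        omega
      have hS : Spar iotahat j e
          (((toAdd (d₁ : U j × Multiplicative (Fin (s j) →₀ ℕ)).2 : Fin (s j) →₀ ℕ))
            : Fin (s j) → ℕ) = (EF iotahat j e).card := by
        rw [Spar, Finset.sum_congr rfl hone]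
        simp
      rw [huc, one_mul, hS, ep_pow_eq_one_iff hcard he] at hcls1
      exact hodd hcls1

lemma class_compl (hcard : Fintype.card G = 2) {e : G} (he : e ≠ 0)
    {ε α : U j} {κ m m' : Fin (s j) → ℕ}
    (hκ : classOfUnit U s iotahat j ε * (ofAdd e) ^ Spar iotahat j e κ = 1)
    (hm : classOfUnit U s iotahat j α * (ofAdd e) ^ Spar iotahat j e m = 1)
    (hsum : ∀ i, m i + m' i = κ i) :
    classOfUnit U s iotahat j (ε * α⁻¹) * (ofAdd e) ^ Spar iotahat j e m' = 1 := by
  have hS : Spar iotahat j e m + Spar iotahat j e m' = Spar iotahat j e κ := by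
    rw [Spar, Spar, Spar, ← Finset.sum_add_distrib]
    exact Finset.sum_congr rfl fun i _ => hsum i
  have e1 : classOfUnit U s iotahat j ε = ((ofAdd e : Multiplicative G) ^ Spar iotahat j e κ)⁻¹ :=
    eq_inv_of_mul_eq_one_left hκ
  have e2 : classOfUnit U s iotahat j α = ((ofAdd e : Multiplicative G) ^ Spar iotahat j e m)⁻¹ :=
    eq_inv_of_mul_eq_one_left hm
  rw [cu_mul, cu_inv, e1, e2, inv_inv, ← hS, pow_add]
  group

lemma Spar_ite_one {e : G} {i₁ : Fin (s j)} (A : ℕ) :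
    Spar iotahat j e (fun i => if i = i₁ then A else 1) =
      if i₁ ∈ EF iotahat j e then A + ((EF iotahat j e).card - 1) else (EF iotahat j e).card := by
  by_cases h : i₁ ∈ EF iotahat j e
  · rw [if_pos h, Spar, ← Finset.add_sum_erase _ _ h, if_pos rfl]
    congr 1
    rw [Finset.sum_congr rfl (fun i hi => if_neg (Finset.mem_erase.mp hi).1),
      Finset.sum_const, smul_eq_mul, mul_one, Finset.card_erase_of_mem h]
  · rw [if_neg h, Spar,
      Finset.sum_congr rfl (fun i hi => if_neg (fun he' : i = i₁ => h (he' ▸ hi))),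
      Finset.sum_const, smul_eq_mul, mul_one]

lemma Spar_ite_two {e : G} {i₁ i₂ : Fin (s j)} (h12 : i₁ ≠ i₂)
    (h1 : i₁ ∈ EF iotahat j e) (h2 : i₂ ∈ EF iotahat j e) (A B : ℕ) :
    Spar iotahat j e (fun i => if i = i₁ then A else if i = i₂ then B else 1)
      = A + B + ((EF iotahat j e).card - 2) := by
  rw [Spar, ← Finset.add_sum_erase _ _ h1, if_pos rfl,
    ← Finset.add_sum_erase _ _ (Finset.mem_erase.mpr ⟨Ne.symm h12, h2⟩),
    if_neg (Ne.symm h12), if_pos rfl]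
  rw [Finset.sum_congr rfl (fun i hi => ?_), Finset.sum_const, smul_eq_mul, mul_one,
    Finset.card_erase_of_mem (Finset.mem_erase.mpr ⟨Ne.symm h12, h2⟩),
    Finset.card_erase_of_mem h1, ← add_assoc]
  · rfl
  · obtain ⟨hne2, hi'⟩ := Finset.mem_erase.mp hi
    obtain ⟨hne1, _⟩ := Finset.mem_erase.mp hi'
    rw [if_neg hne1, if_neg hne2]

lemma Spar_const_one {e : G} :
    Spar (U := U) (s := s) iotahat j e (fun _ => 1) = (EF iotahat j e).card := by
  rw [Spar, Finset.sum_const, smul_eq_mul, mul_one]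

lemma sInf_le_two_split (hcard : Fintype.card G = 2) {e : G} (he : e ≠ 0) (hs : ∀ i, 1 ≤ s i)
    {a : U j × Multiplicative (Fin (s j) →₀ ℕ)} (haD : a ∈ seminormalD (U j) (s j))
    (haB : embD (G := G) j ⟨a, haD⟩ ∈ TBlock G U s (iotahat.comp (embedT U s)))
    (α₁ α₂ : U j) (m₁ m₂ : Fin (s j) → ℕ)
    (hprod : α₁ * α₂ = a.1)
    (hm₁ : ∀ i, 1 ≤ m₁ i) (hm₂ : ∀ i, 1 ≤ m₂ i)
    (hsum : ∀ i, m₁ i + m₂ i = toAdd a.2 i)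
    (hc1 : classOfUnit U s iotahat j α₁ * (ofAdd e) ^ Spar iotahat j e m₁ = 1)
    (hc2 : classOfUnit U s iotahat j α₂ * (ofAdd e) ^ Spar iotahat j e m₂ = 1)
    (hsh1 : GoodShape iotahat j e m₁) (hsh2 : GoodShape iotahat j e m₂) :
    sInf (lengthSet (⟨embD (G := G) j ⟨a, haD⟩, haB⟩ :
      ↥(TBlock G U s (iotahat.comp (embedT U s))))) ≤ 2 := by
  have hD1 := mkel_memD j α₁ m₁ hm₁
  have hD2 := mkel_memD j α₂ m₂ hm₂
  have hB1 : embD (G := G) j ⟨mkel (U := U) (s := s) j α₁ m₁, hD1⟩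
      ∈ TBlock G U s (iotahat.comp (embedT U s)) := by
    rw [mem_class_iff iotahat j hcard he]
    have hco : (((toAdd (mkel (U := U) (s := s) j α₁ m₁).2 : Fin (s j) →₀ ℕ))
        : Fin (s j) → ℕ) = m₁ := funext (mkel_snd_apply j α₁ m₁)
    rw [hco]
    exact hc1
  have hB2 : embD (G := G) j ⟨mkel (U := U) (s := s) j α₂ m₂, hD2⟩
      ∈ TBlock G U s (iotahat.comp (embedT U s)) := by
    rw [mem_class_iff iotahat j hcard he]
    have hco : (((toAdd (mkel (U := U) (s := s) j α₂ m₂).2 : Fin (s j) →₀ ℕ))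
        : Fin (s j) → ℕ) = m₂ := funext (mkel_snd_apply j α₂ m₂)
    rw [hco]
    exact hc2
  have hu := irred_elem iotahat j hcard he hs (fun i => by
      rw [mkel_snd_apply]; exact hm₁ i) hB1 (by
      have hco : (fun i => toAdd (mkel (U := U) (s := s) j α₁ m₁).2 i) = m₁ :=
        funext (mkel_snd_apply j α₁ m₁)
      rw [hco]; exact hsh1)
  have hv := irred_elem iotahat j hcard he hs (fun i => by
      rw [mkel_snd_apply]; exact hm₂ i) hB2 (by
      have hco : (fun i => toAdd (mkel (U := U) (s := s) j α₂ m₂).2 i) = m₂ :=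
        funext (mkel_snd_apply j α₂ m₂)
      rw [hco]; exact hsh2)
  have key : (⟨embD (G := G) j ⟨a, haD⟩, haB⟩ :
      ↥(TBlock G U s (iotahat.comp (embedT U s))))
      = ⟨embD (G := G) j ⟨mkel (U := U) (s := s) j α₁ m₁, hD1⟩, hB1⟩
        * ⟨embD (G := G) j ⟨mkel (U := U) (s := s) j α₂ m₂, hD2⟩, hB2⟩ := by
    apply Subtype.ext
    show embD (G := G) j ⟨a, haD⟩
      = embD (G := G) j ⟨mkel (U := U) (s := s) j α₁ m₁, hD1⟩
        * embD (G := G) j ⟨mkel (U := U) (s := s) j α₂ m₂, hD2⟩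
    rw [← embD_mul]
    congr 1
    apply Subtype.ext
    show a = mkel (U := U) (s := s) j α₁ m₁ * mkel (U := U) (s := s) j α₂ m₂
    rw [mkel_mul, show (fun i => m₁ i + m₂ i) = (fun i => toAdd a.2 i) from funext hsum,
      hprod, mkel_eta]
  exact Nat.sInf_le (two_mem_lengthSet hu hv key)

lemma sInf_le_three_split (hcard : Fintype.card G = 2) {e : G} (he : e ≠ 0) (hs : ∀ i, 1 ≤ s i)
    {a : U j × Multiplicative (Fin (s j) →₀ ℕ)} (haD : a ∈ seminormalD (U j) (s j))
    (haB : embD (G := G) j ⟨a, haD⟩ ∈ TBlock G U s (iotahat.comp (embedT U s)))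
    (α₁ α₂ α₃ : U j) (m₁ m₂ m₃ : Fin (s j) → ℕ)
    (hprod : α₁ * α₂ * α₃ = a.1)
    (hm₁ : ∀ i, 1 ≤ m₁ i) (hm₂ : ∀ i, 1 ≤ m₂ i) (hm₃ : ∀ i, 1 ≤ m₃ i)
    (hsum : ∀ i, m₁ i + m₂ i + m₃ i = toAdd a.2 i)
    (hc1 : classOfUnit U s iotahat j α₁ * (ofAdd e) ^ Spar iotahat j e m₁ = 1)
    (hc2 : classOfUnit U s iotahat j α₂ * (ofAdd e) ^ Spar iotahat j e m₂ = 1)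
    (hc3 : classOfUnit U s iotahat j α₃ * (ofAdd e) ^ Spar iotahat j e m₃ = 1)
    (hsh1 : GoodShape iotahat j e m₁) (hsh2 : GoodShape iotahat j e m₂)
    (hsh3 : GoodShape iotahat j e m₃) :
    sInf (lengthSet (⟨embD (G := G) j ⟨a, haD⟩, haB⟩ :
      ↥(TBlock G U s (iotahat.comp (embedT U s))))) ≤ 3 := by
  have hD1 := mkel_memD j α₁ m₁ hm₁
  have hD2 := mkel_memD j α₂ m₂ hm₂
  have hD3 := mkel_memD j α₃ m₃ hm₃
  have hB1 : embD (G := G) j ⟨mkel (U := U) (s := s) j α₁ m₁, hD1⟩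
      ∈ TBlock G U s (iotahat.comp (embedT U s)) := by
    rw [mem_class_iff iotahat j hcard he]
    rw [show (((toAdd (mkel (U := U) (s := s) j α₁ m₁).2 : Fin (s j) →₀ ℕ))
        : Fin (s j) → ℕ) = m₁ from funext (mkel_snd_apply j α₁ m₁)]
    exact hc1
  have hB2 : embD (G := G) j ⟨mkel (U := U) (s := s) j α₂ m₂, hD2⟩
      ∈ TBlock G U s (iotahat.comp (embedT U s)) := by
    rw [mem_class_iff iotahat j hcard he]
    rw [show (((toAdd (mkel (U := U) (s := s) j α₂ m₂).2 : Fin (s j) →₀ ℕ))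
        : Fin (s j) → ℕ) = m₂ from funext (mkel_snd_apply j α₂ m₂)]
    exact hc2
  have hB3 : embD (G := G) j ⟨mkel (U := U) (s := s) j α₃ m₃, hD3⟩
      ∈ TBlock G U s (iotahat.comp (embedT U s)) := by
    rw [mem_class_iff iotahat j hcard he]
    rw [show (((toAdd (mkel (U := U) (s := s) j α₃ m₃).2 : Fin (s j) →₀ ℕ))
        : Fin (s j) → ℕ) = m₃ from funext (mkel_snd_apply j α₃ m₃)]
    exact hc3
  have hu := irred_elem iotahat j hcard he hs (fun i => by
      rw [mkel_snd_apply]; exact hm₁ i) hB1 (by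
      rw [show (fun i => toAdd (mkel (U := U) (s := s) j α₁ m₁).2 i) = m₁ from
        funext (mkel_snd_apply j α₁ m₁)]; exact hsh1)
  have hv := irred_elem iotahat j hcard he hs (fun i => by
      rw [mkel_snd_apply]; exact hm₂ i) hB2 (by
      rw [show (fun i => toAdd (mkel (U := U) (s := s) j α₂ m₂).2 i) = m₂ from
        funext (mkel_snd_apply j α₂ m₂)]; exact hsh2)
  have hw := irred_elem iotahat j hcard he hs (fun i => by
      rw [mkel_snd_apply]; exact hm₃ i) hB3 (by
      rw [show (fun i => toAdd (mkel (U := U) (s := s) j α₃ m₃).2 i) = m₃ from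
        funext (mkel_snd_apply j α₃ m₃)]; exact hsh3)
  have key : (⟨embD (G := G) j ⟨a, haD⟩, haB⟩ :
      ↥(TBlock G U s (iotahat.comp (embedT U s))))
      = ⟨embD (G := G) j ⟨mkel (U := U) (s := s) j α₁ m₁, hD1⟩, hB1⟩
        * ⟨embD (G := G) j ⟨mkel (U := U) (s := s) j α₂ m₂, hD2⟩, hB2⟩
        * ⟨embD (G := G) j ⟨mkel (U := U) (s := s) j α₃ m₃, hD3⟩, hB3⟩ := by
    apply Subtype.ext
    show embD (G := G) j ⟨a, haD⟩
      = embD (G := G) j ⟨mkel (U := U) (s := s) j α₁ m₁, hD1⟩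
        * embD (G := G) j ⟨mkel (U := U) (s := s) j α₂ m₂, hD2⟩
        * embD (G := G) j ⟨mkel (U := U) (s := s) j α₃ m₃, hD3⟩
    rw [← embD_mul, ← embD_mul]
    congr 1
    apply Subtype.ext
    show a = mkel (U := U) (s := s) j α₁ m₁ * mkel (U := U) (s := s) j α₂ m₂
      * mkel (U := U) (s := s) j α₃ m₃
    rw [mkel_mul, mkel_mul,
      show (fun i => (m₁ i + m₂ i) + m₃ i) = (fun i => toAdd a.2 i) from
        funext (fun i => hsum i), hprod, mkel_eta]
  exact Nat.sInf_le (three_mem_lengthSet hu hv hw key)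

lemma other_index (h2 : 2 ≤ s j) (i₂ : Fin (s j)) : ∃ i, i ≠ i₂ := by
  by_cases h : i₂ = (⟨0, by omega⟩ : Fin (s j))
  · exact ⟨⟨1, by omega⟩, by rw [h]; simp [Fin.ext_iff]⟩
  · exact ⟨⟨0, by omega⟩, fun hh => h hh.symm⟩

lemma third_index (h3 : 3 ≤ s j) (i₂ i₃ : Fin (s j)) : ∃ i, i ≠ i₂ ∧ i ≠ i₃ := by
  have hlt : ({i₂, i₃} : Finset (Fin (s j))).card < Fintype.card (Fin (s j)) := by
    have hle : ({i₂, i₃} : Finset (Fin (s j))).card ≤ 2 :=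
      le_trans (Finset.card_insert_le _ _) (by rw [Finset.card_singleton])
    rw [Fintype.card_fin]
    omega
  have hne : ¬ (∀ i : Fin (s j), i ∈ ({i₂, i₃} : Finset (Fin (s j)))) := by
    intro hall
    rw [Finset.eq_univ_iff_forall.mpr hall, Finset.card_univ] at hlt
    omega
  push_neg at hne
  obtain ⟨i, hi⟩ := hne
  rw [Finset.mem_insert, Finset.mem_singleton] at hi
  push_neg at hi
  exact ⟨i, hi⟩

lemma not_isUnit_elem (hs : ∀ i, 1 ≤ s i) {d : ↥(seminormalD (U j) (s j))}
    (hB : embD (G := G) j d ∈ TBlock G U s (iotahat.comp (embedT U s)))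
    (i : Fin (s j)) (hexp : 1 ≤ toAdd (d : U j × Multiplicative (Fin (s j) →₀ ℕ)).2 i) :
    ¬ IsUnit (⟨embD (G := G) j d, hB⟩ :
      ↥(TBlock G U s (iotahat.comp (embedT U s)))) := by
  rw [isUnit_B_iff iotahat hs]
  intro h1
  have hval : embD (G := G) j d = (1 : Fm G U s) := congrArg Subtype.val h1
  have h2 : Pi.mulSingle (M := fun i => ↥(seminormalD (U i) (s i))) j d j
      = (1 : Fm G U s).2 j := congrArg (fun z : Fm G U s => z.2 j) hval
  rw [Pi.mulSingle_eq_same] at h2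
  have h3 : toAdd (d : U j × Multiplicative (Fin (s j) →₀ ℕ)).2 i = 0 :=
    congrArg (fun z : ↥(seminormalD (U j) (s j)) =>
      toAdd (z : U j × Multiplicative (Fin (s j) →₀ ℕ)).2 i) h2
  omega

lemma part1_key (hcard : Fintype.card G = 2) {e : G} (he : e ≠ 0) (hs : ∀ i, 1 ≤ s i)
    (hs1 : s j = 1) {x y : U j × Multiplicative (Fin (s j) →₀ ℕ)}
    (hxD : x ∈ seminormalD (U j) (s j)) (hyD : y ∈ seminormalD (U j) (s j))
    (hxB : embD (G := G) j ⟨x, hxD⟩ ∈ TBlock G U s (iotahat.comp (embedT U s)))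
    (hyB : embD (G := G) j ⟨y, hyD⟩ ∈ TBlock G U s (iotahat.comp (embedT U s)))
    (hyirr : Irreducible (⟨embD (G := G) j ⟨y, hyD⟩, hyB⟩ :
      ↥(TBlock G U s (iotahat.comp (embedT U s)))))
    (hxexp : ∀ i, 1 ≤ toAdd x.2 i)
    (hlt : toAdd x.2 ⟨0, hs j⟩ < toAdd y.2 ⟨0, hs j⟩) : False := by
  have hall : ∀ i : Fin (s j), i = ⟨0, hs j⟩ := by
    intro i
    apply Fin.ext
    show (i : ℕ) = 0
    have hi := i.isLt
    omega
  set m := fun i : Fin (s j) => toAdd y.2 i - toAdd x.2 i with hm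
  have hcmp : ∀ i : Fin (s j), toAdd x.2 i < toAdd y.2 i := by
    intro i; rw [hall i]; exact hlt
  have hm1 : ∀ i, 1 ≤ m i := fun i => by have := hcmp i; simp only [hm]; omega
  have hDw := mkel_memD j (y.1 * x.1⁻¹) m hm1
  have hsum : ∀ i, toAdd x.2 i + m i = toAdd y.2 i := fun i => by
    have := hcmp i; simp only [hm]; omega
  have hxcls : classOfUnit U s iotahat j x.1
      * (ofAdd e) ^ Spar iotahat j e (fun i => toAdd x.2 i) = 1 :=
    (mem_class_iff iotahat j hcard he ⟨x, hxD⟩).mp hxB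
  have hycls : classOfUnit U s iotahat j y.1
      * (ofAdd e) ^ Spar iotahat j e (fun i => toAdd y.2 i) = 1 :=
    (mem_class_iff iotahat j hcard he ⟨y, hyD⟩).mp hyB
  have hwcls := class_compl iotahat j hcard he hycls hxcls hsum
  have hwB : embD (G := G) j ⟨mkel (U := U) (s := s) j (y.1 * x.1⁻¹) m, hDw⟩
      ∈ TBlock G U s (iotahat.comp (embedT U s)) := by
    rw [mem_class_iff iotahat j hcard he]
    rw [show (((toAdd (mkel (U := U) (s := s) j (y.1 * x.1⁻¹) m).2 : Fin (s j) →₀ ℕ))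
        : Fin (s j) → ℕ) = m from funext (mkel_snd_apply j _ m)]
    exact hwcls
  have key : (⟨embD (G := G) j ⟨y, hyD⟩, hyB⟩ :
      ↥(TBlock G U s (iotahat.comp (embedT U s))))
      = (⟨embD (G := G) j ⟨x, hxD⟩, hxB⟩ :
        ↥(TBlock G U s (iotahat.comp (embedT U s))))
      * ⟨embD (G := G) j ⟨mkel (U := U) (s := s) j (y.1 * x.1⁻¹) m, hDw⟩, hwB⟩ := by
    apply Subtype.ext
    show embD (G := G) j ⟨y, hyD⟩ = embD (G := G) j ⟨x, hxD⟩
      * embD (G := G) j ⟨mkel (U := U) (s := s) j (y.1 * x.1⁻¹) m, hDw⟩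
    rw [← embD_mul]
    congr 1
    apply Subtype.ext
    show y = x * mkel (U := U) (s := s) j (y.1 * x.1⁻¹) m
    apply Prod.ext
    · show y.1 = x.1 * (y.1 * x.1⁻¹)
      rw [mul_comm y.1 x.1⁻¹, ← mul_assoc, mul_inv_cancel, one_mul]
    · show y.2 = x.2 * ofAdd (Finsupp.equivFunOnFinite.symm m)
      rw [← ofAdd_toAdd x.2, ← ofAdd_add, ← ofAdd_toAdd y.2]
      congr 1
      ext i
      simp only [Finsupp.add_apply, Finsupp.equivFunOnFinite_symm_apply_apply, toAdd_ofAdd]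
      exact (hsum i).symm
  rcases hyirr.isUnit_or_isUnit key with hbad | hbad
  · exact not_isUnit_elem iotahat j hs hxB ⟨0, hs j⟩ (hxexp ⟨0, hs j⟩) hbad
  · refine not_isUnit_elem iotahat j hs hwB ⟨0, hs j⟩ ?_ hbad
    rw [mkel_snd_apply]
    exact hm1 ⟨0, hs j⟩

end Setting
/-- Assertion A2 in the proof of Theorem 3.3. (1) If `s_j = 1` and `a, b ∈ D_j ∩ A(B)`,
then `b = ε a` for some `ε ∈ D̂_j^×`. (2) If `s_j ≥ 2` and `1 ≠ a ∈ D_j ∩ B`, then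
`min L_B(a) ≤ 3` if `d_j = 2`, and `min L_B(a) ≤ 2` otherwise. -/
theorem tblock_order_two_local_lengths
    {G : Type*} [AddCommGroup G] [Fintype G] (hcard : Fintype.card G = 2)
    (e : G) (he : e ≠ 0)
    {n : ℕ} (hn : 0 < n) (U : Fin n → Type*) [∀ i, CommGroup (U i)]
    (s : Fin n → ℕ) (hs : ∀ i, 1 ≤ s i)
    (iotahat : HatTm U s →* Multiplicative G)
    (hnf : ∀ ν : Fin n, ¬ IsFactorialMonoid ↥(seminormalD (U ν) (s ν)))
    (j : Fin n) :
    ((s j = 1) →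
      ∀ (a b : U j × Multiplicative (Fin (s j) →₀ ℕ))
        (haD : a ∈ seminormalD (U j) (s j)) (hbD : b ∈ seminormalD (U j) (s j))
        (haB : ((1 : FreeCM G),
            Pi.mulSingle j (⟨a, haD⟩ : ↥(seminormalD (U j) (s j)))) ∈
          TBlock G U s (iotahat.comp (embedT U s)))
        (hbB : ((1 : FreeCM G),
            Pi.mulSingle j (⟨b, hbD⟩ : ↥(seminormalD (U j) (s j)))) ∈
          TBlock G U s (iotahat.comp (embedT U s))),
        Irreducible (⟨_, haB⟩ : ↥(TBlock G U s (iotahat.comp (embedT U s)))) →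
        Irreducible (⟨_, hbB⟩ : ↥(TBlock G U s (iotahat.comp (embedT U s)))) →
        ∃ ε : U j, b = (ε, 1) * a) ∧
    ((2 ≤ s j) →
      ∀ (a : U j × Multiplicative (Fin (s j) →₀ ℕ))
        (haD : a ∈ seminormalD (U j) (s j))
        (haB : ((1 : FreeCM G),
            Pi.mulSingle j (⟨a, haD⟩ : ↥(seminormalD (U j) (s j)))) ∈
          TBlock G U s (iotahat.comp (embedT U s))),
        a ≠ 1 →
        sInf (lengthSet (⟨_, haB⟩ : ↥(TBlock G U s (iotahat.comp (embedT U s))))) ≤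
          (if dval U s iotahat e j = 2 then 3 else 2)) := by
  constructor
  · -- Part (1): s j = 1
    intro hs1 a b haD hbD haB hbB hai hbi
    have haD' : a = 1 ∨ ∀ i, 1 ≤ Multiplicative.toAdd a.2 i := haD
    have hbD' : b = 1 ∨ ∀ i, 1 ≤ Multiplicative.toAdd b.2 i := hbD
    have hane : a ≠ 1 := by
      intro h
      apply hai.not_isUnit
      rw [isUnit_B_iff iotahat hs]
      apply Subtype.ext
      show embD (G := G) j ⟨a, haD⟩ = 1
      rw [show (⟨a, haD⟩ : ↥(seminormalD (U j) (s j))) = 1 from Subtype.ext h, embD_one]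
    have hbne : b ≠ 1 := by
      intro h
      apply hbi.not_isUnit
      rw [isUnit_B_iff iotahat hs]
      apply Subtype.ext
      show embD (G := G) j ⟨b, hbD⟩ = 1
      rw [show (⟨b, hbD⟩ : ↥(seminormalD (U j) (s j))) = 1 from Subtype.ext h, embD_one]
    have hka : ∀ i, 1 ≤ Multiplicative.toAdd a.2 i := haD'.resolve_left hane
    have hkb : ∀ i, 1 ≤ Multiplicative.toAdd b.2 i := hbD'.resolve_left hbne
    rcases Nat.lt_trichotomy (Multiplicative.toAdd a.2 ⟨0, hs j⟩) (Multiplicative.toAdd b.2 ⟨0, hs j⟩) with hlt | heq | hgt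
    · exact absurd hlt (fun hlt =>
        part1_key iotahat j hcard he hs hs1 haD hbD haB hbB hbi hka hlt)
    · refine ⟨b.1 * a.1⁻¹, ?_⟩
      apply Prod.ext
      · show b.1 = (b.1 * a.1⁻¹) * a.1
        rw [mul_assoc, inv_mul_cancel, mul_one]
      · show b.2 = 1 * a.2
        rw [one_mul, ← ofAdd_toAdd b.2, ← ofAdd_toAdd a.2]
        congr 1
        ext i
        have hi : i = (⟨0, hs j⟩ : Fin (s j)) := by
          apply Fin.ext
          show (i : ℕ) = 0
          have := i.isLt
          omega
        rw [hi]
        exact heq.symm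
    · exact absurd hgt (fun hgt =>
        part1_key iotahat j hcard he hs hs1 hbD haD hbB haB hai hkb hgt)
  · -- Part (2): s j ≥ 2
    intro hs2 a haD haB ha1
    have haD' : a = 1 ∨ ∀ i, 1 ≤ Multiplicative.toAdd a.2 i := haD
    have hκ1 : ∀ i, 1 ≤ Multiplicative.toAdd a.2 i := haD'.resolve_left ha1
    have hacls : classOfUnit U s iotahat j a.1
        * (Multiplicative.ofAdd e) ^ Spar iotahat j e (fun i => Multiplicative.toAdd a.2 i) = 1 :=
      (mem_class_iff iotahat j hcard he ⟨a, haD⟩).mp haB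
    have hbound2 : (2:ℕ) ≤ (if dval U s iotahat e j = 2 then 3 else 2) := by
      split <;> omega
    have hbound1 : (1:ℕ) ≤ (if dval U s iotahat e j = 2 then 3 else 2) := by
      split <;> omega
    have hcardle : (EF iotahat j e).card ≤ s j := by
      have h := Finset.card_le_univ (EF iotahat j e)
      rwa [Fintype.card_fin] at h
    by_cases hone : ∃ i, Multiplicative.toAdd a.2 i = 1
    · refine le_trans (Nat.sInf_le (one_mem_lengthSet ?_)) hbound1
      exact irred_elem iotahat j hcard he hs hκ1 haB (Or.inl hone)
    push_neg at hone
    have hκ2 : ∀ i, 2 ≤ Multiplicative.toAdd a.2 i := fun i => by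
      have h1 := hκ1 i; have h2 := hone i; omega
    by_cases huc : ∀ η : U j, classOfUnit U s iotahat j η = 1
    · -- all units have trivial class
      have hSe : Even (Spar iotahat j e (fun i => Multiplicative.toAdd a.2 i)) := by
        rw [huc, one_mul, ep_pow_eq_one_iff hcard he] at hacls
        exact hacls
      by_cases hd2 : s j = 2 ∧ (EF iotahat j e).card = 2
      · -- dval = 2, bound 3
        have hdv : dval U s iotahat e j = 2 := by
          unfold dval
          rw [if_pos ⟨huc, hd2.1, hd2.2⟩]
        rw [if_pos hdv]
        have hsj2 := hd2.1
        have hEuniv : ∀ i : Fin (s j), i ∈ EF iotahat j e := by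
          have hu := Finset.eq_univ_of_card (EF iotahat j e)
            (by rw [Fintype.card_fin]; omega)
          intro i; rw [hu]; exact Finset.mem_univ i
        have hlt0 : 0 < s j := by omega
        have hlt1 : 1 < s j := by omega
        have hne01 : (⟨0, hlt0⟩ : Fin (s j)) ≠ ⟨1, hlt1⟩ := by
          simp [Fin.ext_iff]
        have hne10 : (⟨1, hlt1⟩ : Fin (s j)) ≠ ⟨0, hlt0⟩ := Ne.symm hne01
        have hvals : ∀ i : Fin (s j), i = ⟨0, hlt0⟩ ∨ i = ⟨1, hlt1⟩ := by
          intro i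
          have hi := i.isLt
          rcases (by omega : (i : ℕ) = 0 ∨ (i : ℕ) = 1) with h | h
          · exact Or.inl (Fin.ext h)
          · exact Or.inr (Fin.ext h)
        have hEpair : EF iotahat j e = {⟨0, hlt0⟩, ⟨1, hlt1⟩} := by
          apply Finset.ext
          intro i
          constructor
          · intro _
            rw [Finset.mem_insert, Finset.mem_singleton]
            exact hvals i
          · intro _
            exact hEuniv i
        have hSk : Spar iotahat j e (fun i => Multiplicative.toAdd a.2 i)
            = Multiplicative.toAdd a.2 ⟨0, hlt0⟩ + Multiplicative.toAdd a.2 ⟨1, hlt1⟩ := by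
          rw [Spar, hEpair, Finset.sum_pair hne01]
        by_cases hpar : Even (Multiplicative.toAdd a.2 ⟨0, hlt0⟩)
        · -- 2-split suffices
          have hEv : Even (Spar iotahat j e
              (fun i => if i = ⟨0, hlt0⟩ then Multiplicative.toAdd a.2 ⟨0, hlt0⟩ - 1 else 1)) := by
            rw [Spar_ite_one, if_pos (hEuniv ⟨0, hlt0⟩), hd2.2]
            rw [Nat.even_iff] at hpar ⊢
            have := hκ2 ⟨0, hlt0⟩
            omega
          have hm₁1 : ∀ i, 1 ≤ (if i = (⟨0, hlt0⟩ : Fin (s j)) then Multiplicative.toAdd a.2 ⟨0, hlt0⟩ - 1 else 1) := by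
            intro i
            beta_reduce; by_cases hi : i = (⟨0, hlt0⟩ : Fin (s j))
            · rw [if_pos hi]; have := hκ2 ⟨0, hlt0⟩; omega
            · rw [if_neg hi]
          have hsum : ∀ i, (if i = (⟨0, hlt0⟩ : Fin (s j)) then Multiplicative.toAdd a.2 ⟨0, hlt0⟩ - 1 else 1)
              + (Multiplicative.toAdd a.2 i - (if i = (⟨0, hlt0⟩ : Fin (s j)) then Multiplicative.toAdd a.2 ⟨0, hlt0⟩ - 1 else 1))
              = Multiplicative.toAdd a.2 i := by
            intro i
            beta_reduce; by_cases hi : i = (⟨0, hlt0⟩ : Fin (s j))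
            · rw [if_pos hi]; (try rw [hi]); have := hκ2 ⟨0, hlt0⟩; omega
            · rw [if_neg hi]; have := hκ2 i; omega
          have hc1 : classOfUnit U s iotahat j a.1 * (Multiplicative.ofAdd e) ^ Spar iotahat j e
              (fun i => if i = ⟨0, hlt0⟩ then Multiplicative.toAdd a.2 ⟨0, hlt0⟩ - 1 else 1) = 1 := by
            rw [huc, one_mul]
            exact ep_pow_even hcard he hEv
          refine le_trans (sInf_le_two_split iotahat j hcard he hs haD haB a.1 (a.1 * a.1⁻¹)
            _ _ (by rw [mul_comm a.1 (a.1⁻¹), ← mul_assoc, mul_inv_cancel, one_mul])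
            hm₁1
            (fun i => by
              beta_reduce; by_cases hi : i = (⟨0, hlt0⟩ : Fin (s j))
              · rw [if_pos hi]; (try rw [hi]); have := hκ2 ⟨0, hlt0⟩; omega
              · rw [if_neg hi]; have := hκ2 i; omega)
            hsum hc1
            (class_compl iotahat j hcard he hacls hc1 hsum)
            (Or.inl ⟨⟨1, hlt1⟩, by beta_reduce; rw [if_neg hne10]⟩)
            (Or.inl ⟨⟨0, hlt0⟩, by beta_reduce; rw [if_pos rfl]; have := hκ2 ⟨0, hlt0⟩; omega⟩)) (by omega)
        · -- 3-split
          have hpar1 : ¬ Even (Multiplicative.toAdd a.2 ⟨1, hlt1⟩) := by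
            intro hcon
            apply hpar
            rw [hSk] at hSe
            rw [Nat.even_iff] at hcon ⊢
            rw [Nat.even_iff] at hSe
            omega
          have hk0 : 3 ≤ Multiplicative.toAdd a.2 ⟨0, hlt0⟩ := by
            have h1 := hκ2 ⟨0, hlt0⟩
            rw [Nat.even_iff] at hpar
            omega
          have hk1 : 3 ≤ Multiplicative.toAdd a.2 ⟨1, hlt1⟩ := by
            have h1 := hκ2 ⟨1, hlt1⟩
            rw [Nat.even_iff] at hpar1
            omega
          refine sInf_le_three_split iotahat j hcard he hs haD haB a.1 1 1
            (fun _ => 1)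
            (fun i => if i = ⟨0, hlt0⟩ then Multiplicative.toAdd a.2 ⟨0, hlt0⟩ - 2 else 1)
            (fun i => if i = ⟨1, hlt1⟩ then Multiplicative.toAdd a.2 ⟨1, hlt1⟩ - 2 else 1)
            (by rw [mul_one, mul_one])
            (fun i => le_refl 1)
            (fun i => ?_) (fun i => ?_) (fun i => ?_) ?_ ?_ ?_
            (Or.inl ⟨⟨0, hlt0⟩, rfl⟩)
            (Or.inl ⟨⟨1, hlt1⟩, by beta_reduce; rw [if_neg hne10]⟩)
            (Or.inl ⟨⟨0, hlt0⟩, by beta_reduce; rw [if_neg hne01]⟩)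
          · beta_reduce; by_cases hi : i = (⟨0, hlt0⟩ : Fin (s j))
            · rw [if_pos hi]; omega
            · rw [if_neg hi]
          · beta_reduce; by_cases hi : i = (⟨1, hlt1⟩ : Fin (s j))
            · rw [if_pos hi]; omega
            · rw [if_neg hi]
          · beta_reduce; rcases hvals i with hi | hi
            · rw [hi, if_pos rfl, if_neg hne01]; omega
            · rw [hi, if_neg hne10, if_pos rfl]; omega
          · rw [huc, one_mul, Spar_const_one, hd2.2]
            exact ep_pow_even hcard he (by decide)
          · rw [huc, one_mul]
            apply ep_pow_even hcard he
            rw [Spar_ite_one, if_pos (hEuniv ⟨0, hlt0⟩), hd2.2]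
            rw [Nat.even_iff] at hpar ⊢
            omega
          · rw [huc, one_mul]
            apply ep_pow_even hcard he
            rw [Spar_ite_one, if_pos (hEuniv ⟨1, hlt1⟩), hd2.2]
            rw [Nat.even_iff] at hpar1 ⊢
            omega
      · -- bound 2
        refine le_trans ?_ hbound2
        have hlt0 : 0 < s j := by omega
        have hlt1 : 1 < s j := by omega
        have main : ∀ m₁ : Fin (s j) → ℕ,
            (∀ i, 1 ≤ m₁ i) → (∀ i, m₁ i < Multiplicative.toAdd a.2 i) →
            Even (Spar iotahat j e m₁) →
            GoodShape iotahat j e m₁ →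
            GoodShape iotahat j e (fun i => Multiplicative.toAdd a.2 i - m₁ i) →
            sInf (lengthSet (⟨embD (G := G) j ⟨a, haD⟩, haB⟩ :
              ↥(TBlock G U s (iotahat.comp (embedT U s))))) ≤ 2 := by
          intro m₁ h1 h2 hEv hsh1 hsh2
          have hsum : ∀ i, m₁ i + (Multiplicative.toAdd a.2 i - m₁ i) = Multiplicative.toAdd a.2 i := fun i => by
            have := h2 i; omega
          have hc1 : classOfUnit U s iotahat j a.1
              * (Multiplicative.ofAdd e) ^ Spar iotahat j e m₁ = 1 := by
            rw [huc, one_mul]; exact ep_pow_even hcard he hEv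
          exact sInf_le_two_split iotahat j hcard he hs haD haB a.1 (a.1 * a.1⁻¹)
            m₁ (fun i => Multiplicative.toAdd a.2 i - m₁ i)
            (by rw [mul_comm a.1 (a.1⁻¹), ← mul_assoc, mul_inv_cancel, one_mul])
            h1 (fun i => by beta_reduce; have := h2 i; omega) hsum hc1
            (class_compl iotahat j hcard he hacls hc1 hsum) hsh1 hsh2
        by_cases hEe : Even ((EF iotahat j e).card)
        · by_cases hEuniv : ∀ i : Fin (s j), i ∈ EF iotahat j e
          · have hcardE : (EF iotahat j e).card = s j := by
              rw [Finset.eq_univ_iff_forall.mpr hEuniv, Finset.card_univ, Fintype.card_fin]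
            have hs3 : 3 ≤ s j := by
              by_contra hcon
              push_neg at hcon
              exact hd2 ⟨by omega, by omega⟩
            by_cases hke : ∃ i2', Even (Multiplicative.toAdd a.2 i2')
            · obtain ⟨ie, hie⟩ := hke
              obtain ⟨io, hio⟩ := other_index j hs2 ie
              refine main (fun i => if i = ie then Multiplicative.toAdd a.2 ie - 1 else 1)
                (fun i => ?_) (fun i => ?_) ?_
                (Or.inl ⟨io, if_neg hio⟩)
                (Or.inl ⟨ie, by beta_reduce; rw [if_pos rfl]; have := hκ2 ie; omega⟩)
              · beta_reduce; by_cases hi : i = ie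
                · rw [if_pos hi]; (try rw [hi]); have := hκ2 ie; omega
                · rw [if_neg hi]
              · beta_reduce; by_cases hi : i = ie
                · rw [if_pos hi]; (try rw [hi]); have := hκ2 ie; omega
                · rw [if_neg hi]; have := hκ2 i; omega
              · rw [Spar_ite_one, if_pos (hEuniv ie)]
                rw [Nat.even_iff] at hie hEe ⊢
                have h1 := hκ2 ie
                have hc1le : 1 ≤ (EF iotahat j e).card := by omega
                omega
            · push_neg at hke
              have hne01 : (⟨0, hlt0⟩ : Fin (s j)) ≠ ⟨1, hlt1⟩ := by simp [Fin.ext_iff]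
              have hi2lt : 2 < s j := by omega
              have h20 : (⟨2, hi2lt⟩ : Fin (s j)) ≠ ⟨0, hlt0⟩ := by simp [Fin.ext_iff]
              have h21 : (⟨2, hi2lt⟩ : Fin (s j)) ≠ ⟨1, hlt1⟩ := by simp [Fin.ext_iff]
              refine main (fun i => if i = ⟨0, hlt0⟩ then Multiplicative.toAdd a.2 ⟨0, hlt0⟩ - 1
                  else if i = ⟨1, hlt1⟩ then Multiplicative.toAdd a.2 ⟨1, hlt1⟩ - 1 else 1)
                (fun i => ?_) (fun i => ?_) ?_
                (Or.inl ⟨⟨2, hi2lt⟩, by beta_reduce; rw [if_neg h20, if_neg h21]⟩)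
                (Or.inl ⟨⟨0, hlt0⟩, by beta_reduce; rw [if_pos rfl]; have := hκ2 ⟨0, hlt0⟩; omega⟩)
              · beta_reduce; by_cases hi : i = (⟨0, hlt0⟩ : Fin (s j))
                · rw [if_pos hi]; (try rw [hi]); have := hκ2 ⟨0, hlt0⟩; omega
                · rw [if_neg hi]
                  by_cases hi' : i = (⟨1, hlt1⟩ : Fin (s j))
                  · rw [if_pos hi']; (try rw [hi']); have := hκ2 ⟨1, hlt1⟩; omega
                  · rw [if_neg hi']
              · beta_reduce; by_cases hi : i = (⟨0, hlt0⟩ : Fin (s j))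
                · rw [if_pos hi]; (try rw [hi]); have := hκ2 ⟨0, hlt0⟩; omega
                · rw [if_neg hi]
                  by_cases hi' : i = (⟨1, hlt1⟩ : Fin (s j))
                  · rw [if_pos hi']; (try rw [hi']); have := hκ2 ⟨1, hlt1⟩; omega
                  · rw [if_neg hi']; have := hκ2 i; omega
              · rw [Spar_ite_two iotahat j hne01 (hEuniv ⟨0, hlt0⟩) (hEuniv ⟨1, hlt1⟩)]
                have ho0 := hke ⟨0, hlt0⟩
                have ho1 := hke ⟨1, hlt1⟩
                rw [Nat.even_iff] at hEe ⊢
                rw [Nat.even_iff] at ho0 ho1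
                have h1 := hκ2 ⟨0, hlt0⟩
                have h2 := hκ2 ⟨1, hlt1⟩
                have h3 : 2 ≤ (EF iotahat j e).card := by omega
                omega
          · push_neg at hEuniv
            obtain ⟨ie, hie⟩ := hEuniv
            obtain ⟨io, hio⟩ := other_index j hs2 ie
            refine main (fun i => if i = ie then Multiplicative.toAdd a.2 ie - 1 else 1)
              (fun i => ?_) (fun i => ?_) ?_
              (Or.inl ⟨io, if_neg hio⟩)
              (Or.inl ⟨ie, by beta_reduce; rw [if_pos rfl]; have := hκ2 ie; omega⟩)
            · beta_reduce; by_cases hi : i = ie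
              · rw [if_pos hi]; (try rw [hi]); have := hκ2 ie; omega
              · rw [if_neg hi]
            · beta_reduce; by_cases hi : i = ie
              · rw [if_pos hi]; (try rw [hi]); have := hκ2 ie; omega
              · rw [if_neg hi]; have := hκ2 i; omega
            · rw [Spar_ite_one, if_neg hie]
              exact hEe
        · by_cases hko : ∃ i ∈ EF iotahat j e, ¬ Even (Multiplicative.toAdd a.2 i)
          · obtain ⟨ie, hieE, hieo⟩ := hko
            obtain ⟨io, hio⟩ := other_index j hs2 ie
            refine main (fun i => if i = ie then Multiplicative.toAdd a.2 ie - 1 else 1)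
              (fun i => ?_) (fun i => ?_) ?_
              (Or.inl ⟨io, if_neg hio⟩)
              (Or.inl ⟨ie, by beta_reduce; rw [if_pos rfl]; have := hκ2 ie; omega⟩)
            · beta_reduce; by_cases hi : i = ie
              · rw [if_pos hi]; (try rw [hi]); have := hκ2 ie; omega
              · rw [if_neg hi]
            · beta_reduce; by_cases hi : i = ie
              · rw [if_pos hi]; (try rw [hi]); have := hκ2 ie; omega
              · rw [if_neg hi]; have := hκ2 i; omega
            · rw [Spar_ite_one, if_pos hieE]
              rw [Nat.even_iff] at hieo hEe ⊢
              have h1 := hκ2 ie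
              have hc1le : 1 ≤ (EF iotahat j e).card := by
                have := Finset.card_pos.mpr ⟨ie, hieE⟩
                omega
              omega
          · push_neg at hko
            by_cases hk4 : ∃ i ∈ EF iotahat j e, 4 ≤ Multiplicative.toAdd a.2 i
            · obtain ⟨ie, hieE, hie4⟩ := hk4
              by_cases hcE1 : (EF iotahat j e).card = 1
              · obtain ⟨io, hio⟩ := other_index j hs2 ie
                have hEsing : ∀ i ∈ EF iotahat j e, i = ie := by
                  intro i hi
                  obtain ⟨x, hx⟩ := Finset.card_eq_one.mp hcE1
                  rw [hx, Finset.mem_singleton] at hi hieE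
                  rw [hi, hieE]
                refine main (fun i => if i = ie then Multiplicative.toAdd a.2 ie - 2 else 1)
                  (fun i => ?_) (fun i => ?_) ?_
                  (Or.inl ⟨io, if_neg hio⟩)
                  (Or.inr ⟨huc, by rw [hcE1]; decide, fun i hi => ?_⟩)
                · beta_reduce; by_cases hi : i = ie
                  · rw [if_pos hi]; (try rw [hi]); omega
                  · rw [if_neg hi]
                · beta_reduce; by_cases hi : i = ie
                  · rw [if_pos hi]; (try rw [hi]); omega
                  · rw [if_neg hi]; have := hκ2 i; omega
                · rw [Spar_ite_one, if_pos hieE, hcE1]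
                  have hev := hko ie hieE
                  rw [Nat.even_iff] at hev ⊢
                  omega
                · beta_reduce; rw [hEsing i hi, if_pos rfl]
                  omega
              · have hcE3 : 3 ≤ (EF iotahat j e).card := by
                  have hpos := Finset.card_pos.mpr ⟨ie, hieE⟩
                  rw [Nat.even_iff] at hEe
                  omega
                obtain ⟨i3, hi3E, hi3ne⟩ :=
                  Finset.exists_mem_ne (s := EF iotahat j e) (by omega) ie
                have hs3 : 3 ≤ s j := by omega
                obtain ⟨i4, h4a, h4b⟩ := third_index j hs3 ie i3
                have hie3 : ie ≠ i3 := Ne.symm hi3ne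
                refine main (fun i => if i = ie then 2
                    else if i = i3 then Multiplicative.toAdd a.2 i3 - 1 else 1)
                  (fun i => ?_) (fun i => ?_) ?_
                  (Or.inl ⟨i4, by beta_reduce; rw [if_neg h4a, if_neg h4b]⟩)
                  (Or.inl ⟨i3, by beta_reduce; rw [if_neg hi3ne, if_pos rfl]; have := hκ2 i3; omega⟩)
                · beta_reduce; by_cases hi : i = ie
                  · rw [if_pos hi]; omega
                  · rw [if_neg hi]
                    by_cases hi' : i = i3
                    · rw [if_pos hi']; (try rw [hi']); have := hκ2 i3; omega
                    · rw [if_neg hi']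
                · beta_reduce; by_cases hi : i = ie
                  · rw [if_pos hi]; (try rw [hi]); omega
                  · rw [if_neg hi]
                    by_cases hi' : i = i3
                    · rw [if_pos hi']; (try rw [hi']); have := hκ2 i3; omega
                    · rw [if_neg hi']; have := hκ2 i; omega
                · rw [Spar_ite_two iotahat j hie3 hieE hi3E]
                  have hev := hko i3 hi3E
                  rw [Nat.even_iff] at hev hEe ⊢
                  have h1 := hκ2 i3
                  omega
            · push_neg at hk4
              refine le_trans (Nat.sInf_le (one_mem_lengthSet ?_)) (by omega)
              refine irred_elem iotahat j hcard he hs hκ1 haB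
                (Or.inr ⟨huc, hEe, fun i hi => ?_⟩)
              have h1 := hko i hi
              have h2 := hk4 i hi
              have h3 := hκ2 i
              rw [Nat.even_iff] at h1
              show Multiplicative.toAdd a.2 i = 2
              omega
    · -- some unit has nontrivial class
      refine le_trans ?_ hbound2
      push_neg at huc
      obtain ⟨η, hη⟩ := huc
      have hηe : classOfUnit U s iotahat j η = Multiplicative.ofAdd e := by
        rcases g_two hcard he (Multiplicative.toAdd (classOfUnit U s iotahat j η)) with h | h
        · exact absurd (by
            rw [← ofAdd_toAdd (classOfUnit U s iotahat j η), h, ofAdd_zero]) hη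
        · rw [← ofAdd_toAdd (classOfUnit U s iotahat j η), h]
      have hlt0 : 0 < s j := by omega
      have hlt1 : 1 < s j := by omega
      have hne10 : (⟨1, hlt1⟩ : Fin (s j)) ≠ ⟨0, hlt0⟩ := by simp [Fin.ext_iff]
      set m₁ := fun i : Fin (s j) =>
        if i = (⟨0, hlt0⟩ : Fin (s j)) then Multiplicative.toAdd a.2 ⟨0, hlt0⟩ - 1 else 1 with hm1def
      set α₁ := if Even (Spar iotahat j e m₁) then (1 : U j) else η with hα1def
      have hc1 : classOfUnit U s iotahat j α₁ * (Multiplicative.ofAdd e) ^ Spar iotahat j e m₁ = 1 := by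
        by_cases hp : Even (Spar iotahat j e m₁)
        · rw [hα1def, if_pos hp, cu_one, one_mul, ep_pow_even hcard he hp]
        · rw [hα1def, if_neg hp, hηe, ep_pow_odd hcard he hp, ep_two hcard he]
      have hm₁1 : ∀ i, 1 ≤ m₁ i := by
        intro i
        simp only [hm1def]
        beta_reduce; by_cases hi : i = (⟨0, hlt0⟩ : Fin (s j))
        · rw [if_pos hi]; have := hκ2 ⟨0, hlt0⟩; omega
        · rw [if_neg hi]
      have hm₁lt : ∀ i, m₁ i < Multiplicative.toAdd a.2 i := by
        intro i
        simp only [hm1def]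
        beta_reduce; by_cases hi : i = (⟨0, hlt0⟩ : Fin (s j))
        · rw [if_pos hi]; (try rw [hi]); have := hκ2 ⟨0, hlt0⟩; omega
        · rw [if_neg hi]; have := hκ2 i; omega
      have hsum : ∀ i, m₁ i + (Multiplicative.toAdd a.2 i - m₁ i) = Multiplicative.toAdd a.2 i := fun i => by
        have := hm₁lt i; omega
      exact sInf_le_two_split iotahat j hcard he hs haD haB α₁ (a.1 * α₁⁻¹)
        m₁ (fun i => Multiplicative.toAdd a.2 i - m₁ i)
        (by rw [mul_comm a.1 (α₁⁻¹), ← mul_assoc, mul_inv_cancel, one_mul])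
        hm₁1 (fun i => by beta_reduce; have := hm₁lt i; omega) hsum hc1
        (class_compl iotahat j hcard he hacls hc1 hsum)
        (Or.inl ⟨⟨1, hlt1⟩, by simp [hm1def, hne10]⟩)
        (Or.inl ⟨⟨0, hlt0⟩, by
          have := hκ2 ⟨0, hlt0⟩
          simp only [hm1def]
          simp only [if_pos]
          omega⟩)


end
end ArXivSeminormal
end

section
/- Let n ≥ 3 and let H = {p_1^{k_1} p_2^{k_2} : k_1, k_2 ∈ ℕ, k_1 ≡ k_2 (mod n)} ∪ {1} ⊆ F({p_1, p_2}), the free abelian monoid on two elements p_1, p_2. Then: (i) the set of atoms of H is A(H) = {p_1 p_2^{k} : k ∈ 1 + nℕ_0} ∪ {p_1^{k} p_2 : k ∈ 1 + nℕ_0}; (ii) L_H(p_1^{n+2} p_2^{n+2}) = {2, n+2}; (iii) every element of Δ(H) is divisible by n, n ∈ Δ(H), and hence min Δ(H) = n. -/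
namespace ArXivSeminormal

attribute [local instance] Classical.propDecidable

noncomputable section

/-! ### Generic factorization theory in commutative monoids -/

variable {M : Type*} [CommMonoid M]

/-- The monoid `H = {p_1^{k_1} p_2^{k_2} : k_1, k_2 ∈ ℕ, k_1 ≡ k_2 (mod n)} ∪ {1}`
inside the free abelian monoid on `{p_1, p_2}` (letters `0` and `1` of `Fin 2`). -/
def congMonoid (n : ℕ) : Submonoid (FreeCM (Fin 2)) where
  carrier := {x | x = 1 ∨
    (1 ≤ Multiset.count 0 (Multiplicative.toAdd x) ∧
     1 ≤ Multiset.count 1 (Multiplicative.toAdd x) ∧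
     Multiset.count 0 (Multiplicative.toAdd x) ≡
       Multiset.count 1 (Multiplicative.toAdd x) [MOD n])}
  one_mem' := Or.inl rfl
  mul_mem' := by
    rintro a b (rfl | ⟨ha0, ha1, ha⟩) (rfl | ⟨hb0, hb1, hb⟩)
    · exact Or.inl (mul_one 1)
    · rw [Set.mem_setOf_eq, one_mul]; exact Or.inr ⟨hb0, hb1, hb⟩
    · rw [Set.mem_setOf_eq, mul_one]; exact Or.inr ⟨ha0, ha1, ha⟩
    · refine Or.inr ?_
      have key : Multiplicative.toAdd (a * b)
          = Multiplicative.toAdd a + Multiplicative.toAdd b := rfl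
      refine ⟨?_, ?_, ?_⟩
      · rw [key, Multiset.count_add]; omega
      · rw [key, Multiset.count_add]; omega
      · rw [key, Multiset.count_add, Multiset.count_add]
        exact Nat.ModEq.add ha hb

/-! ### Auxiliary machinery for Example 3.4.3(a) -/

section Aux

/-- Letter count. -/
private def cc (i : Fin 2) (x : FreeCM (Fin 2)) : ℕ :=
  Multiset.count i (Multiplicative.toAdd x)

private lemma cc_mul (i : Fin 2) (x y : FreeCM (Fin 2)) :
    cc i (x * y) = cc i x + cc i y :=
  Multiset.count_add _ _ _

private lemma cc_one (i : Fin 2) : cc i (1 : FreeCM (Fin 2)) = 0 := rfl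

private def pel (k l : ℕ) : FreeCM (Fin 2) :=
  Multiplicative.ofAdd
    (Multiset.replicate k (0 : Fin 2) + Multiset.replicate l (1 : Fin 2))

private lemma cc0_pel (k l : ℕ) : cc 0 (pel k l) = k := by
  simp [cc, pel, Multiset.count_replicate]

private lemma cc1_pel (k l : ℕ) : cc 1 (pel k l) = l := by
  simp [cc, pel, Multiset.count_replicate]

private lemma eq_pel (x : FreeCM (Fin 2)) : x = pel (cc 0 x) (cc 1 x) := by
  have h : Multiplicative.toAdd x =
      Multiset.replicate (cc 0 x) (0 : Fin 2) + Multiset.replicate (cc 1 x) (1 : Fin 2) := by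
    rw [Multiset.ext, Fin.forall_fin_two]
    constructor
    · simp [Multiset.count_replicate, cc]
    · simp [Multiset.count_replicate, cc]
  exact h

private lemma freecm_ext {x y : FreeCM (Fin 2)} (h0 : cc 0 x = cc 0 y)
    (h1 : cc 1 x = cc 1 y) : x = y := by
  rw [eq_pel x, h0, h1, ← eq_pel y]

private lemma eq_one_iff {x : FreeCM (Fin 2)} : x = 1 ↔ cc 0 x = 0 ∧ cc 1 x = 0 := by
  constructor
  · rintro rfl; exact ⟨rfl, rfl⟩
  · rintro ⟨h0, h1⟩; exact freecm_ext h0 h1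

private lemma mem_cong {n : ℕ} {x : FreeCM (Fin 2)} :
    x ∈ congMonoid n ↔
      x = 1 ∨ (1 ≤ cc 0 x ∧ 1 ≤ cc 1 x ∧ cc 0 x ≡ cc 1 x [MOD n]) :=
  Iff.rfl

private instance ssu (n : ℕ) : Subsingleton (↥(congMonoid n))ˣ := by
  constructor
  have key : ∀ u : (↥(congMonoid n))ˣ, u = 1 := by
    intro u
    have h : (u : ↥(congMonoid n)) * ((u⁻¹ : (↥(congMonoid n))ˣ) : ↥(congMonoid n)) = 1 :=
      u.mul_inv
    have h' : ((u : ↥(congMonoid n)) : FreeCM (Fin 2)) *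
        (((u⁻¹ : (↥(congMonoid n))ˣ) : ↥(congMonoid n)) : FreeCM (Fin 2)) = 1 :=
      congrArg Subtype.val h
    have h0 : cc 0 ((u : ↥(congMonoid n)) : FreeCM (Fin 2)) = 0 := by
      have := congrArg (cc 0) h'
      rw [cc_mul, cc_one] at this
      omega
    have h1 : cc 1 ((u : ↥(congMonoid n)) : FreeCM (Fin 2)) = 0 := by
      have := congrArg (cc 1) h'
      rw [cc_mul, cc_one] at this
      omega
    refine Units.ext (Subtype.ext ?_)
    exact congrArg Subtype.val (Subtype.ext (eq_one_iff.2 ⟨h0, h1⟩) :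
      (u : ↥(congMonoid n)) = 1)
  intro u v
  rw [key u, key v]

private lemma isUnit_iff' {n : ℕ} {a : ↥(congMonoid n)} : IsUnit a ↔ a = 1 := by
  constructor
  · rintro ⟨u, rfl⟩
    rw [Subsingleton.elim u 1, Units.val_one]
  · rintro rfl; exact isUnit_one

private lemma unit_of_cc_zero {n : ℕ} {b : ↥(congMonoid n)}
    (h : cc 0 (b : FreeCM (Fin 2)) = 0 ∨ cc 1 (b : FreeCM (Fin 2)) = 0) : IsUnit b := by
  rcases (mem_cong.1 b.2) with h1 | ⟨hb0, hb1, _⟩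
  · exact isUnit_iff'.2 (Subtype.ext h1)
  · omega

private lemma irr_iff {n : ℕ} (hn : 3 ≤ n) (a : ↥(congMonoid n)) :
    Irreducible a ↔
      ((cc 0 (a : FreeCM (Fin 2)) = 1 ∧ ∃ m, cc 1 (a : FreeCM (Fin 2)) = 1 + n * m) ∨
       (cc 1 (a : FreeCM (Fin 2)) = 1 ∧ ∃ m, cc 0 (a : FreeCM (Fin 2)) = 1 + n * m)) := by
  constructor
  · rintro ⟨hu, hsplit⟩
    rw [isUnit_iff'] at hu
    rcases (mem_cong.1 a.2) with h1 | ⟨h0, h1, hmod⟩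
    · exact absurd (Subtype.ext h1) hu
    have hone : cc 0 (a : FreeCM (Fin 2)) = 1 ∨ cc 1 (a : FreeCM (Fin 2)) = 1 := by
      by_contra hcon
      push_neg at hcon
      obtain ⟨hc0, hc1⟩ := hcon
      -- both counts ≥ 2 : decompose a = (p1 p2) * rest
      have hb : pel 1 1 ∈ congMonoid n := by
        rw [mem_cong]
        exact Or.inr ⟨by rw [cc0_pel], by rw [cc1_pel], by rw [cc0_pel, cc1_pel]⟩
      have hcmod : cc 0 (a : FreeCM (Fin 2)) - 1 ≡ cc 1 (a : FreeCM (Fin 2)) - 1 [MOD n] := by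
        apply Nat.ModEq.add_right_cancel' (c := 1)
        rw [Nat.sub_add_cancel h0, Nat.sub_add_cancel h1]
        exact hmod
      have hc : pel (cc 0 (a : FreeCM (Fin 2)) - 1) (cc 1 (a : FreeCM (Fin 2)) - 1)
          ∈ congMonoid n := by
        rw [mem_cong]
        refine Or.inr ⟨?_, ?_, ?_⟩
        · rw [cc0_pel]; omega
        · rw [cc1_pel]; omega
        · rw [cc0_pel, cc1_pel]; exact hcmod
      have heq : a = (⟨pel 1 1, hb⟩ : ↥(congMonoid n)) * ⟨pel _ _, hc⟩ := by
        apply Subtype.ext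
        show (a : FreeCM (Fin 2)) = pel 1 1 * pel _ _
        apply freecm_ext
        · rw [cc_mul, cc0_pel, cc0_pel]; omega
        · rw [cc_mul, cc1_pel, cc1_pel]; omega
      rcases hsplit heq with hub | huc
      · have := congrArg (fun z : ↥(congMonoid n) => cc 0 (z : FreeCM (Fin 2)))
          (isUnit_iff'.1 hub)
        simp only [cc0_pel] at this
        rw [show ((1 : ↥(congMonoid n)) : FreeCM (Fin 2)) = 1 from rfl, cc_one] at this
        omega
      · have := congrArg (fun z : ↥(congMonoid n) => cc 0 (z : FreeCM (Fin 2)))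
          (isUnit_iff'.1 huc)
        simp only [cc0_pel] at this
        rw [show ((1 : ↥(congMonoid n)) : FreeCM (Fin 2)) = 1 from rfl, cc_one] at this
        omega
    have hmod' : cc 0 (a : FreeCM (Fin 2)) % n = cc 1 (a : FreeCM (Fin 2)) % n := hmod
    have hdm0 := Nat.div_add_mod (cc 0 (a : FreeCM (Fin 2))) n
    have hdm1 := Nat.div_add_mod (cc 1 (a : FreeCM (Fin 2))) n
    have h1n : (1 : ℕ) % n = 1 := Nat.mod_eq_of_lt (by omega)
    rcases hone with he | he
    · refine Or.inl ⟨he, cc 1 (a : FreeCM (Fin 2)) / n, ?_⟩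
      rw [he, h1n] at hmod'
      omega
    · refine Or.inr ⟨he, cc 0 (a : FreeCM (Fin 2)) / n, ?_⟩
      rw [he, h1n] at hmod'
      omega
  · intro hyp
    have hne : a ≠ 1 := by
      intro h
      have h0 := congrArg (fun z : ↥(congMonoid n) => cc 0 (z : FreeCM (Fin 2))) h
      have h1 := congrArg (fun z : ↥(congMonoid n) => cc 1 (z : FreeCM (Fin 2))) h
      rw [show ((1 : ↥(congMonoid n)) : FreeCM (Fin 2)) = 1 from rfl, cc_one] at h0 h1
      rcases hyp with ⟨hc, _⟩ | ⟨hc, _⟩ <;> omega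
    refine ⟨fun h => hne (isUnit_iff'.1 h), ?_⟩
    intro b c habc
    have hmul0 : cc 0 (a : FreeCM (Fin 2)) =
        cc 0 (b : FreeCM (Fin 2)) + cc 0 (c : FreeCM (Fin 2)) := by
      rw [habc]; exact cc_mul 0 _ _
    have hmul1 : cc 1 (a : FreeCM (Fin 2)) =
        cc 1 (b : FreeCM (Fin 2)) + cc 1 (c : FreeCM (Fin 2)) := by
      rw [habc]; exact cc_mul 1 _ _
    rcases hyp with ⟨hc1, _⟩ | ⟨hc1, _⟩
    · rcases (by omega : cc 0 (b : FreeCM (Fin 2)) = 0 ∨ cc 0 (c : FreeCM (Fin 2)) = 0) with h | h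
      · exact Or.inl (unit_of_cc_zero (Or.inl h))
      · exact Or.inr (unit_of_cc_zero (Or.inl h))
    · rcases (by omega : cc 1 (b : FreeCM (Fin 2)) = 0 ∨ cc 1 (c : FreeCM (Fin 2)) = 0) with h | h
      · exact Or.inl (unit_of_cc_zero (Or.inr h))
      · exact Or.inr (unit_of_cc_zero (Or.inr h))

end Aux
section Aux2

private noncomputable def ae (n : ℕ) : ↥(congMonoid n) ≃* Associates ↥(congMonoid n) :=
  MulEquiv.ofBijective Associates.mkMonoidHom
    ⟨Associates.mk_injective, Associates.mk_surjective⟩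

private lemma ae_apply {n : ℕ} (a : ↥(congMonoid n)) : ae n a = Associates.mk a := rfl

private lemma irr_ae {n : ℕ} {x : Associates ↥(congMonoid n)} :
    Irreducible x ↔ Irreducible ((ae n).symm x) := by
  exact (MulEquiv.irreducible_iff (ae n).symm).symm

private lemma lengthSet_eq {n : ℕ} (a : ↥(congMonoid n)) :
    lengthSet a = {k | ∃ w : Multiset ↥(congMonoid n),
      (∀ x ∈ w, Irreducible x) ∧ w.prod = a ∧ Multiset.card w = k} := by
  ext k
  constructor
  · rintro ⟨z, ⟨hirr, hprod⟩, hcard⟩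
    refine ⟨z.map (ae n).symm, ?_, ?_, by rw [Multiset.card_map, hcard]⟩
    · intro x hx
      obtain ⟨y, hy, rfl⟩ := Multiset.mem_map.1 hx
      exact irr_ae.1 (hirr y hy)
    · have h := map_multiset_prod ((ae n).symm) z
      rw [hprod] at h
      rw [← h, ← ae_apply, MulEquiv.symm_apply_apply]
  · rintro ⟨w, hirr, hprod, hcard⟩
    refine ⟨w.map (ae n), ⟨?_, ?_⟩, by rw [Multiset.card_map, hcard]⟩
    · intro x hx
      obtain ⟨y, hy, rfl⟩ := Multiset.mem_map.1 hx
      exact (MulEquiv.irreducible_iff (ae n)).2 (hirr y hy)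
    · have h := map_multiset_prod (ae n) w
      rw [hprod] at h
      rw [← h, ae_apply]

private lemma nat_sum_aux {n : ℕ} (t : Multiset ℕ)
    (h : ∀ x ∈ t, x % n = 1 % n ∧ 1 ≤ x) :
    t.sum % n = (Multiset.card t) % n ∧ Multiset.card t ≤ t.sum := by
  induction t using Multiset.induction with
  | empty => simp
  | cons a s ih =>
    obtain ⟨ha, ha1⟩ := h a (Multiset.mem_cons_self a s)
    obtain ⟨ih1, ih2⟩ := ih fun x hx => h x (Multiset.mem_cons_of_mem hx)
    constructor
    · rw [Multiset.sum_cons, Multiset.card_cons]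
      have : a + s.sum ≡ 1 + Multiset.card s [MOD n] :=
        Nat.ModEq.add (ha : a ≡ 1 [MOD n]) (ih1 : s.sum ≡ Multiset.card s [MOD n])
      calc (a + s.sum) % n = (1 + Multiset.card s) % n := this
        _ = (Multiset.card s + 1) % n := by rw [Nat.add_comm]
    · rw [Multiset.sum_cons, Multiset.card_cons]; omega

private lemma cc_prod {n : ℕ} (i : Fin 2) (w : Multiset ↥(congMonoid n)) :
    cc i ((w.prod : ↥(congMonoid n)) : FreeCM (Fin 2)) =
      (w.map fun (x : ↥(congMonoid n)) => cc i (x : FreeCM (Fin 2))).sum := by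
  induction w using Multiset.induction with
  | empty => simp [cc_one]
  | cons a t ih =>
    rw [Multiset.prod_cons, Multiset.map_cons, Multiset.sum_cons, ← ih]
    exact cc_mul i _ _

private lemma length_facts {n : ℕ} (hn : 3 ≤ n) {a : ↥(congMonoid n)} {k : ℕ}
    (hk : k ∈ lengthSet a) :
    k % n = cc 0 (a : FreeCM (Fin 2)) % n ∧
    k % n = cc 1 (a : FreeCM (Fin 2)) % n ∧
    k ≤ cc 0 (a : FreeCM (Fin 2)) := by
  rw [lengthSet_eq] at hk
  obtain ⟨w, hirr, hprod, hcard⟩ := hk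
  have atom : ∀ y ∈ w, (cc 0 (y : FreeCM (Fin 2)) % n = 1 % n ∧ 1 ≤ cc 0 (y : FreeCM (Fin 2))) ∧
      (cc 1 (y : FreeCM (Fin 2)) % n = 1 % n ∧ 1 ≤ cc 1 (y : FreeCM (Fin 2))) := by
    intro y hy
    rcases (irr_iff hn y).1 (hirr y hy) with ⟨h1, m, h2⟩ | ⟨h1, m, h2⟩
    · exact ⟨⟨by rw [h1], by omega⟩,
        ⟨by rw [h2, Nat.mul_comm, Nat.add_mul_mod_self_right], by omega⟩⟩
    · exact ⟨⟨by rw [h2, Nat.mul_comm, Nat.add_mul_mod_self_right], by omega⟩,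
        ⟨by rw [h1], by omega⟩⟩
  have key0 : ∀ x ∈ w.map fun (x : ↥(congMonoid n)) => cc 0 (x : FreeCM (Fin 2)),
      x % n = 1 % n ∧ 1 ≤ x := by
    intro x hx
    obtain ⟨y, hy, rfl⟩ := Multiset.mem_map.1 hx
    exact (atom y hy).1
  have key1 : ∀ x ∈ w.map fun (x : ↥(congMonoid n)) => cc 1 (x : FreeCM (Fin 2)),
      x % n = 1 % n ∧ 1 ≤ x := by
    intro x hx
    obtain ⟨y, hy, rfl⟩ := Multiset.mem_map.1 hx
    exact (atom y hy).2
  have h0 := nat_sum_aux _ key0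
  have h1 := nat_sum_aux _ key1
  rw [Multiset.card_map] at h0 h1
  rw [← hprod, cc_prod 0, cc_prod 1, ← hcard]
  exact ⟨(h0.1).symm, (h1.1).symm, h0.2⟩

end Aux2
section Aux3

private lemma mem_pel {n k l : ℕ} (hk : 1 ≤ k) (hl : 1 ≤ l) (h : k ≡ l [MOD n]) :
    pel k l ∈ congMonoid n := by
  rw [mem_cong]
  exact Or.inr ⟨by rw [cc0_pel]; exact hk, by rw [cc1_pel]; exact hl,
    by rw [cc0_pel, cc1_pel]; exact h⟩

private lemma cc_pow (i : Fin 2) (x : FreeCM (Fin 2)) (k : ℕ) :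
    cc i (x ^ k) = k * cc i x := by
  unfold cc
  rw [toAdd_pow]
  exact Multiset.count_nsmul _ _ _

private lemma ls_a0 {n : ℕ} (hn : 3 ≤ n) (h : pel (n + 2) (n + 2) ∈ congMonoid n) :
    lengthSet (⟨pel (n + 2) (n + 2), h⟩ : ↥(congMonoid n)) = {2, n + 2} := by
  ext k
  simp only [Set.mem_insert_iff, Set.mem_singleton_iff]
  constructor
  · intro hk
    obtain ⟨hm0, _, hle⟩ := length_facts hn hk
    have hcc0 : cc 0 ((⟨pel (n + 2) (n + 2), h⟩ : ↥(congMonoid n)) : FreeCM (Fin 2))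
        = n + 2 := cc0_pel _ _
    rw [hcc0] at hm0 hle
    have h2 : (n + 2) % n = 2 := by
      rw [Nat.add_comm, Nat.add_mod_right]
      exact Nat.mod_eq_of_lt (by omega)
    have hm0' : k % n = 2 := by rw [hm0, h2]
    rcases Nat.lt_or_ge k n with h' | h'
    · left; rwa [Nat.mod_eq_of_lt h'] at hm0'
    · right
      have hsub : (k - n) % n = 2 := by rw [← Nat.mod_eq_sub_mod h']; exact hm0'
      have hlt : k - n < n := by omega
      rw [Nat.mod_eq_of_lt hlt] at hsub
      omega
  · rintro (rfl | rfl)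
    · have hu : pel 1 (n + 1) ∈ congMonoid n :=
        mem_pel le_rfl (by omega) ((Nat.modEq_iff_dvd' (by omega)).2 ⟨1, by omega⟩)
      have hv : pel (n + 1) 1 ∈ congMonoid n :=
        mem_pel (by omega) le_rfl (((Nat.modEq_iff_dvd' (by omega)).2 ⟨1, by omega⟩).symm)
      set u : ↥(congMonoid n) := ⟨pel 1 (n + 1), hu⟩ with hu'
      set v : ↥(congMonoid n) := ⟨pel (n + 1) 1, hv⟩ with hv'
      rw [lengthSet_eq]
      refine ⟨{u, v}, ?_, ?_, ?_⟩
      · intro x hx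
        rw [Multiset.insert_eq_cons] at hx
        rcases Multiset.mem_cons.1 hx with rfl | hx'
        · refine (irr_iff hn u).2 (Or.inl ⟨cc0_pel 1 (n + 1), 1, ?_⟩)
          have hh : cc 1 (u : FreeCM (Fin 2)) = n + 1 := cc1_pel 1 (n + 1)
          omega
        · rw [Multiset.mem_singleton.1 hx']
          refine (irr_iff hn v).2 (Or.inr ⟨cc1_pel (n + 1) 1, 1, ?_⟩)
          have hh : cc 0 (v : FreeCM (Fin 2)) = n + 1 := cc0_pel (n + 1) 1
          omega
      · have hp : ({u, v} : Multiset ↥(congMonoid n)).prod = u * v := by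
          rw [Multiset.insert_eq_cons, Multiset.prod_cons, Multiset.prod_singleton]
        rw [hp]
        apply Subtype.ext
        show pel 1 (n + 1) * pel (n + 1) 1 = pel (n + 2) (n + 2)
        apply freecm_ext
        · rw [cc_mul, cc0_pel, cc0_pel, cc0_pel]; omega
        · rw [cc_mul, cc1_pel, cc1_pel, cc1_pel]
      · simp
    · have hb : pel 1 1 ∈ congMonoid n := mem_pel le_rfl le_rfl rfl
      set b : ↥(congMonoid n) := ⟨pel 1 1, hb⟩ with hb'
      rw [lengthSet_eq]
      refine ⟨Multiset.replicate (n + 2) b, ?_, ?_, Multiset.card_replicate _ _⟩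
      · intro x hx
        rw [Multiset.eq_of_mem_replicate hx]
        refine (irr_iff hn b).2 (Or.inl ⟨cc0_pel 1 1, 0, ?_⟩)
        have hh : cc 1 (b : FreeCM (Fin 2)) = 1 := cc1_pel 1 1
        omega
      · rw [Multiset.prod_replicate]
        apply Subtype.ext
        have hpow : ((b ^ (n + 2) : ↥(congMonoid n)) : FreeCM (Fin 2)) =
            (pel 1 1) ^ (n + 2) := SubmonoidClass.coe_pow _ _
        rw [hpow]
        apply freecm_ext
        · rw [cc_pow, cc0_pel, cc0_pel]; omega
        · rw [cc_pow, cc1_pel, cc1_pel]; omega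

end Aux3
/-- Example 3.4.3(a): for `n ≥ 3` and
`H = {p_1^{k_1} p_2^{k_2} : k_1 ≡ k_2 (mod n)} ∪ {1}`: the atoms of `H` are
`p_1 p_2^{k}` and `p_1^{k} p_2` with `k ∈ 1 + nℕ_0`; the element
`a = p_1^{n+2} p_2^{n+2}` has `L_H(a) = {2, n+2}`; every distance of `H` is divisible
by `n`, `n ∈ Δ(H)`, and `min Δ(H) = n`. -/
theorem congMonoid_min_delta
    (n : ℕ) (hn : 3 ≤ n) :
    ({x : FreeCM (Fin 2) | ∃ h : x ∈ congMonoid n, Irreducible (⟨x, h⟩ : congMonoid n)} =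
      {x : FreeCM (Fin 2) |
        (Multiset.count 0 (Multiplicative.toAdd x) = 1 ∧
          ∃ m : ℕ, Multiset.count 1 (Multiplicative.toAdd x) = 1 + n * m) ∨
        (Multiset.count 1 (Multiplicative.toAdd x) = 1 ∧
          ∃ m : ℕ, Multiset.count 0 (Multiplicative.toAdd x) = 1 + n * m)}) ∧
    (∃ h : Multiplicative.ofAdd (Multiset.replicate (n + 2) (0 : Fin 2) +
        Multiset.replicate (n + 2) (1 : Fin 2)) ∈ congMonoid n,
      lengthSet (⟨_, h⟩ : congMonoid n) = {2, n + 2}) ∧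
    (∀ d ∈ DeltaMonoid ↥(congMonoid n), n ∣ d) ∧
    n ∈ DeltaMonoid ↥(congMonoid n) ∧
    sInf (DeltaMonoid ↥(congMonoid n)) = n := by
  have ha0 : pel (n + 2) (n + 2) ∈ congMonoid n := mem_pel (by omega) (by omega) rfl
  have hls := ls_a0 hn ha0
  have hdvd : ∀ d ∈ DeltaMonoid ↥(congMonoid n), n ∣ d := by
    intro d hd
    obtain ⟨a, hda⟩ := Set.mem_iUnion.1 hd
    obtain ⟨k, l, hk, hl, hkl, -, rfl⟩ := hda
    have h1 := (length_facts hn hk).1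
    have h2 := (length_facts hn hl).1
    refine (Nat.modEq_iff_dvd' hkl.le).1 ?_
    show k % n = l % n
    omega
  have hmem : n ∈ DeltaMonoid ↥(congMonoid n) := by
    refine Set.mem_iUnion.2 ⟨⟨pel (n + 2) (n + 2), ha0⟩, 2, n + 2, ?_, ?_, by omega, ?_, by omega⟩
    · rw [hls]; exact Or.inl rfl
    · rw [hls]; exact Or.inr rfl
    · intro m hm2 hmn hmemm
      rw [hls] at hmemm
      rcases hmemm with rfl | rfl <;> omega
  have hpos : ∀ d ∈ DeltaMonoid ↥(congMonoid n), 0 < d := by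
    intro d hd
    obtain ⟨a, hda⟩ := Set.mem_iUnion.1 hd
    obtain ⟨k, l, -, -, hkl, -, rfl⟩ := hda
    omega
  refine ⟨?_, ⟨ha0, hls⟩, hdvd, hmem, ?_⟩
  · ext x
    simp only [Set.mem_setOf_eq]
    constructor
    · rintro ⟨h, hirr⟩
      exact (irr_iff hn ⟨x, h⟩).1 hirr
    · rintro (⟨h0, m, h1⟩ | ⟨h1, m, h0⟩)
      · have hx : x ∈ congMonoid n := by
          rw [mem_cong]
          refine Or.inr ⟨?_, ?_, ?_⟩
          · show 1 ≤ Multiset.count 0 (Multiplicative.toAdd x); omega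
          · show 1 ≤ Multiset.count 1 (Multiplicative.toAdd x); omega
          · show Multiset.count 0 (Multiplicative.toAdd x) ≡
              Multiset.count 1 (Multiplicative.toAdd x) [MOD n]
            rw [h0, h1]
            exact (Nat.modEq_iff_dvd' (by omega)).2 ⟨m, by omega⟩
        exact ⟨hx, (irr_iff hn ⟨x, hx⟩).2 (Or.inl ⟨h0, m, h1⟩)⟩
      · have hx : x ∈ congMonoid n := by
          rw [mem_cong]
          refine Or.inr ⟨?_, ?_, ?_⟩
          · show 1 ≤ Multiset.count 0 (Multiplicative.toAdd x); omega
          · show 1 ≤ Multiset.count 1 (Multiplicative.toAdd x); omega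
          · show Multiset.count 0 (Multiplicative.toAdd x) ≡
              Multiset.count 1 (Multiplicative.toAdd x) [MOD n]
            rw [h0, h1]
            exact ((Nat.modEq_iff_dvd' (by omega)).2 ⟨m, by omega⟩).symm
        exact ⟨hx, (irr_iff hn ⟨x, hx⟩).2 (Or.inr ⟨h1, m, h0⟩)⟩
  · refine le_antisymm (Nat.sInf_le hmem) ?_
    have hinf := Nat.sInf_mem (⟨n, hmem⟩ : (DeltaMonoid ↥(congMonoid n)).Nonempty)
    exact Nat.le_of_dvd (hpos _ hinf) (hdvd _ hinf)

end
end ArXivSeminormal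
end
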